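/- arXiv:1604.06341 — 11 statements merged into one kernel-verified Lean document; each statement's English description precedes it below -/
import Mathlib

section
/- Let E be a real normed space equipped with a partial order making it an ordered vector space, and let E⁺ = {x ∈ E : 0 ≤ x} be its positive cone. Then E⁺ is closed (in the norm topology) if and only if for all x, y ∈ E one has x ≤ y exactly when α(x) ≤ α(y) for every continuous linear functional α : E → ℝ that is nonnegative on E⁺. -/
/-- A real normed space with a partial order making it an ordered vector space has a
closed positive cone iff the order is determined by the positive continuous linear
functionals. -/
theorem closed_cone_iff_order_determined_by_positive_dual
    {E : Type*} [NormedAddCommGroup E] [NormedSpace ℝ E] [PartialOrder E]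
    [CovariantClass E E (· + ·) (· ≤ ·)]
    (hsmul : ∀ (c : ℝ) (x : E), 0 ≤ c → 0 ≤ x → 0 ≤ c • x) :
    IsClosed {x : E | 0 ≤ x} ↔
      ∀ x y : E, x ≤ y ↔ ∀ α : E →L[ℝ] ℝ, (∀ a : E, 0 ≤ a → 0 ≤ α a) → α x ≤ α y := by
  have hadd : ∀ u v : E, 0 ≤ u → 0 ≤ v → 0 ≤ u + v := by
    intro u v hu hv
    calc (0:E) ≤ u := hu
    _ = u + 0 := by simp
    _ ≤ u + v := CovariantClass.elim u hv
  constructor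
  · intro hclosed x y
    constructor
    · intro hxy α hα
      have h0 : (0:E) ≤ y - x := sub_nonneg.2 hxy
      have := hα _ h0
      rw [map_sub] at this
      linarith
    · intro h
      by_contra hxy
      have hyx : y - x ∉ {x : E | 0 ≤ x} := fun hc => hxy (sub_nonneg.1 hc)
      have hconv : Convex ℝ {x : E | 0 ≤ x} := by
        intro u hu v hv a b ha hb hab
        exact hadd _ _ (hsmul a u ha hu) (hsmul b v hb hv)
      obtain ⟨f, u, hfu, hf⟩ := geometric_hahn_banach_point_closed hconv hclosed hyx
      have hu0 : u < 0 := by simpa using hf 0 le_rfl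
      have hfpos : ∀ a : E, 0 ≤ a → 0 ≤ f a := by
        intro a ha
        by_contra hneg
        push_neg at hneg
        have hc : (0:ℝ) ≤ u / f a := div_nonneg_iff.mpr (Or.inr ⟨hu0.le, hneg.le⟩)
        have hmem : (0:E) ≤ (u / f a) • a := hsmul _ _ hc ha
        have := hf _ hmem
        rw [map_smul, smul_eq_mul] at this
        rw [div_mul_cancel₀ u (ne_of_lt hneg)] at this
        exact lt_irrefl u this
      have hle := h f hfpos
      rw [map_sub] at hfu
      exact absurd (hfu.trans hu0) (not_lt.2 (sub_nonneg.2 hle))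
  · intro h
    have heq : {x : E | 0 ≤ x} =
        ⋂ α ∈ {α : E →L[ℝ] ℝ | ∀ a : E, 0 ≤ a → 0 ≤ α a}, α ⁻¹' Set.Ici 0 := by
      ext x
      simp only [Set.mem_setOf_eq, Set.mem_iInter, Set.mem_preimage, Set.mem_Ici]
      constructor
      · intro hx α hα
        exact hα x hx
      · intro hx
        have := (h 0 x).2 (fun α hα => by simpa using hx α hα)
        exact this
    rw [heq]
    exact isClosed_biInter fun α _ => isClosed_Ici.preimage α.continuous
end

section
/- (Andô) Let D be a real Banach space equipped with a partial order making it an ordered vector space, such that the positive cone D⁺ = {x ∈ D : 0 ≤ x} is closed and generating (i.e., D = D⁺ − D⁺). Then there exists a constant C > 0 such that for every x ∈ D, C·‖x‖ ≥ inf { ‖a‖ : a ∈ D⁺, −a ≤ x ≤ a }. -/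
set_option linter.unusedSectionVars false

section Ando

variable {D : Type*} [NormedAddCommGroup D] [NormedSpace ℝ D] [CompleteSpace D]
    [PartialOrder D] [CovariantClass D D (· + ·) (· ≤ ·)]

private lemma ando_cone_add {y z : D} (hy : 0 ≤ y) (hz : 0 ≤ z) : 0 ≤ y + z :=
  le_trans hy (by simpa using add_le_add_left hz y)

private lemma ando_le_of_sub_nonneg {a b : D} (h : 0 ≤ b - a) : a ≤ b := by
  have := add_le_add_left h a; simpa using this

private def andoT (D : Type*) [NormedAddCommGroup D] [PartialOrder D] (n : ℝ) : Set D :=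
  {x | ∃ y z : D, 0 ≤ y ∧ 0 ≤ z ∧ ‖y‖ ≤ n ∧ ‖z‖ ≤ n ∧ x = y - z}

private lemma ando_neg_mem {n : ℝ} {x : D} (hx : x ∈ andoT D n) : -x ∈ andoT D n := by
  obtain ⟨y, z, hy, hz, hyn, hzn, rfl⟩ := hx
  exact ⟨z, y, hz, hy, hzn, hyn, by abel⟩

private lemma ando_convex (hsmul : ∀ (c : ℝ) (x : D), 0 ≤ c → 0 ≤ x → 0 ≤ c • x)
    (n : ℝ) : Convex ℝ (andoT D n) := by
  rintro x ⟨y1, z1, hy1, hz1, hy1n, hz1n, rfl⟩ x' ⟨y2, z2, hy2, hz2, hy2n, hz2n, rfl⟩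
    a b ha hb hab
  refine ⟨a • y1 + b • y2, a • z1 + b • z2,
    ando_cone_add (hsmul a y1 ha hy1) (hsmul b y2 hb hy2),
    ando_cone_add (hsmul a z1 ha hz1) (hsmul b z2 hb hz2), ?_, ?_, ?_⟩
  · calc ‖a • y1 + b • y2‖ ≤ ‖a • y1‖ + ‖b • y2‖ := norm_add_le _ _
      _ ≤ a * n + b * n := by
          rw [norm_smul, norm_smul, Real.norm_of_nonneg ha, Real.norm_of_nonneg hb]
          exact add_le_add (mul_le_mul_of_nonneg_left hy1n ha)
            (mul_le_mul_of_nonneg_left hy2n hb)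
      _ = n := by rw [← add_mul, hab, one_mul]
  · calc ‖a • z1 + b • z2‖ ≤ ‖a • z1‖ + ‖b • z2‖ := norm_add_le _ _
      _ ≤ a * n + b * n := by
          rw [norm_smul, norm_smul, Real.norm_of_nonneg ha, Real.norm_of_nonneg hb]
          exact add_le_add (mul_le_mul_of_nonneg_left hz1n ha)
            (mul_le_mul_of_nonneg_left hz2n hb)
      _ = n := by rw [← add_mul, hab, one_mul]
  · module

private lemma ando_closure_neg {s : Set D} (h : ∀ x ∈ s, -x ∈ s) {x : D}
    (hx : x ∈ closure s) : -x ∈ closure s := by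
  have h2 : s ⊆ (fun y : D => -y) ⁻¹' closure s := fun y hy => subset_closure (h y hy)
  exact closure_minimal h2 (isClosed_closure.preimage continuous_neg) hx

private lemma ando_decomp
    (hsmul : ∀ (c : ℝ) (x : D), 0 ≤ c → 0 ≤ x → 0 ≤ c • x)
    (hclosed : IsClosed {x : D | 0 ≤ x})
    (hgen : ∀ x : D, ∃ y z : D, 0 ≤ y ∧ 0 ≤ z ∧ x = y - z) :
    ∃ M : ℝ, 0 < M ∧ ∀ x : D, ∃ y z : D,
      0 ≤ y ∧ 0 ≤ z ∧ x = y - z ∧ ‖y‖ ≤ M * ‖x‖ ∧ ‖z‖ ≤ M * ‖x‖ := by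
  -- Baire category
  have hcover : ⋃ n : ℕ, closure (andoT D n) = Set.univ := by
    refine Set.eq_univ_of_forall fun x => ?_
    obtain ⟨y, z, hy, hz, rfl⟩ := hgen x
    refine Set.mem_iUnion.2 ⟨⌈max ‖y‖ ‖z‖⌉₊, subset_closure ?_⟩
    exact ⟨y, z, hy, hz,
      le_trans (le_max_left _ _) (Nat.le_ceil _),
      le_trans (le_max_right _ _) (Nat.le_ceil _), rfl⟩
  obtain ⟨n, x0, hx0⟩ := nonempty_interior_of_iUnion_of_closed
    (fun n : ℕ => isClosed_closure) hcover
  obtain ⟨ε, hε, hball⟩ := Metric.isOpen_iff.1 isOpen_interior x0 hx0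
  have hball : Metric.ball x0 ε ⊆ closure (andoT D n) :=
    hball.trans interior_subset
  -- symmetrize: ball 0 ε ⊆ closure (andoT D n)
  have hconv : Convex ℝ (closure (andoT D (n : ℝ))) := (ando_convex hsmul _).closure
  have hball0 : ∀ w : D, ‖w‖ < ε → w ∈ closure (andoT D n) := by
    intro w hw
    have h1 : x0 + w ∈ closure (andoT D n) := by
      apply hball; rw [Metric.mem_ball, dist_eq_norm]; simpa using hw
    have h2 : w - x0 ∈ closure (andoT D n) := by
      have : x0 - w ∈ closure (andoT D n) := by
        apply hball; rw [Metric.mem_ball, dist_eq_norm]; simpa [norm_sub_rev] using hw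
      simpa [neg_sub] using ando_closure_neg (fun x hx => ando_neg_mem hx) this
    have := hconv h1 h2 (by norm_num : (0:ℝ) ≤ 1/2) (by norm_num : (0:ℝ) ≤ 1/2) (by norm_num)
    have heq : (1/2 : ℝ) • (x0 + w) + (1/2 : ℝ) • (w - x0) = w := by module
    rwa [heq] at this
  have hn : (0:ℝ) ≤ n := n.cast_nonneg
  -- the main iteration claim
  have claim : ∀ x : D, ‖x‖ < ε → ∃ y z : D,
      0 ≤ y ∧ 0 ≤ z ∧ x = y - z ∧ ‖y‖ ≤ 2*n ∧ ‖z‖ ≤ 2*n := by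
    have A : ∀ (c : ℝ), 0 < c → ∀ x : D, ‖x‖ < c * ε → ∀ δ : ℝ, 0 < δ →
        ∃ y z : D, 0 ≤ y ∧ 0 ≤ z ∧ ‖y‖ ≤ c * n ∧ ‖z‖ ≤ c * n ∧ ‖x - (y - z)‖ < δ := by
      intro c hc x hx δ hδ
      have hx' : ‖c⁻¹ • x‖ < ε := by
        rw [norm_smul, Real.norm_of_nonneg (by positivity)]
        rw [inv_mul_lt_iff₀ hc]
        exact hx
      have hmem := hball0 _ hx'
      rw [Metric.mem_closure_iff] at hmem
      obtain ⟨u, hu, hdu⟩ := hmem (δ / c) (by positivity)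
      obtain ⟨y', z', hy', hz', hy'n, hz'n, rfl⟩ := hu
      refine ⟨c • y', c • z', hsmul _ _ hc.le hy', hsmul _ _ hc.le hz', ?_, ?_, ?_⟩
      · rw [norm_smul, Real.norm_of_nonneg hc.le]
        exact mul_le_mul_of_nonneg_left hy'n hc.le
      · rw [norm_smul, Real.norm_of_nonneg hc.le]
        exact mul_le_mul_of_nonneg_left hz'n hc.le
      · have heq : x - (c • y' - c • z') = c • (c⁻¹ • x - (y' - z')) := by
          rw [smul_sub, smul_sub, smul_inv_smul₀ hc.ne']
        rw [heq, norm_smul, Real.norm_of_nonneg hc.le]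
        rw [dist_eq_norm] at hdu
        calc c * ‖c⁻¹ • x - (y' - z')‖ < c * (δ / c) := mul_lt_mul_of_pos_left hdu hc
          _ = δ := by field_simp
    have key : ∀ (k : ℕ) (r : D), ‖r‖ < ε / 2^k → ∃ y z : D,
        0 ≤ y ∧ 0 ≤ z ∧ ‖y‖ ≤ n / 2^k ∧ ‖z‖ ≤ n / 2^k ∧ ‖r - (y - z)‖ < ε / 2^(k+1) := by
      intro k r hr
      obtain ⟨y, z, hy, hz, hyn, hzn, hd⟩ := A ((2:ℝ)^k)⁻¹ (by positivity) r
        (by rw [inv_mul_eq_div]; exact hr) (ε / 2^(k+1)) (by positivity)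
      exact ⟨y, z, hy, hz, by rwa [inv_mul_eq_div] at hyn, by rwa [inv_mul_eq_div] at hzn, hd⟩
    intro x hx
    choose Y Z hY hZ hYn hZn hrem using key
    let R : (k : ℕ) → {r : D // ‖r‖ < ε / 2^k} := fun k =>
      Nat.rec ⟨x, by simpa using hx⟩
        (fun k p => ⟨p.1 - (Y k p.1 p.2 - Z k p.1 p.2), hrem k p.1 p.2⟩) k
    set ys : ℕ → D := fun k => Y k (R k).1 (R k).2 with hys
    set zs : ℕ → D := fun k => Z k (R k).1 (R k).2 with hzs
    have hstep : ∀ k, (R (k+1)).1 = (R k).1 - (ys k - zs k) := fun k => rfl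
    have hhalf : ∀ k : ℕ, (n:ℝ) / 2^k = n * (1/2)^k := by
      intro k; rw [div_eq_mul_inv, ← inv_pow, one_div]
    have hyb : ∀ k, ‖ys k‖ ≤ n * (1/2)^k := fun k => (hhalf k) ▸ hYn k (R k).1 (R k).2
    have hzb : ∀ k, ‖zs k‖ ≤ n * (1/2)^k := fun k => (hhalf k) ▸ hZn k (R k).1 (R k).2
    have hgeom : Summable (fun k : ℕ => (n:ℝ) * (1/2)^k) := summable_geometric_two.mul_left (n:ℝ)
    have hsy : Summable ys := Summable.of_norm_bounded hgeom hyb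
    have hsz : Summable zs := Summable.of_norm_bounded hgeom hzb
    have hpartial : ∀ K, ∑ i ∈ Finset.range K, (ys i - zs i) = x - (R K).1 := by
      intro K
      induction K with
      | zero => simp [R]
      | succ K ih => rw [Finset.sum_range_succ, ih, hstep K]; abel
    have hto0 : Filter.Tendsto (fun K => (R K).1) Filter.atTop (nhds 0) := by
      have hg : Filter.Tendsto (fun K : ℕ => ε * (1/2:ℝ)^K) Filter.atTop (nhds 0) := by
        simpa using (tendsto_pow_atTop_nhds_zero_of_lt_one (by norm_num)
          (by norm_num : (1/2:ℝ) < 1)).const_mul ε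
      refine squeeze_zero_norm (fun K => ?_) hg
      have := (R K).2
      have heps : ε / 2^K = ε * (1/2)^K := by
        rw [div_eq_mul_inv, ← inv_pow, one_div]
      exact this.le.trans heps.le
    have hsub : Summable (fun k => ys k - zs k) := hsy.sub hsz
    have hsumx : (∑' k, (ys k - zs k)) = x := by
      refine tendsto_nhds_unique hsub.hasSum.tendsto_sum_nat ?_
      have h2 : Filter.Tendsto (fun K => x - (R K).1) Filter.atTop (nhds x) := by
        simpa using Filter.Tendsto.sub (tendsto_const_nhds (x := x)) hto0
      simpa only [hpartial] using h2
    refine ⟨∑' k, ys k, ∑' k, zs k, ?_, ?_, ?_, ?_, ?_⟩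
    · have hpos : ∀ K, 0 ≤ ∑ i ∈ Finset.range K, ys i := by
        intro K
        induction K with
        | zero => simp
        | succ K ih => rw [Finset.sum_range_succ]; exact ando_cone_add ih (hY _ _ _)
      exact hclosed.mem_of_tendsto hsy.hasSum.tendsto_sum_nat
        (Filter.Eventually.of_forall hpos)
    · have hpos : ∀ K, 0 ≤ ∑ i ∈ Finset.range K, zs i := by
        intro K
        induction K with
        | zero => simp
        | succ K ih => rw [Finset.sum_range_succ]; exact ando_cone_add ih (hZ _ _ _)
      exact hclosed.mem_of_tendsto hsz.hasSum.tendsto_sum_nat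
        (Filter.Eventually.of_forall hpos)
    · rw [← hsumx, hsy.tsum_sub hsz]
    · calc ‖∑' k, ys k‖ ≤ ∑' k, ‖ys k‖ := norm_tsum_le_tsum_norm
            (Summable.of_nonneg_of_le (fun _ => norm_nonneg _) hyb hgeom)
        _ ≤ ∑' k : ℕ, (n:ℝ) * (1/2)^k := Summable.tsum_le_tsum hyb
            (Summable.of_nonneg_of_le (fun _ => norm_nonneg _) hyb hgeom) hgeom
        _ = 2 * n := by rw [tsum_mul_left, tsum_geometric_two]; ring
    · calc ‖∑' k, zs k‖ ≤ ∑' k, ‖zs k‖ := norm_tsum_le_tsum_norm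
            (Summable.of_nonneg_of_le (fun _ => norm_nonneg _) hzb hgeom)
        _ ≤ ∑' k : ℕ, (n:ℝ) * (1/2)^k := Summable.tsum_le_tsum hzb
            (Summable.of_nonneg_of_le (fun _ => norm_nonneg _) hzb hgeom) hgeom
        _ = 2 * n := by rw [tsum_mul_left, tsum_geometric_two]; ring
  -- rescale
  refine ⟨4*n/ε + 1, by positivity, fun x => ?_⟩
  rcases eq_or_ne x 0 with rfl | hx
  · exact ⟨0, 0, le_refl 0, le_refl 0, by simp, by simp, by simp⟩
  · have hxn : (0:ℝ) < ‖x‖ := norm_pos_iff.2 hx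
    set c : ℝ := ε / (2 * ‖x‖) with hc
    have hcpos : 0 < c := by positivity
    have hnorm : ‖c • x‖ < ε := by
      rw [norm_smul, Real.norm_of_nonneg hcpos.le, hc]
      have h2 : ε / (2 * ‖x‖) * ‖x‖ = ε / 2 := by field_simp
      rw [h2]; linarith
    obtain ⟨y', z', hy', hz', hxyz, hy'n, hz'n⟩ := claim (c • x) hnorm
    have hcinv : c⁻¹ = 2 * ‖x‖ / ε := by rw [hc, inv_div]
    have hbnd : ∀ w : D, ‖w‖ ≤ 2*n → ‖c⁻¹ • w‖ ≤ (4*n/ε + 1) * ‖x‖ := by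
      intro w hw
      rw [norm_smul, Real.norm_of_nonneg (by positivity)]
      calc c⁻¹ * ‖w‖ ≤ c⁻¹ * (2*n) := mul_le_mul_of_nonneg_left hw (by positivity)
        _ = 4*n/ε*‖x‖ := by rw [hcinv]; field_simp; ring
        _ ≤ (4*n/ε + 1) * ‖x‖ := by nlinarith
    refine ⟨c⁻¹ • y', c⁻¹ • z', hsmul _ _ (by positivity) hy', hsmul _ _ (by positivity) hz',
      ?_, hbnd y' hy'n, hbnd z' hz'n⟩
    have h3 : c⁻¹ • (c • x) = x := inv_smul_smul₀ hcpos.ne' x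
    rw [← h3, hxyz, smul_sub]

end Ando

/-- Andô's theorem: an ordered Banach space with a closed generating cone has an
absolutely dominating norm. -/
theorem ando_absolutely_dominating
    {D : Type*} [NormedAddCommGroup D] [NormedSpace ℝ D] [CompleteSpace D]
    [PartialOrder D] [CovariantClass D D (· + ·) (· ≤ ·)]
    (hsmul : ∀ (c : ℝ) (x : D), 0 ≤ c → 0 ≤ x → 0 ≤ c • x)
    (hclosed : IsClosed {x : D | 0 ≤ x})
    (hgen : ∀ x : D, ∃ y z : D, 0 ≤ y ∧ 0 ≤ z ∧ x = y - z) :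
    ∃ C : ℝ, 0 < C ∧ ∀ x : D,
      sInf {r : ℝ | ∃ a : D, 0 ≤ a ∧ -a ≤ x ∧ x ≤ a ∧ r = ‖a‖} ≤ C * ‖x‖ := by
  obtain ⟨M, hM, hdec⟩ := ando_decomp hsmul hclosed hgen
  refine ⟨2 * M, by linarith, fun x => ?_⟩
  obtain ⟨y, z, hy, hz, hxyz, hyn, hzn⟩ := hdec x
  have ha0 : 0 ≤ y + z := ando_cone_add hy hz
  have h1 : -(y + z) ≤ x := by
    refine ando_le_of_sub_nonneg ?_
    have heq : x - -(y + z) = y + y := by rw [hxyz]; abel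
    rw [heq]; exact ando_cone_add hy hy
  have h2 : x ≤ y + z := by
    refine ando_le_of_sub_nonneg ?_
    have heq : (y + z) - x = z + z := by rw [hxyz]; abel
    rw [heq]; exact ando_cone_add hz hz
  have hbdd : BddBelow {r : ℝ | ∃ a : D, 0 ≤ a ∧ -a ≤ x ∧ x ≤ a ∧ r = ‖a‖} := by
    refine ⟨0, ?_⟩
    rintro r ⟨a, -, -, -, rfl⟩
    exact norm_nonneg a
  calc sInf {r : ℝ | ∃ a : D, 0 ≤ a ∧ -a ≤ x ∧ x ≤ a ∧ r = ‖a‖}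
      ≤ ‖y + z‖ := csInf_le hbdd ⟨y + z, ha0, h1, h2, rfl⟩
    _ ≤ ‖y‖ + ‖z‖ := norm_add_le _ _
    _ ≤ 2 * M * ‖x‖ := by linarith
end

section
/- Let D be a real Banach space equipped with a partial order making it an ordered vector space, and suppose the positive cone D⁺ = {x ∈ D : 0 ≤ x} is closed. If a₁, a₂, … ∈ D⁺ satisfy ∑ₙ ‖aₙ‖ < ∞, then there exist a ∈ D⁺ and reals εₙ > 0 with εₙ → 0 such that aₙ ≤ εₙ·a for all n. -/
open Filter

/-- In an ordered Banach space with closed cone, every norm-summable sequence of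
positive elements is uniformly dominated: `aₙ ≤ εₙ • a` with `εₙ → 0`. -/
theorem summable_pos_seq_uniformly_dominated
    {D : Type*} [NormedAddCommGroup D] [NormedSpace ℝ D] [CompleteSpace D]
    [PartialOrder D] [CovariantClass D D (· + ·) (· ≤ ·)]
    (hsmul : ∀ (c : ℝ) (x : D), 0 ≤ c → 0 ≤ x → 0 ≤ c • x)
    (hclosed : IsClosed {x : D | 0 ≤ x})
    (a : ℕ → D) (ha : ∀ n, 0 ≤ a n) (hsum : Summable fun n => ‖a n‖) :
    ∃ b : D, 0 ≤ b ∧ ∃ ε : ℕ → ℝ, (∀ n, 0 < ε n) ∧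
      Tendsto ε atTop (nhds 0) ∧ ∀ n, a n ≤ ε n • b := by
  classical
  haveI : CovariantClass D D (Function.swap (· + ·)) (· ≤ ·) :=
    ⟨fun x y z h => by simpa [add_comm] using add_le_add_left h x⟩
  haveI : IsOrderedAddMonoid D :=
    { add_le_add_left := fun x y h z => by gcongr }
  set c : ℕ → ℝ := fun n => ‖a n‖ with hc
  have hc0 : ∀ n, 0 ≤ c n := fun n => norm_nonneg _
  set t : ℕ → ℝ := fun n => ∑' k, c (k + n) with ht
  have htsumm : ∀ n, Summable fun k => c (k + n) := fun n => (summable_nat_add_iff n).2 hsum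
  have ht0 : ∀ n, 0 ≤ t n := fun n => tsum_nonneg fun k => hc0 _
  have hrec : ∀ n, t n = c n + t (n + 1) := by
    intro n
    have h1 := Summable.sum_add_tsum_nat_add (f := fun k => c (k + n)) 1 (htsumm n)
    have h2 : (fun k => c (k + 1 + n)) = fun k => c (k + (n + 1)) := by
      funext k; congr 1; omega
    rw [Finset.sum_range_one] at h1
    calc t n = ∑' k, c (k + n) := rfl
      _ = c n + ∑' (i : ℕ), c (i + 1 + n) := by rw [← h1]; norm_num
      _ = c n + t (n + 1) := by rw [h2]
  have htmono : ∀ n, t (n + 1) ≤ t n := fun n => by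
    rw [hrec n]; linarith [hc0 n]
  set ε : ℕ → ℝ := fun n => Real.sqrt (t n) + (1 / 2 : ℝ) ^ n with hε
  have hεpos : ∀ n, 0 < ε n := fun n => by
    have := Real.sqrt_nonneg (t n); positivity
  have hεtend : Tendsto ε atTop (nhds 0) := by
    have h1 : Tendsto t atTop (nhds 0) := by
      simpa [ht] using tendsto_sum_nat_add c
    have h2 : Tendsto (fun n => Real.sqrt (t n)) atTop (nhds 0) := by
      simpa [Function.comp_def] using (Real.continuous_sqrt.continuousAt.tendsto.comp h1)
    have h3 : Tendsto (fun n : ℕ => (1 / 2 : ℝ) ^ n) atTop (nhds 0) :=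
      tendsto_pow_atTop_nhds_zero_of_lt_one (by norm_num) (by norm_num)
    rw [hε]; simpa [one_div] using h2.add h3
  -- summability of the weighted series
  set S : ℕ → D := fun n => (ε n)⁻¹ • a n with hS
  have hnorm : ∀ n, ‖S n‖ = c n / ε n := by
    intro n
    show ‖(ε n)⁻¹ • a n‖ = c n / ε n
    rw [norm_smul, Real.norm_eq_abs, abs_inv, abs_of_pos (hεpos n), div_eq_inv_mul]
  have hbound : ∀ n, c n / ε n ≤ 2 * (Real.sqrt (t n) - Real.sqrt (t (n + 1))) := by
    intro n
    have hs1 : Real.sqrt (t (n + 1)) ≤ Real.sqrt (t n) := Real.sqrt_le_sqrt (htmono n)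
    have hcn : c n = t n - t (n + 1) := by linarith [hrec n]
    have hsq : Real.sqrt (t n) * Real.sqrt (t n) = t n := Real.mul_self_sqrt (ht0 n)
    have hsq' : Real.sqrt (t (n + 1)) * Real.sqrt (t (n + 1)) = t (n + 1) :=
      Real.mul_self_sqrt (ht0 _)
    have hεge : Real.sqrt (t n) ≤ ε n := by
      have h : (0:ℝ) < (1/2:ℝ)^n := by positivity
      show Real.sqrt (t n) ≤ Real.sqrt (t n) + (1/2:ℝ)^n
      linarith
    rw [div_le_iff₀ (hεpos n)]
    have key : c n ≤ 2 * (Real.sqrt (t n) - Real.sqrt (t (n + 1))) * Real.sqrt (t n) := by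
      nlinarith [Real.sqrt_nonneg (t n), Real.sqrt_nonneg (t (n + 1))]
    calc c n ≤ 2 * (Real.sqrt (t n) - Real.sqrt (t (n + 1))) * Real.sqrt (t n) := key
      _ ≤ 2 * (Real.sqrt (t n) - Real.sqrt (t (n + 1))) * ε n := by
          apply mul_le_mul_of_nonneg_left hεge; linarith
  have hdsumm : Summable fun n => 2 * (Real.sqrt (t n) - Real.sqrt (t (n + 1))) := by
    apply summable_of_sum_range_le
      (c := 2 * Real.sqrt (t 0))
      (fun n => by
        have hs1 : Real.sqrt (t (n + 1)) ≤ Real.sqrt (t n) := Real.sqrt_le_sqrt (htmono n)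
        linarith)
    intro n
    have : ∑ i ∈ Finset.range n, 2 * (Real.sqrt (t i) - Real.sqrt (t (i + 1)))
        = 2 * (Real.sqrt (t 0) - Real.sqrt (t n)) := by
      rw [← Finset.mul_sum, Finset.sum_range_sub' (fun i => Real.sqrt (t i))]
    rw [this]
    have := Real.sqrt_nonneg (t n); linarith
  have hSsumm : Summable S := by
    apply Summable.of_norm
    apply Summable.of_nonneg_of_le (fun n => norm_nonneg _) (fun n => ?_) hdsumm
    rw [hnorm n]; exact hbound n
  set b : D := ∑' n, S n with hb
  have hS0 : ∀ n, 0 ≤ S n := fun n => hsmul _ _ (inv_nonneg.2 (hεpos n).le) (ha n)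
  have htsum_nonneg : ∀ (f : ℕ → D), (∀ n, 0 ≤ f n) → Summable f → 0 ≤ ∑' n, f n := by
    intro f hf hfs
    have h1 : Tendsto (fun N => ∑ i ∈ Finset.range N, f i) atTop (nhds (∑' n, f n)) :=
      hfs.hasSum.tendsto_sum_nat
    exact hclosed.mem_of_tendsto h1
      (Filter.Eventually.of_forall fun N => Finset.sum_nonneg fun i _ => hf i)
  have hb0 : 0 ≤ b := htsum_nonneg S hS0 hSsumm
  have hkey : ∀ n, S n ≤ b := by
    intro n
    have h1 : b = S n + ∑' k, if k = n then 0 else S k := Summable.tsum_eq_add_tsum_ite hSsumm n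
    rw [h1]
    refine le_add_of_nonneg_right (htsum_nonneg _ (fun k => ?_) ?_)
    · split <;> [exact le_refl 0; exact hS0 k]
    · exact (hSsumm.update n 0).congr fun k => Function.update_apply S n 0 k
  refine ⟨b, hb0, ε, hεpos, hεtend, fun n => ?_⟩
  have h2 : 0 ≤ ε n • (b - S n) := hsmul _ _ (hεpos n).le (sub_nonneg.2 (hkey n))
  have h3 : ε n • S n = a n := by
    rw [hS]; simp [smul_smul, mul_inv_cancel₀ (hεpos n).ne']
  rw [smul_sub, h3] at h2
  exact sub_nonneg.1 h2
end

section
/- Let D be a real Banach space equipped with a partial order making it an Archimedean ordered vector space whose positive cone D⁺ = {x ∈ D : 0 ≤ x} is generating (D = D⁺ − D⁺). Then the following are equivalent: (1) D⁺ is closed; (2) the norm is absolutely dominating (there exists C > 0 with C·‖x‖ ≥ inf { ‖a‖ : a ∈ D⁺, −a ≤ x ≤ a } for all x) and for every sequence a₁, a₂, … ∈ D⁺ with ∑ₙ ‖aₙ‖ < ∞ there exist a ∈ D⁺ and εₙ > 0 with εₙ → 0 and aₙ ≤ εₙ·a for all n; (3) every sequence x₁, x₂, … ∈ D with ∑ₙ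 ‖xₙ‖ < ∞ converges uniformly to 0, i.e., there exist a ∈ D⁺ and εₙ > 0 with εₙ → 0 such that −εₙ·a ≤ xₙ ≤ εₙ·a for all n. -/
open Filter
set_option linter.unusedSectionVars false
set_option maxHeartbeats 1000000

section Helpers
variable {D : Type*} [NormedAddCommGroup D] [NormedSpace ℝ D] [CompleteSpace D]
    [PartialOrder D] [CovariantClass D D (· + ·) (· ≤ ·)]

local instance oag : IsOrderedAddMonoid D :=
  { add_le_add_left := fun a b h c => by
      rw [add_comm a, add_comm b]; exact CovariantClass.elim c h }

lemma smul_mono' (hsmul : ∀ (c : ℝ) (x : D), 0 ≤ c → 0 ≤ x → 0 ≤ c • x)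
    {c : ℝ} (hc : 0 ≤ c) {a b : D} (h : a ≤ b) : c • a ≤ c • b := by
  have := hsmul c (b - a) hc (sub_nonneg.2 h)
  rw [smul_sub] at this
  exact sub_nonneg.1 this

lemma tsum_nonneg' (hc : IsClosed {x : D | 0 ≤ x}) {f : ℕ → D}
    (hf : ∀ n, 0 ≤ f n) (hs : Summable f) : 0 ≤ ∑' n, f n :=
  hc.mem_of_tendsto hs.hasSum
    (Eventually.of_forall fun s => Finset.sum_nonneg fun i _ => hf i)

lemma small_decomp (hc : IsClosed {x : D | 0 ≤ x}) {N r : ℝ} (hN0 : 0 ≤ N) (hr : 0 < r)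
    (happrox : ∀ c : ℝ, 0 < c → ∀ u : D, ‖u‖ < c * r → ∀ ε : ℝ, 0 < ε →
      ∃ y z : D, 0 ≤ y ∧ 0 ≤ z ∧ ‖y‖ ≤ c * N ∧ ‖z‖ ≤ c * N ∧ ‖u - (y - z)‖ < ε)
    (x : D) (hx : ‖x‖ < r) :
    ∃ y z : D, 0 ≤ y ∧ 0 ≤ z ∧ x = y - z ∧ ‖y‖ ≤ 2 * N ∧ ‖z‖ ≤ 2 * N := by
  classical
  have key : ∀ (k : ℕ) (u : D), ‖u‖ < r / 2 ^ k →
      ∃ p : D × D, 0 ≤ p.1 ∧ 0 ≤ p.2 ∧ ‖p.1‖ ≤ N / 2 ^ k ∧ ‖p.2‖ ≤ N / 2 ^ k ∧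
        ‖u - (p.1 - p.2)‖ < r / 2 ^ (k + 1) := by
    intro k u hu
    obtain ⟨y, z, hy, hz, hny, hnz, hd⟩ :=
      happrox (((2:ℝ) ^ k)⁻¹) (by positivity) u
        (by rw [inv_mul_eq_div]; exact hu) (r / 2 ^ (k+1)) (by positivity)
    exact ⟨(y, z), hy, hz, by rwa [inv_mul_eq_div] at hny,
      by rwa [inv_mul_eq_div] at hnz, hd⟩
  set F : ℕ → D → D × D := fun k u =>
    if h : ‖u‖ < r / 2 ^ k then (key k u h).choose else (0, 0) with hFdef
  set U : ℕ → D := fun k => Nat.rec x (fun k u => u - ((F k u).1 - (F k u).2)) k with hUdef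
  have hU0 : U 0 = x := rfl
  have hUsucc : ∀ k, U (k + 1) = U k - ((F k (U k)).1 - (F k (U k)).2) := fun k => rfl
  have hinv : ∀ k, ‖U k‖ < r / 2 ^ k := by
    intro k
    induction k with
    | zero => simpa [hU0] using hx
    | succ k ih =>
      rw [hUsucc]
      have hF : F k (U k) = (key k (U k) ih).choose := dif_pos ih
      rw [hF]
      exact (key k (U k) ih).choose_spec.2.2.2.2
  set yseq : ℕ → D := fun k => (F k (U k)).1 with hyseq
  set zseq : ℕ → D := fun k => (F k (U k)).2 with hzseq
  have hUsucc' : ∀ k, U (k + 1) = U k - (yseq k - zseq k) := fun k => rfl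
  have hprop : ∀ k, 0 ≤ yseq k ∧ 0 ≤ zseq k ∧ ‖yseq k‖ ≤ N / 2 ^ k ∧
      ‖zseq k‖ ≤ N / 2 ^ k := by
    intro k
    have hF : F k (U k) = (key k (U k) (hinv k)).choose := dif_pos (hinv k)
    have hs := (key k (U k) (hinv k)).choose_spec
    refine ⟨?_, ?_, ?_, ?_⟩
    · show 0 ≤ (F k (U k)).1
      rw [hF]; exact hs.1
    · show 0 ≤ (F k (U k)).2
      rw [hF]; exact hs.2.1
    · show ‖(F k (U k)).1‖ ≤ N / 2 ^ k
      rw [hF]; exact hs.2.2.1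
    · show ‖(F k (U k)).2‖ ≤ N / 2 ^ k
      rw [hF]; exact hs.2.2.2.1
  clear_value F U yseq zseq
  have hgeo : Summable (fun k : ℕ => N / 2 ^ k) := by
    have h2 : (fun k : ℕ => N / 2 ^ k) = fun k : ℕ => N * (1/2) ^ k := by
      funext k; rw [one_div, inv_pow, ← div_eq_mul_inv]
    rw [h2]
    exact summable_geometric_two.mul_left N
  have hysum : Summable fun k => ‖yseq k‖ :=
    Summable.of_nonneg_of_le (fun k => norm_nonneg _) (fun k => (hprop k).2.2.1) hgeo
  have hzsum : Summable fun k => ‖zseq k‖ :=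
    Summable.of_nonneg_of_le (fun k => norm_nonneg _) (fun k => (hprop k).2.2.2) hgeo
  have hy' : Summable yseq := Summable.of_norm hysum
  have hz' : Summable zseq := Summable.of_norm hzsum
  have htsumgeo : ∑' k : ℕ, N / 2 ^ k = 2 * N := by
    have h2 : (fun k : ℕ => N / 2 ^ k) = fun k : ℕ => N * (1/2) ^ k := by
      funext k; rw [one_div, inv_pow, ← div_eq_mul_inv]
    rw [h2, tsum_mul_left, tsum_geometric_two]; ring
  refine ⟨∑' k, yseq k, ∑' k, zseq k,
    tsum_nonneg' hc (fun k => (hprop k).1) hy',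
    tsum_nonneg' hc (fun k => (hprop k).2.1) hz', ?_, ?_, ?_⟩
  · have hdiff : ∀ m, x - ∑ k ∈ Finset.range m, (yseq k - zseq k) = U m := by
      intro m
      induction m with
      | zero => simp [hU0]
      | succ m ih =>
        rw [Finset.sum_range_succ, hUsucc' m, ← ih]
        abel
    have hU0' : Tendsto U atTop (nhds 0) := by
      apply squeeze_zero_norm (fun m => (hinv m).le)
      have h2 : (fun m : ℕ => r / 2 ^ m) = fun m : ℕ => r * (1/2) ^ m := by
        funext m; rw [one_div, inv_pow, ← div_eq_mul_inv]
      rw [h2]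
      have h3 := (tendsto_pow_atTop_nhds_zero_of_lt_one
        (by norm_num : (0:ℝ) ≤ 1/2) (by norm_num : (1:ℝ)/2 < 1)).const_mul r
      simpa using h3
    have hpart : Tendsto (fun m => ∑ k ∈ Finset.range m, (yseq k - zseq k))
        atTop (nhds x) := by
      have h3 : Tendsto (fun m => x - U m) atTop (nhds (x - 0)) :=
        tendsto_const_nhds.sub hU0'
      simp only [sub_zero] at h3
      refine h3.congr fun m => ?_
      rw [← hdiff m]; abel
    have hsumyz : Summable fun k => yseq k - zseq k := hy'.sub hz'
    have hxeq : ∑' k, (yseq k - zseq k) = x :=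
      tendsto_nhds_unique hsumyz.hasSum.tendsto_sum_nat hpart
    rw [← hxeq, hy'.tsum_sub hz']
  · calc ‖∑' k, yseq k‖ ≤ ∑' k, ‖yseq k‖ := norm_tsum_le_tsum_norm hysum
      _ ≤ ∑' k : ℕ, N / 2 ^ k := Summable.tsum_le_tsum (fun k => (hprop k).2.2.1) hysum hgeo
      _ = 2 * N := htsumgeo
  · calc ‖∑' k, zseq k‖ ≤ ∑' k, ‖zseq k‖ := norm_tsum_le_tsum_norm hzsum
      _ ≤ ∑' k : ℕ, N / 2 ^ k := Summable.tsum_le_tsum (fun k => (hprop k).2.2.2) hzsum hgeo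
      _ = 2 * N := htsumgeo


lemma ando (hsmul : ∀ (c : ℝ) (x : D), 0 ≤ c → 0 ≤ x → 0 ≤ c • x)
    (hgen : ∀ x : D, ∃ y z : D, 0 ≤ y ∧ 0 ≤ z ∧ x = y - z)
    (hc : IsClosed {x : D | 0 ≤ x}) :
    ∃ C : ℝ, 0 < C ∧ ∀ x : D, ∃ a : D, 0 ≤ a ∧ -a ≤ x ∧ x ≤ a ∧ ‖a‖ ≤ C * ‖x‖ := by
  classical
  set B : ℕ → Set D := fun n =>
    {w | ∃ y z : D, 0 ≤ y ∧ 0 ≤ z ∧ ‖y‖ ≤ n ∧ ‖z‖ ≤ n ∧ w = y - z} with hB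
  have hcover : ⋃ n, closure (B n) = Set.univ := by
    ext x
    simp only [Set.mem_iUnion, Set.mem_univ, iff_true]
    obtain ⟨y, z, hy, hz, hx⟩ := hgen x
    refine ⟨⌈max ‖y‖ ‖z‖⌉₊, subset_closure ⟨y, z, hy, hz, ?_, ?_, hx⟩⟩
    · exact le_trans (le_max_left _ _) (Nat.le_ceil _)
    · exact le_trans (le_max_right _ _) (Nat.le_ceil _)
  obtain ⟨n₀, x₀, hx₀⟩ :=
    nonempty_interior_of_iUnion_of_closed (fun n => isClosed_closure) hcover
  obtain ⟨r, hr, hball⟩ := Metric.mem_nhds_iff.1 (mem_interior_iff_mem_nhds.1 hx₀)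
  set N : ℝ := (n₀ : ℝ) with hN
  have hN0 : 0 ≤ N := Nat.cast_nonneg _
  have hBconv : Convex ℝ (B n₀) := by
    rintro w₁ ⟨y₁, z₁, hy₁, hz₁, hny₁, hnz₁, rfl⟩ w₂ ⟨y₂, z₂, hy₂, hz₂, hny₂, hnz₂, rfl⟩
      s t hs ht hst
    refine ⟨s • y₁ + t • y₂, s • z₁ + t • z₂,
      add_nonneg (hsmul _ _ hs hy₁) (hsmul _ _ ht hy₂),
      add_nonneg (hsmul _ _ hs hz₁) (hsmul _ _ ht hz₂), ?_, ?_, by module⟩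
    · calc ‖s • y₁ + t • y₂‖ ≤ ‖s • y₁‖ + ‖t • y₂‖ := norm_add_le _ _
        _ ≤ s * N + t * N := by
            rw [norm_smul, norm_smul, Real.norm_of_nonneg hs, Real.norm_of_nonneg ht]
            gcongr
        _ = N := by rw [← add_mul, hst, one_mul]
    · calc ‖s • z₁ + t • z₂‖ ≤ ‖s • z₁‖ + ‖t • z₂‖ := norm_add_le _ _
        _ ≤ s * N + t * N := by
            rw [norm_smul, norm_smul, Real.norm_of_nonneg hs, Real.norm_of_nonneg ht]
            gcongr
        _ = N := by rw [← add_mul, hst, one_mul]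
  have hconv : Convex ℝ (closure (B n₀)) := hBconv.closure
  have hsymm : ∀ w ∈ closure (B n₀), -w ∈ closure (B n₀) := by
    intro w hw
    refine map_mem_closure continuous_neg hw ?_
    rintro v ⟨y, z, hy, hz, hny, hnz, rfl⟩
    exact ⟨z, y, hz, hy, hnz, hny, by abel⟩
  have hball0 : ∀ u : D, ‖u‖ < r → u ∈ closure (B n₀) := by
    intro u hu
    have h1 : x₀ + u ∈ closure (B n₀) := by
      apply hball
      simp only [Metric.mem_ball, dist_eq_norm]
      simpa using hu
    have h2 : -(x₀ - u) ∈ closure (B n₀) := by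
      refine hsymm _ (hball ?_)
      simp only [Metric.mem_ball, dist_eq_norm]
      simpa [norm_sub_rev] using hu
    have h3 := hconv h1 h2 (by norm_num : (0:ℝ) ≤ 1/2) (by norm_num : (0:ℝ) ≤ 1/2)
      (by norm_num)
    convert h3 using 1
    module
  have happrox : ∀ c : ℝ, 0 < c → ∀ u : D, ‖u‖ < c * r → ∀ ε : ℝ, 0 < ε →
      ∃ y z : D, 0 ≤ y ∧ 0 ≤ z ∧ ‖y‖ ≤ c * N ∧ ‖z‖ ≤ c * N ∧ ‖u - (y - z)‖ < ε := by
    intro c hcpos u hu ε hε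
    have hu' : ‖c⁻¹ • u‖ < r := by
      rw [norm_smul, Real.norm_of_nonneg (inv_nonneg.2 hcpos.le)]
      calc c⁻¹ * ‖u‖ < c⁻¹ * (c * r) :=
            mul_lt_mul_of_pos_left hu (inv_pos.2 hcpos)
        _ = r := by field_simp
    obtain ⟨w, hwB, hwd⟩ := Metric.mem_closure_iff.1 (hball0 _ hu') (ε / c)
      (div_pos hε hcpos)
    obtain ⟨y, z, hy, hz, hny, hnz, rfl⟩ := hwB
    refine ⟨c • y, c • z, hsmul _ _ hcpos.le hy, hsmul _ _ hcpos.le hz, ?_, ?_, ?_⟩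
    · rw [norm_smul, Real.norm_of_nonneg hcpos.le]
      exact mul_le_mul_of_nonneg_left hny hcpos.le
    · rw [norm_smul, Real.norm_of_nonneg hcpos.le]
      exact mul_le_mul_of_nonneg_left hnz hcpos.le
    · have heq : u - (c • y - c • z) = c • (c⁻¹ • u - (y - z)) := by
        rw [smul_sub, smul_inv_smul₀ hcpos.ne', smul_sub]
      rw [heq, norm_smul, Real.norm_of_nonneg hcpos.le]
      rw [dist_eq_norm] at hwd
      calc c * ‖c⁻¹ • u - (y - z)‖ < c * (ε / c) := mul_lt_mul_of_pos_left hwd hcpos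
        _ = ε := by field_simp
  refine ⟨8 * N / r + 1, by positivity, fun x => ?_⟩
  rcases eq_or_ne x 0 with rfl | hx0
  · exact ⟨0, le_refl 0, by simp, by simp, by simp⟩
  · have hxn : 0 < ‖x‖ := norm_pos_iff.2 hx0
    set t : ℝ := r / (2 * ‖x‖) with ht
    have htpos : 0 < t := by positivity
    have hx' : ‖t • x‖ < r := by
      rw [norm_smul, Real.norm_of_nonneg htpos.le, ht]
      rw [div_mul_eq_mul_div, div_lt_iff₀ (by positivity)]
      nlinarith
    obtain ⟨y, z, hy, hz, hxyz, hny, hnz⟩ := small_decomp hc hN0 hr happrox (t • x) hx'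
    refine ⟨t⁻¹ • (y + z), hsmul _ _ (inv_nonneg.2 htpos.le) (add_nonneg hy hz), ?_, ?_, ?_⟩
    · have h1 : -(y + z) ≤ t • x := by
        rw [hxyz]
        have h2 : -y ≤ y := le_trans (neg_nonpos.2 hy) hy
        calc -(y + z) = -y - z := by abel
          _ ≤ y - z := sub_le_sub_right h2 z
      have h3 := smul_mono' hsmul (inv_nonneg.2 htpos.le) h1
      rwa [smul_neg, inv_smul_smul₀ htpos.ne'] at h3
    · have h1 : t • x ≤ y + z := by
        rw [hxyz]
        have h2 : -z ≤ z := le_trans (neg_nonpos.2 hz) hz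
        calc y - z = y + -z := by abel
          _ ≤ y + z := add_le_add_right h2 y
      have h3 := smul_mono' hsmul (inv_nonneg.2 htpos.le) h1
      rwa [inv_smul_smul₀ htpos.ne'] at h3
    · rw [norm_smul, Real.norm_of_nonneg (inv_nonneg.2 htpos.le)]
      have hbound : ‖y + z‖ ≤ 4 * N := by
        calc ‖y + z‖ ≤ ‖y‖ + ‖z‖ := norm_add_le _ _
          _ ≤ 2 * N + 2 * N := add_le_add hny hnz
          _ = 4 * N := by ring
      have htinv : t⁻¹ = 2 * ‖x‖ / r := by rw [ht, inv_div]
      calc t⁻¹ * ‖y + z‖ ≤ t⁻¹ * (4 * N) :=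
            mul_le_mul_of_nonneg_left hbound (inv_nonneg.2 htpos.le)
        _ = 2 * ‖x‖ / r * (4 * N) := by rw [htinv]
        _ = 8 * N / r * ‖x‖ := by field_simp; ring
        _ ≤ (8 * N / r + 1) * ‖x‖ := by nlinarith

lemma posdom (hsmul : ∀ (c : ℝ) (x : D), 0 ≤ c → 0 ≤ x → 0 ≤ c • x)
    (hc : IsClosed {x : D | 0 ≤ x}) (a : ℕ → D) (ha : ∀ n, 0 ≤ a n)
    (hsum : Summable fun n => ‖a n‖) :
    ∃ b : D, 0 ≤ b ∧ ∃ ε : ℕ → ℝ, (∀ n, 0 < ε n) ∧ Tendsto ε atTop (nhds 0) ∧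
      ∀ n, a n ≤ ε n • b := by
  classical
  set c : ℕ → ℝ := fun n => ‖a n‖ + (1/2)^n with hcdef
  have hcpos : ∀ n, 0 < c n := fun n =>
    add_pos_of_nonneg_of_pos (norm_nonneg _) (by positivity)
  have hcsum : Summable c := hsum.add summable_geometric_two
  set t : ℕ → ℝ := fun n => ∑' m, c (m + n) with htdef
  have htail : ∀ n, Summable fun m => c (m + n) := fun n =>
    (summable_nat_add_iff n).2 hcsum
  have htpos : ∀ n, 0 < t n := by
    intro n
    have h1 : c (0 + n) ≤ ∑' m, c (m + n) :=
      Summable.le_tsum (htail n) 0 (fun m _ => (hcpos _).le)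
    rw [zero_add] at h1
    exact lt_of_lt_of_le (hcpos n) h1
  have ht0 : Tendsto t atTop (nhds 0) := tendsto_sum_nat_add c
  have htrec : ∀ n, t n = c n + t (n + 1) := by
    intro n
    have h1 := Summable.tsum_eq_zero_add (htail n)
    have h2 : (fun b : ℕ => c (b + 1 + n)) = fun b : ℕ => c (b + (n + 1)) := by
      funext b; congr 1; omega
    rw [h2] at h1
    simpa [htdef] using h1
  set s : ℕ → ℝ := fun n => Real.sqrt (t n) with hsdef
  have hspos : ∀ n, 0 < s n := fun n => Real.sqrt_pos.2 (htpos n)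
  have hsq : ∀ n, s n ^ 2 = t n := fun n => Real.sq_sqrt (htpos n).le
  have hsmono : ∀ n, s (n + 1) ≤ s n := by
    intro n
    apply Real.sqrt_le_sqrt
    have := htrec n
    nlinarith [hcpos n]
  have hs0 : Tendsto s atTop (nhds 0) := by
    have := ht0.sqrt
    simpa using this
  have hkey : ∀ n, (s n)⁻¹ * c n ≤ 2 * (s n - s (n + 1)) := by
    intro n
    rw [inv_mul_le_iff₀ (hspos n)]
    have h1 := hsq n
    have h2 := hsq (n + 1)
    have h3 := htrec n
    nlinarith [sq_nonneg (s n - s (n + 1)), hsmono n]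
  have hgsum : Summable fun n => 2 * (s n - s (n + 1)) := by
    apply summable_of_sum_range_le (c := 2 * s 0)
    · intro n; nlinarith [hsmono n]
    · intro n
      rw [← Finset.mul_sum, Finset.sum_range_sub' s n]
      nlinarith [(hspos n).le]
  have hnormsum : Summable fun n => ‖(s n)⁻¹ • a n‖ := by
    refine Summable.of_nonneg_of_le (fun n => norm_nonneg _) (fun n => ?_) hgsum
    rw [norm_smul, Real.norm_of_nonneg (inv_nonneg.2 (hspos n).le)]
    refine le_trans ?_ (hkey n)
    have : ‖a n‖ ≤ c n := by
      have h4 : (0:ℝ) < (1/2)^n := by positivity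
      simp only [hcdef]; linarith
    exact mul_le_mul_of_nonneg_left this (inv_nonneg.2 (hspos n).le)
  have hbsum : Summable fun n => (s n)⁻¹ • a n := Summable.of_norm hnormsum
  refine ⟨∑' n, (s n)⁻¹ • a n,
    tsum_nonneg' hc (fun n => hsmul _ _ (inv_nonneg.2 (hspos n).le) (ha n)) hbsum,
    s, hspos, hs0, fun n => ?_⟩
  set f' : ℕ → D := fun m => (s n * (s m)⁻¹) • a m with hf'def
  have hf'sum : HasSum f' (s n • ∑' m, (s m)⁻¹ • a m) := by
    have h1 := hbsum.hasSum.const_smul (s n)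
    refine h1.congr_fun fun m => ?_
    rw [hf'def, smul_smul]
  set g : ℕ → D := fun m => if m = n then 0 else f' m with hgdef
  have hgsum' : Summable g := by
    have h1 := hf'sum.summable.update n 0
    refine h1.congr fun m => ?_
    rw [Function.update_apply, hgdef]
  have hsplit : ∀ m, f' m = g m + (if m = n then a n else 0) := by
    intro m
    by_cases hm : m = n
    · subst hm
      have h1 : f' m = a m := by
        simp only [hf'def]
        rw [mul_inv_cancel₀ (hspos m).ne', one_smul]
      simp [hgdef, h1]
    · simp [hgdef, hf'def, hm]
  have htsum : s n • ∑' m, (s m)⁻¹ • a m = (∑' m, g m) + a n := by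
    rw [← hf'sum.tsum_eq]
    have h2 : ∑' m, f' m = (∑' m, g m) + ∑' m, (if m = n then a n else 0) := by
      rw [← Summable.tsum_add hgsum' (hasSum_ite_eq n (a n)).summable]
      exact tsum_congr hsplit
    rw [h2, tsum_ite_eq]
  have hgpos : 0 ≤ ∑' m, g m := by
    refine tsum_nonneg' hc (fun m => ?_) hgsum'
    rw [hgdef]
    by_cases hm : m = n
    · simp [hm]
    · simp only [if_neg hm]
      exact hsmul _ _ (mul_nonneg (hspos n).le (inv_nonneg.2 (hspos m).le)) (ha m)
  have : a n ≤ (∑' m, g m) + a n := le_add_of_nonneg_left hgpos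
  rw [← htsum] at this
  exact this

lemma closed_of_unif (hsmul : ∀ (c : ℝ) (x : D), 0 ≤ c → 0 ≤ x → 0 ≤ c • x)
    (harch : ∀ a b : D, (∀ n : ℕ, n • a ≤ b) → a ≤ 0)
    (h3 : ∀ x : ℕ → D, (Summable fun n => ‖x n‖) →
      ∃ b : D, 0 ≤ b ∧ ∃ ε : ℕ → ℝ, (∀ n, 0 < ε n) ∧ Tendsto ε atTop (nhds 0) ∧
        ∀ n, -(ε n • b) ≤ x n ∧ x n ≤ ε n • b) :
    IsClosed {x : D | 0 ≤ x} := by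
  apply IsSeqClosed.isClosed
  intro u x hu hux
  have hsel : ∀ k : ℕ, ∃ N, ∀ n ≥ N, dist (u n) x < (1/2)^k := fun k =>
    Metric.tendsto_atTop.1 hux _ (by positivity)
  choose Nk hNk using hsel
  set v : ℕ → D := fun k => u (Nk k) - x with hv
  have hvnorm : ∀ k, ‖v k‖ ≤ (1/2)^k := by
    intro k
    have h1 := hNk k (Nk k) le_rfl
    rw [dist_eq_norm] at h1
    exact h1.le
  have hvsum : Summable fun k => ‖v k‖ :=
    Summable.of_nonneg_of_le (fun k => norm_nonneg _) hvnorm summable_geometric_two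
  obtain ⟨b, hb, ε, hεpos, hε0, hvb⟩ := h3 v hvsum
  have hxb : ∀ k, -x ≤ ε k • b := by
    intro k
    have h1 : u (Nk k) - x ≤ ε k • b := (hvb k).2
    have h2 : 0 ≤ u (Nk k) := hu _
    calc -x = (u (Nk k) - x) - u (Nk k) := by abel
      _ ≤ ε k • b - u (Nk k) := sub_le_sub_right h1 _
      _ ≤ ε k • b - 0 := sub_le_sub_left h2 _
      _ = ε k • b := sub_zero _
  have hnx : -x ≤ 0 := by
    apply harch (-x) b
    intro n
    obtain ⟨k, hk⟩ := (hε0.eventually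
      (gt_mem_nhds (show (0:ℝ) < 1/(n+1) by positivity))).exists
    have h1 : (n : ℝ) • (-x) ≤ (n : ℝ) • (ε k • b) :=
      smul_mono' hsmul (Nat.cast_nonneg n) (hxb k)
    have h2 : ((n : ℝ) * ε k) • b ≤ b := by
      have h3' : (0:ℝ) ≤ 1 - n * ε k := by
        have h4 : (n:ℝ) * ε k ≤ (n:ℝ) * (1/(n+1)) :=
          mul_le_mul_of_nonneg_left hk.le (Nat.cast_nonneg n)
        have h5 : (n:ℝ) * (1/(n+1)) ≤ 1 := by
          rw [mul_one_div, div_le_one (by positivity)]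
          linarith
        linarith
      have h6 := hsmul _ _ h3' hb
      rw [sub_smul, one_smul] at h6
      exact sub_nonneg.1 h6
    calc (n : ℕ) • (-x) = (n : ℝ) • (-x) := (Nat.cast_smul_eq_nsmul ℝ n (-x)).symm
      _ ≤ (n : ℝ) • (ε k • b) := h1
      _ = ((n : ℝ) * ε k) • b := (smul_smul _ _ _)
      _ ≤ b := h2
  exact neg_nonpos.1 hnx

lemma two_imp_three (hsmul : ∀ (c : ℝ) (x : D), 0 ≤ c → 0 ≤ x → 0 ≤ c • x)
    (hgen : ∀ x : D, ∃ y z : D, 0 ≤ y ∧ 0 ≤ z ∧ x = y - z)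
    (habs : ∃ C : ℝ, 0 < C ∧ ∀ x : D,
      sInf {r : ℝ | ∃ a : D, 0 ≤ a ∧ -a ≤ x ∧ x ≤ a ∧ r = ‖a‖} ≤ C * ‖x‖)
    (hpos : ∀ a : ℕ → D, (∀ n, 0 ≤ a n) → (Summable fun n => ‖a n‖) →
      ∃ b : D, 0 ≤ b ∧ ∃ ε : ℕ → ℝ, (∀ n, 0 < ε n) ∧
        Tendsto ε atTop (nhds 0) ∧ ∀ n, a n ≤ ε n • b) :
    ∀ x : ℕ → D, (Summable fun n => ‖x n‖) →
      ∃ b : D, 0 ≤ b ∧ ∃ ε : ℕ → ℝ, (∀ n, 0 < ε n) ∧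
        Tendsto ε atTop (nhds 0) ∧ ∀ n, -(ε n • b) ≤ x n ∧ x n ≤ ε n • b := by
  obtain ⟨C, hC, hCs⟩ := habs
  intro x hx
  have hsel : ∀ n, ∃ a : D, 0 ≤ a ∧ -a ≤ x n ∧ x n ≤ a ∧ ‖a‖ < C * ‖x n‖ + (1/2)^n := by
    intro n
    have hne : {r : ℝ | ∃ a : D, 0 ≤ a ∧ -a ≤ x n ∧ x n ≤ a ∧ r = ‖a‖}.Nonempty := by
      obtain ⟨y, z, hy, hz, hxyz⟩ := hgen (x n)
      refine ⟨‖y + z‖, y + z, add_nonneg hy hz, ?_, ?_, rfl⟩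
      · rw [hxyz]
        calc -(y + z) = -y - z := by abel
          _ ≤ y - z := sub_le_sub_right (le_trans (neg_nonpos.2 hy) hy) z
      · rw [hxyz]
        calc y - z = y + -z := by abel
          _ ≤ y + z := add_le_add_right (le_trans (neg_nonpos.2 hz) hz) y
    obtain ⟨rr, hrS, hrlt⟩ := Real.lt_sInf_add_pos hne
      (show (0:ℝ) < (1/2)^n by positivity)
    obtain ⟨a, ha0, h1, h2, rfl⟩ := hrS
    exact ⟨a, ha0, h1, h2, lt_of_lt_of_le hrlt (by linarith [hCs (x n)])⟩
  choose aa ha0 h1 h2 h3 using hsel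
  have hasum : Summable fun n => ‖aa n‖ := by
    apply Summable.of_nonneg_of_le (fun n => norm_nonneg _) (fun n => (h3 n).le)
    exact (hx.mul_left C).add summable_geometric_two
  obtain ⟨b, hb, ε, hp, h0, hab⟩ := hpos aa ha0 hasum
  refine ⟨b, hb, ε, hp, h0, fun n => ⟨?_, le_trans (h2 n) (hab n)⟩⟩
  exact le_trans (neg_le_neg (hab n)) (h1 n)

end Helpers

/-- For an Archimedean directed ordered Banach space `D` the following are equivalent:
(1) the positive cone is closed;
(2) the norm is absolutely dominating and every norm-summable sequence of positive
    elements is uniformly dominated;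
(3) every norm-summable sequence converges uniformly to `0`. -/
theorem closed_cone_equivalences
    {D : Type*} [NormedAddCommGroup D] [NormedSpace ℝ D] [CompleteSpace D]
    [PartialOrder D] [CovariantClass D D (· + ·) (· ≤ ·)]
    (hsmul : ∀ (c : ℝ) (x : D), 0 ≤ c → 0 ≤ x → 0 ≤ c • x)
    (harch : ∀ a b : D, (∀ n : ℕ, n • a ≤ b) → a ≤ 0)
    (hgen : ∀ x : D, ∃ y z : D, 0 ≤ y ∧ 0 ≤ z ∧ x = y - z) :
    (IsClosed {x : D | 0 ≤ x} ↔
      ((∃ C : ℝ, 0 < C ∧ ∀ x : D,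
          sInf {r : ℝ | ∃ a : D, 0 ≤ a ∧ -a ≤ x ∧ x ≤ a ∧ r = ‖a‖} ≤ C * ‖x‖) ∧
        ∀ a : ℕ → D, (∀ n, 0 ≤ a n) → (Summable fun n => ‖a n‖) →
          ∃ b : D, 0 ≤ b ∧ ∃ ε : ℕ → ℝ, (∀ n, 0 < ε n) ∧
            Tendsto ε atTop (nhds 0) ∧ ∀ n, a n ≤ ε n • b)) ∧
    (IsClosed {x : D | 0 ≤ x} ↔
      ∀ x : ℕ → D, (Summable fun n => ‖x n‖) →
        ∃ b : D, 0 ≤ b ∧ ∃ ε : ℕ → ℝ, (∀ n, 0 < ε n) ∧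
          Tendsto ε atTop (nhds 0) ∧ ∀ n, -(ε n • b) ≤ x n ∧ x n ≤ ε n • b) := by
  have h12 : IsClosed {x : D | 0 ≤ x} →
      ((∃ C : ℝ, 0 < C ∧ ∀ x : D,
          sInf {r : ℝ | ∃ a : D, 0 ≤ a ∧ -a ≤ x ∧ x ≤ a ∧ r = ‖a‖} ≤ C * ‖x‖) ∧
        ∀ a : ℕ → D, (∀ n, 0 ≤ a n) → (Summable fun n => ‖a n‖) →
          ∃ b : D, 0 ≤ b ∧ ∃ ε : ℕ → ℝ, (∀ n, 0 < ε n) ∧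
            Tendsto ε atTop (nhds 0) ∧ ∀ n, a n ≤ ε n • b) := by
    intro h1
    constructor
    · obtain ⟨C, hC, hA⟩ := ando hsmul hgen h1
      refine ⟨C, hC, fun x => ?_⟩
      obtain ⟨a, ha0, ha1, ha2, ha3⟩ := hA x
      refine le_trans (csInf_le ⟨0, ?_⟩ ⟨a, ha0, ha1, ha2, rfl⟩) ha3
      rintro r ⟨a', _, _, _, rfl⟩
      exact norm_nonneg _
    · exact fun a ha hs => posdom hsmul h1 a ha hs
  have h31 := closed_of_unif hsmul harch
  exact ⟨⟨h12, fun h2 => h31 (two_imp_three hsmul hgen h2.1 h2.2)⟩,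
    ⟨fun h1 => two_imp_three hsmul hgen (h12 h1).1 (h12 h1).2, h31⟩⟩
end

section
/- Let D₁ be a real Banach space equipped with a partial order making it an ordered vector space with closed generating positive cone D₁⁺ = {x : 0 ≤ x}. Let D₂ be a real normed space equipped with a partial order making it an ordered vector space whose positive cone is normal, i.e., there exists c > 0 such that 0 ≤ x ≤ y implies ‖x‖ ≤ c·‖y‖. Let T : D₁ → D₂ be a linear order bounded map (T maps every order interval [u, v] into some order interval of D₂). Then T is continuous. -/
theorem aux_bdd_on_cone
    {D₁ D₂ : Type*}
    [NormedAddCommGroup D₁] [NormedSpace ℝ D₁] [CompleteSpace D₁]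
    [PartialOrder D₁] [CovariantClass D₁ D₁ (· + ·) (· ≤ ·)]
    [NormedAddCommGroup D₂] [NormedSpace ℝ D₂]
    [PartialOrder D₂] [CovariantClass D₂ D₂ (· + ·) (· ≤ ·)]
    (hsmul₁ : ∀ (c : ℝ) (x : D₁), 0 ≤ c → 0 ≤ x → 0 ≤ c • x)
    (hclosed₁ : IsClosed {x : D₁ | 0 ≤ x})
    (hnormal₂ : ∃ c : ℝ, 0 < c ∧ ∀ x y : D₂, 0 ≤ x → x ≤ y → ‖x‖ ≤ c * ‖y‖)
    (T : D₁ →ₗ[ℝ] D₂)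
    (hob : ∀ u v : D₁, ∃ p q : D₂, ∀ x ∈ Set.Icc u v, T x ∈ Set.Icc p q) :
    ∃ C : ℝ, 0 < C ∧ ∀ x : D₁, 0 ≤ x → ‖T x‖ ≤ C * ‖x‖ := by
  haveI : IsOrderedAddMonoid D₁ :=
    { add_le_add_left := fun a b h c => by
        rw [add_comm a, add_comm b]; exact CovariantClass.elim c h }
  letI : OrderClosedTopology D₁ := by
    constructor
    have h : {p : D₁ × D₁ | p.1 ≤ p.2} = (fun p : D₁ × D₁ => p.2 - p.1) ⁻¹' {x : D₁ | 0 ≤ x} := by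
      ext p; simp [sub_nonneg]
    rw [h]; exact hclosed₁.preimage (by fun_prop)
  by_contra hC
  push_neg at hC
  -- for each n, get u n ≥ 0, ‖u n‖ ≤ (1/2)^n, ‖T (u n)‖ > n
  have key : ∀ n : ℕ, ∃ u : D₁, 0 ≤ u ∧ ‖u‖ ≤ (1/2 : ℝ) ^ n ∧ (n : ℝ) < ‖T u‖ := by
    intro n
    obtain ⟨x, hx0, hx⟩ := hC (((n : ℝ) + 1) * 2 ^ n) (by positivity)
    have hxne : x ≠ 0 := by
      rintro rfl
      simp at hx
    have hxpos : (0:ℝ) < ‖x‖ := norm_pos_iff.2 hxne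
    refine ⟨((1/2:ℝ)^n / ‖x‖) • x, hsmul₁ _ _ (by positivity) hx0, ?_, ?_⟩
    · rw [norm_smul, norm_div, Real.norm_eq_abs, abs_of_pos (by positivity : (0:ℝ) < (1/2:ℝ)^n),
        norm_norm, div_mul_cancel₀ _ (ne_of_gt hxpos)]
    · rw [map_smul, norm_smul, norm_div, Real.norm_eq_abs,
        abs_of_pos (by positivity : (0:ℝ) < (1/2:ℝ)^n), norm_norm]
      rw [div_mul_eq_mul_div, lt_div_iff₀ hxpos]
      calc (n:ℝ) * ‖x‖ ≤ (1/2:ℝ)^n * (((n : ℝ) + 1) * 2 ^ n) * ‖x‖ := by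
            have : (n:ℝ) ≤ (1/2:ℝ)^n * (((n : ℝ) + 1) * 2 ^ n) := by
              have h2 : (1/2:ℝ)^n * 2^n = 1 := by rw [← mul_pow]; norm_num
              calc (n:ℝ) ≤ ((n:ℝ)+1) * ((1/2:ℝ)^n * 2^n) := by rw [h2]; linarith
                _ = (1/2:ℝ)^n * (((n : ℝ) + 1) * 2 ^ n) := by ring
            exact mul_le_mul_of_nonneg_right this (norm_nonneg x)
        _ < (1/2:ℝ)^n * ‖T x‖ := by
            rw [mul_assoc]
            exact mul_lt_mul_of_pos_left hx (by positivity)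
  choose u hu0 hunorm hularge using key
  have hsum : Summable u := Summable.of_norm_bounded summable_geometric_two hunorm
  set s := ∑' n, u n with hs
  have hle : ∀ n, u n ∈ Set.Icc (0:D₁) s :=
    fun n => ⟨hu0 n, hsum.le_tsum n (fun j _ => hu0 j)⟩
  obtain ⟨p, q, hpq⟩ := hob 0 s
  obtain ⟨c, hc, hnorm⟩ := hnormal₂
  have hbdd : ∀ n : ℕ, ‖T (u n)‖ ≤ c * ‖q - p‖ + ‖p‖ := by
    intro n
    obtain ⟨h1, h2⟩ := hpq (u n) (hle n)
    have h3 : (0:D₂) ≤ T (u n) - p := sub_nonneg.2 h1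
    have h4 : T (u n) - p ≤ q - p := sub_le_sub_right h2 p
    have := hnorm _ _ h3 h4
    calc ‖T (u n)‖ = ‖(T (u n) - p) + p‖ := by rw [sub_add_cancel]
      _ ≤ ‖T (u n) - p‖ + ‖p‖ := norm_add_le _ _
      _ ≤ c * ‖q - p‖ + ‖p‖ := by linarith
  obtain ⟨n, hn⟩ := exists_nat_gt (c * ‖q - p‖ + ‖p‖)
  exact absurd (hbdd n) (not_le.2 (lt_trans hn (hularge n)))


theorem aux_ando {D : Type*} [NormedAddCommGroup D] [NormedSpace ℝ D] [CompleteSpace D]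
    [PartialOrder D] [CovariantClass D D (· + ·) (· ≤ ·)]
    (hsmul : ∀ (c : ℝ) (x : D), 0 ≤ c → 0 ≤ x → 0 ≤ c • x)
    (hclosed : IsClosed {x : D | 0 ≤ x})
    (hgen : ∀ x : D, ∃ y z : D, 0 ≤ y ∧ 0 ≤ z ∧ x = y - z) :
    ∃ M : ℝ, 0 < M ∧ ∀ x : D, ∃ y z : D,
      0 ≤ y ∧ 0 ≤ z ∧ x = y - z ∧ ‖y‖ ≤ M * ‖x‖ ∧ ‖z‖ ≤ M * ‖x‖ := by
  haveI : IsOrderedAddMonoid D :=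
    { add_le_add_left := fun a b h c => by
        rw [add_comm a, add_comm b]; exact CovariantClass.elim c h }
  letI : OrderClosedTopology D := by
    constructor
    have h : {p : D × D | p.1 ≤ p.2} = (fun p : D × D => p.2 - p.1) ⁻¹' {x : D | 0 ≤ x} := by
      ext p; simp [sub_nonneg]
    rw [h]; exact hclosed.preimage (by fun_prop)
  set A : ℕ → Set D := fun n =>
    {x | ∃ y z : D, 0 ≤ y ∧ 0 ≤ z ∧ x = y - z ∧ ‖y‖ ≤ n ∧ ‖z‖ ≤ n} with hA
  have hUnion : ⋃ n, closure (A n) = Set.univ := by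
    ext x
    simp only [Set.mem_iUnion, Set.mem_univ, iff_true]
    obtain ⟨y, z, hy, hz, hx⟩ := hgen x
    obtain ⟨n, hn⟩ := exists_nat_ge (max ‖y‖ ‖z‖)
    exact ⟨n, subset_closure ⟨y, z, hy, hz, hx,
      le_trans (le_max_left _ _) hn, le_trans (le_max_right _ _) hn⟩⟩
  obtain ⟨n, x₀, hx₀⟩ := nonempty_interior_of_iUnion_of_closed
    (fun n => isClosed_closure) hUnion
  have hconv : Convex ℝ (A n) := by
    rintro u ⟨y, z, hy, hz, hu, hny, hnz⟩ v ⟨y', z', hy', hz', hv, hny', hnz'⟩ a b ha hb hab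
    refine ⟨a • y + b • y', a • z + b • z',
      add_nonneg (hsmul _ _ ha hy) (hsmul _ _ hb hy'),
      add_nonneg (hsmul _ _ ha hz) (hsmul _ _ hb hz'), ?_, ?_, ?_⟩
    · rw [hu, hv]; module
    · calc ‖a • y + b • y'‖ ≤ ‖a • y‖ + ‖b • y'‖ := norm_add_le _ _
        _ ≤ a * n + b * n := by
            rw [norm_smul, norm_smul, Real.norm_eq_abs, Real.norm_eq_abs,
              abs_of_nonneg ha, abs_of_nonneg hb]
            exact add_le_add (mul_le_mul_of_nonneg_left hny ha)
              (mul_le_mul_of_nonneg_left hny' hb)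
        _ = n := by rw [← add_mul, hab, one_mul]
    · calc ‖a • z + b • z'‖ ≤ ‖a • z‖ + ‖b • z'‖ := norm_add_le _ _
        _ ≤ a * n + b * n := by
            rw [norm_smul, norm_smul, Real.norm_eq_abs, Real.norm_eq_abs,
              abs_of_nonneg ha, abs_of_nonneg hb]
            exact add_le_add (mul_le_mul_of_nonneg_left hnz ha)
              (mul_le_mul_of_nonneg_left hnz' hb)
        _ = n := by rw [← add_mul, hab, one_mul]
  have hsymm : ∀ u ∈ A n, -u ∈ A n := by
    rintro u ⟨y, z, hy, hz, hu, hny, hnz⟩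
    exact ⟨z, y, hz, hy, by rw [hu]; abel, hnz, hny⟩
  have hnegx₀ : -x₀ ∈ closure (A n) := by
    have h1 : x₀ ∈ closure (A n) := interior_subset hx₀
    have h2 : -x₀ ∈ (fun a : D => -a) '' closure (A n) := ⟨x₀, h1, rfl⟩
    have h3 := image_closure_subset_closure_image (continuous_neg (G := D)) h2
    refine closure_mono ?_ h3
    rintro u ⟨v, hv, rfl⟩
    exact hsymm v hv
  have hzero : (0 : D) ∈ interior (closure (A n)) := by
    have h := Convex.combo_interior_closure_mem_interior hconv.closure hx₀
      (by rwa [closure_closure]) (by norm_num : (0:ℝ) < 1/2) (by norm_num : (0:ℝ) ≤ 1/2)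
      (by norm_num)
    simpa using h
  obtain ⟨r, hr, hball⟩ := Metric.mem_nhds_iff.1 (mem_interior_iff_mem_nhds.1 hzero)
  -- key iteration step
  have step : ∀ v : {v : D // ‖v‖ < r}, ∃ w : D × D × {v : D // ‖v‖ < r},
      0 ≤ w.1 ∧ 0 ≤ w.2.1 ∧ ‖w.1‖ ≤ n ∧ ‖w.2.1‖ ≤ n ∧
      v.1 = (w.1 - w.2.1) + (1/2 : ℝ) • w.2.2.1 := by
    rintro ⟨x, hx⟩
    have hxS : x ∈ closure (A n) := hball (by simpa [Metric.mem_ball, dist_zero_right] using hx)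
    rw [Metric.mem_closure_iff] at hxS
    obtain ⟨a, ha, hdist⟩ := hxS (r/2) (by positivity)
    obtain ⟨y, z, hy, hz, haeq, hny, hnz⟩ := ha
    have hnx' : ‖(2:ℝ) • (x - a)‖ < r := by
      rw [norm_smul, Real.norm_eq_abs, abs_of_pos (by norm_num : (0:ℝ) < 2)]
      rw [dist_eq_norm] at hdist
      linarith
    refine ⟨⟨y, z, ⟨(2:ℝ) • (x - a), hnx'⟩⟩, hy, hz, hny, hnz, ?_⟩
    simp only
    rw [smul_smul]
    norm_num
    rw [haeq]; abel
  choose g hg1 hg2 hg3 hg4 hg5 using step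
  -- main decomposition claim on the ball
  have claim : ∀ x : D, ‖x‖ < r → ∃ y z : D,
      0 ≤ y ∧ 0 ≤ z ∧ x = y - z ∧ ‖y‖ ≤ 2 * n ∧ ‖z‖ ≤ 2 * n := by
    intro x hx
    set X : ℕ → {v : D // ‖v‖ < r} :=
      fun k => Nat.rec ⟨x, hx⟩ (fun _ v => (g v).2.2) k with hX
    set y : ℕ → D := fun k => (g (X k)).1 with hy
    set z : ℕ → D := fun k => (g (X k)).2.1 with hz
    have hXstep : ∀ k, (X k).1 = (y k - z k) + (1/2 : ℝ) • (X (k+1)).1 := fun k => hg5 (X k)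
    have hpartial : ∀ m, x = (∑ i ∈ Finset.range m, (1/2 : ℝ)^i • (y i - z i))
        + (1/2 : ℝ)^m • (X m).1 := by
      intro m
      induction m with
      | zero => simp [hX]
      | succ m ih =>
        rw [Finset.sum_range_succ]
        rw [ih, hXstep m]
        rw [smul_add, smul_smul, ← pow_succ]
        abel
    have hys : Summable (fun k => (1/2 : ℝ)^k • y k) := by
      apply Summable.of_norm_bounded (g := fun k => (1/2 : ℝ)^k * n)
        (summable_geometric_two.mul_right _)
      intro k
      rw [norm_smul, Real.norm_eq_abs, abs_of_nonneg (by positivity)]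
      exact mul_le_mul_of_nonneg_left (hg3 (X k)) (by positivity)
    have hzs : Summable (fun k => (1/2 : ℝ)^k • z k) := by
      apply Summable.of_norm_bounded (g := fun k => (1/2 : ℝ)^k * n)
        (summable_geometric_two.mul_right _)
      intro k
      rw [norm_smul, Real.norm_eq_abs, abs_of_nonneg (by positivity)]
      exact mul_le_mul_of_nonneg_left (hg4 (X k)) (by positivity)
    refine ⟨∑' k, (1/2 : ℝ)^k • y k, ∑' k, (1/2 : ℝ)^k • z k,
      tsum_nonneg (fun k => hsmul _ _ (by positivity) (hg1 (X k))),
      tsum_nonneg (fun k => hsmul _ _ (by positivity) (hg2 (X k))), ?_, ?_, ?_⟩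
    · -- x = Y - Z
      have hsub : HasSum (fun k => (1/2 : ℝ)^k • y k - (1/2 : ℝ)^k • z k)
          ((∑' k, (1/2 : ℝ)^k • y k) - ∑' k, (1/2 : ℝ)^k • z k) :=
        hys.hasSum.sub hzs.hasSum
      have h1 : Filter.Tendsto
          (fun m => ∑ i ∈ Finset.range m, ((1/2 : ℝ)^i • y i - (1/2 : ℝ)^i • z i))
          Filter.atTop (nhds ((∑' k, (1/2 : ℝ)^k • y k) - ∑' k, (1/2 : ℝ)^k • z k)) :=
        hsub.tendsto_sum_nat
      have h2 : Filter.Tendsto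
          (fun m => ∑ i ∈ Finset.range m, ((1/2 : ℝ)^i • y i - (1/2 : ℝ)^i • z i))
          Filter.atTop (nhds x) := by
        have heq : ∀ m, ∑ i ∈ Finset.range m, ((1/2 : ℝ)^i • y i - (1/2 : ℝ)^i • z i)
            = x - (1/2 : ℝ)^m • (X m).1 := by
          intro m
          have := hpartial m
          have h3 : ∀ i, (1/2 : ℝ)^i • y i - (1/2 : ℝ)^i • z i
              = (1/2 : ℝ)^i • (y i - z i) := fun i => (smul_sub _ _ _).symm
          rw [Finset.sum_congr rfl (fun i _ => h3 i)]
          rw [this]; abel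
        simp only [heq]
        have h4 : Filter.Tendsto (fun m => (1/2 : ℝ)^m • (X m).1) Filter.atTop (nhds 0) := by
          have hb : ∀ m : ℕ, ‖(1/2 : ℝ)^m • (X m).1‖ ≤ (1/2 : ℝ)^m * r := by
            intro m
            rw [norm_smul, Real.norm_eq_abs, abs_of_nonneg (by positivity)]
            exact mul_le_mul_of_nonneg_left (le_of_lt (X m).2) (by positivity)
          have ht : Filter.Tendsto (fun m : ℕ => (1/2 : ℝ)^m * r) Filter.atTop (nhds 0) := by
            have : Filter.Tendsto (fun m : ℕ => (1/2 : ℝ)^m) Filter.atTop (nhds 0) :=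
              tendsto_pow_atTop_nhds_zero_of_lt_one (by norm_num) (by norm_num)
            simpa using this.mul_const r
          exact squeeze_zero_norm hb ht
        have := Filter.Tendsto.const_sub x h4
        simpa using this
      exact tendsto_nhds_unique h2 h1
    · -- norm bound for Y
      have hyn : Summable (fun k => ‖(1/2 : ℝ)^k • y k‖) := by
        apply Summable.of_nonneg_of_le (fun k => norm_nonneg _) (fun k => ?_)
          (summable_geometric_two.mul_right (n:ℝ))
        rw [norm_smul, Real.norm_eq_abs, abs_of_nonneg (by positivity)]
        exact mul_le_mul_of_nonneg_left (hg3 (X k)) (by positivity)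
      calc ‖∑' k, (1/2 : ℝ)^k • y k‖ ≤ ∑' k, ‖(1/2 : ℝ)^k • y k‖ :=
            norm_tsum_le_tsum_norm hyn
        _ ≤ ∑' k, (1/2 : ℝ)^k * n := by
            apply Summable.tsum_le_tsum (fun k => ?_) hyn (summable_geometric_two.mul_right (n:ℝ))
            rw [norm_smul, Real.norm_eq_abs, abs_of_nonneg (by positivity)]
            exact mul_le_mul_of_nonneg_left (hg3 (X k)) (by positivity)
        _ = 2 * n := by rw [tsum_mul_right, tsum_geometric_two]
    · -- norm bound for Z
      have hzn : Summable (fun k => ‖(1/2 : ℝ)^k • z k‖) := by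
        apply Summable.of_nonneg_of_le (fun k => norm_nonneg _) (fun k => ?_)
          (summable_geometric_two.mul_right (n:ℝ))
        rw [norm_smul, Real.norm_eq_abs, abs_of_nonneg (by positivity)]
        exact mul_le_mul_of_nonneg_left (hg4 (X k)) (by positivity)
      calc ‖∑' k, (1/2 : ℝ)^k • z k‖ ≤ ∑' k, ‖(1/2 : ℝ)^k • z k‖ :=
            norm_tsum_le_tsum_norm hzn
        _ ≤ ∑' k, (1/2 : ℝ)^k * n := by
            apply Summable.tsum_le_tsum (fun k => ?_) hzn (summable_geometric_two.mul_right (n:ℝ))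
            rw [norm_smul, Real.norm_eq_abs, abs_of_nonneg (by positivity)]
            exact mul_le_mul_of_nonneg_left (hg4 (X k)) (by positivity)
        _ = 2 * n := by rw [tsum_mul_right, tsum_geometric_two]
  -- assemble the final constant
  refine ⟨4 * (n + 1) / r, by positivity, fun x => ?_⟩
  by_cases hx0 : x = 0
  · subst hx0
    exact ⟨0, 0, le_refl 0, le_refl 0, by simp, by simp, by simp⟩
  have hxpos : (0:ℝ) < ‖x‖ := norm_pos_iff.2 hx0
  set t : ℝ := r / (2 * ‖x‖) with ht
  have htpos : 0 < t := by positivity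
  have htx : ‖t • x‖ < r := by
    rw [norm_smul, Real.norm_eq_abs, abs_of_pos htpos, ht]
    have h5 : r / (2 * ‖x‖) * ‖x‖ = r / 2 := by
      field_simp
    rw [h5]
    linarith
  obtain ⟨y, z, hy, hz, heq, hny, hnz⟩ := claim (t • x) htx
  refine ⟨t⁻¹ • y, t⁻¹ • z, hsmul _ _ (le_of_lt (inv_pos.2 htpos)) hy,
    hsmul _ _ (le_of_lt (inv_pos.2 htpos)) hz, ?_, ?_, ?_⟩
  · rw [← smul_sub, ← heq, smul_smul, inv_mul_cancel₀ (ne_of_gt htpos), one_smul]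
  · rw [norm_smul, Real.norm_eq_abs, abs_of_pos (inv_pos.2 htpos)]
    have h1 : t⁻¹ = 2 * ‖x‖ / r := by rw [ht]; field_simp
    calc t⁻¹ * ‖y‖ ≤ t⁻¹ * (2 * n) := mul_le_mul_of_nonneg_left hny (le_of_lt (inv_pos.2 htpos))
      _ = (2 * ‖x‖ / r) * (2 * n) := by rw [h1]
      _ ≤ 4 * (n + 1) / r * ‖x‖ := by
          rw [div_mul_eq_mul_div, div_mul_eq_mul_div, div_le_div_iff₀ hr hr]
          ring_nf
          nlinarith [mul_nonneg (norm_nonneg x) hr.le]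
  · rw [norm_smul, Real.norm_eq_abs, abs_of_pos (inv_pos.2 htpos)]
    have h1 : t⁻¹ = 2 * ‖x‖ / r := by rw [ht]; field_simp
    calc t⁻¹ * ‖z‖ ≤ t⁻¹ * (2 * n) := mul_le_mul_of_nonneg_left hnz (le_of_lt (inv_pos.2 htpos))
      _ = (2 * ‖x‖ / r) * (2 * n) := by rw [h1]
      _ ≤ 4 * (n + 1) / r * ‖x‖ := by
          rw [div_mul_eq_mul_div, div_mul_eq_mul_div, div_le_div_iff₀ hr hr]
          ring_nf
          nlinarith [mul_nonneg (norm_nonneg x) hr.le]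


/-- An order bounded linear map from an ordered Banach space with closed generating cone
to a normed ordered vector space with a normal cone is continuous. -/
theorem orderBounded_linear_continuous_into_normal_cone
    {D₁ D₂ : Type*}
    [NormedAddCommGroup D₁] [NormedSpace ℝ D₁] [CompleteSpace D₁]
    [PartialOrder D₁] [CovariantClass D₁ D₁ (· + ·) (· ≤ ·)]
    [NormedAddCommGroup D₂] [NormedSpace ℝ D₂]
    [PartialOrder D₂] [CovariantClass D₂ D₂ (· + ·) (· ≤ ·)]
    (hsmul₁ : ∀ (c : ℝ) (x : D₁), 0 ≤ c → 0 ≤ x → 0 ≤ c • x)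
    (hsmul₂ : ∀ (c : ℝ) (x : D₂), 0 ≤ c → 0 ≤ x → 0 ≤ c • x)
    (hclosed₁ : IsClosed {x : D₁ | 0 ≤ x})
    (hgen₁ : ∀ x : D₁, ∃ y z : D₁, 0 ≤ y ∧ 0 ≤ z ∧ x = y - z)
    (hnormal₂ : ∃ c : ℝ, 0 < c ∧ ∀ x y : D₂, 0 ≤ x → x ≤ y → ‖x‖ ≤ c * ‖y‖)
    (T : D₁ →ₗ[ℝ] D₂)
    (hob : ∀ u v : D₁, ∃ p q : D₂, ∀ x ∈ Set.Icc u v, T x ∈ Set.Icc p q) :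
    Continuous T := by
  obtain ⟨C, hC, hTC⟩ := aux_bdd_on_cone hsmul₁ hclosed₁ hnormal₂ T hob
  obtain ⟨M, hM, hMd⟩ := aux_ando hsmul₁ hclosed₁ hgen₁
  apply AddMonoidHomClass.continuous_of_bound T (2 * C * M)
  intro x
  obtain ⟨y, z, hy, hz, hxyz, hny, hnz⟩ := hMd x
  calc ‖T x‖ = ‖T y - T z‖ := by rw [hxyz, map_sub]
    _ ≤ ‖T y‖ + ‖T z‖ := norm_sub_le _ _
    _ ≤ C * ‖y‖ + C * ‖z‖ := add_le_add (hTC y hy) (hTC z hz)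
    _ ≤ C * (M * ‖x‖) + C * (M * ‖x‖) :=
        add_le_add (mul_le_mul_of_nonneg_left hny hC.le)
          (mul_le_mul_of_nonneg_left hnz hC.le)
    _ = 2 * C * M * ‖x‖ := by ring
end

section
/- Let (X, 𝒜, μ) be a complete σ-finite measure space. Let D be а real Banach space equipped with a partial order making it an ordered vector space with generating positive cone D⁺ (D = D⁺ − D⁺), and let C > 0 be such that the norm is C-absolutely dominating: C·‖x‖ ≥ inf { ‖a‖ : a ∈ D⁺, −a ≤ x ≤ a } for all x ∈ D. Let f : X → D be a simple function and let ε > 0. Then there exists a simple function g : X → D⁺ with −g(x) ≤ f(x) ≤ g(x) for all x ∈ X and ∫ ‖g‖ dμ ≤ C · ∫ ‖f‖ dμ + ε. -/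
open MeasureTheory

/-- For a simple function `f` with values in a directed ordered Banach space whose norm is
`C`-absolutely dominating, there is a positive simple function `g` with `-g ≤ f ≤ g` and
`∫ ‖g‖ ≤ C ∫ ‖f‖ + ε`. -/
theorem simple_function_dominated_by_positive_simple_function
    {X : Type*} [MeasurableSpace X] (μ : Measure X)
    [μ.IsComplete] [SigmaFinite μ]
    {D : Type*} [NormedAddCommGroup D] [NormedSpace ℝ D] [CompleteSpace D]
    [PartialOrder D] [CovariantClass D D (· + ·) (· ≤ ·)]
    (hsmul : ∀ (c : ℝ) (x : D), 0 ≤ c → 0 ≤ x → 0 ≤ c • x)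
    (hgen : ∀ x : D, ∃ y z : D, 0 ≤ y ∧ 0 ≤ z ∧ x = y - z)
    (C : ℝ) (hC : 0 < C)
    (hdom : ∀ x : D,
      sInf {r : ℝ | ∃ a : D, 0 ≤ a ∧ -a ≤ x ∧ x ≤ a ∧ r = ‖a‖} ≤ C * ‖x‖)
    (f : SimpleFunc X D) (hf : μ (Function.support f) < ⊤)
    (ε : ℝ) (hε : 0 < ε) :
    ∃ g : SimpleFunc X D, μ (Function.support g) < ⊤ ∧
      (∀ x, 0 ≤ g x) ∧ (∀ x, -g x ≤ f x ∧ f x ≤ g x) ∧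
      ∫ x, ‖g x‖ ∂μ ≤ C * ∫ x, ‖f x‖ ∂μ + ε := by
  classical
  set s := Function.support (⇑f) with hs
  have hs_meas : MeasurableSet s := f.measurableSet_support
  set t := (μ s).toReal with ht
  have ht0 : 0 ≤ t := ENNReal.toReal_nonneg
  set δ := ε / (t + 1) with hδ
  have hδpos : 0 < δ := div_pos hε (by linarith)
  -- For every `v` there is a dominating positive element with controlled norm.
  have key : ∀ v : D, ∃ a : D, 0 ≤ a ∧ -a ≤ v ∧ v ≤ a ∧ ‖a‖ ≤ C * ‖v‖ + δ := by
    intro v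
    obtain ⟨y, z, hy, hz, hv⟩ := hgen v
    have hny : -y ≤ 0 := by simpa using add_le_add_left hy (-y)
    have hnz : -z ≤ 0 := by simpa using add_le_add_left hz (-z)
    have hSne : ∃ r, r ∈ {r : ℝ | ∃ a : D, 0 ≤ a ∧ -a ≤ v ∧ v ≤ a ∧ r = ‖a‖} := by
      refine ⟨‖y + z‖, y + z, add_nonneg hy hz, ?_, ?_, rfl⟩
      · have h1 : -y + -z ≤ y + -z := by
          calc -y + -z = -z + -y := add_comm _ _
          _ ≤ -z + y := add_le_add le_rfl (hny.trans hy)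
          _ = y + -z := add_comm _ _
        calc -(y + z) = -y + -z := by abel
        _ ≤ y + -z := h1
        _ = y - z := by abel
        _ = v := hv.symm
      · calc v = y - z := hv
        _ = y + -z := by abel
        _ ≤ y + z := add_le_add le_rfl (hnz.trans hz)
    have hlt : sInf {r : ℝ | ∃ a : D, 0 ≤ a ∧ -a ≤ v ∧ v ≤ a ∧ r = ‖a‖} < C * ‖v‖ + δ :=
      lt_of_le_of_lt (hdom v) (by linarith)
    obtain ⟨r, hr, hrlt⟩ := exists_lt_of_csInf_lt hSne hlt
    obtain ⟨a, ha0, h1, h2, rfl⟩ := hr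
    exact ⟨a, ha0, h1, h2, hrlt.le⟩
  choose hh hh0 hh1 hh2 hh3 using key
  set h' : D → D := fun v => if v = 0 then 0 else hh v with hh'
  have h'0 : ∀ v, 0 ≤ h' v := by
    intro v; by_cases hv : v = 0 <;> simp [hh', hv, hh0]
  have h'1 : ∀ v, -h' v ≤ v := by
    intro v; by_cases hv : v = 0 <;> simp [hh', hv, hh1]
  have h'2 : ∀ v, v ≤ h' v := by
    intro v; by_cases hv : v = 0 <;> simp [hh', hv, hh2]
  set g := f.map h' with hg
  have hgx : ∀ x, g x = h' (f x) := fun x => rfl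
  have hsupp : Function.support (⇑g) ⊆ s := by
    intro x hx
    simp only [Function.mem_support] at hx ⊢
    intro hfx
    exact hx (by simp [hgx, hh', hfx])
  have hgs : μ (Function.support (⇑g)) < ⊤ := lt_of_le_of_lt (measure_mono hsupp) hf
  -- integrability of the norms
  have hfi : Integrable (fun x => ‖f x‖) μ := by
    have : Integrable (⇑(f.map norm)) μ := by
      rw [SimpleFunc.integrable_iff_finMeasSupp, SimpleFunc.finMeasSupp_iff_support]
      refine lt_of_le_of_lt (measure_mono ?_) hf
      intro x hx
      simp only [Function.mem_support, SimpleFunc.coe_map, Function.comp_apply] at hx ⊢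
      intro hfx; exact hx (by simp [hfx])
    simpa [SimpleFunc.coe_map, Function.comp_def] using this
  have hgi : Integrable (fun x => ‖g x‖) μ := by
    have : Integrable (⇑(g.map norm)) μ := by
      rw [SimpleFunc.integrable_iff_finMeasSupp, SimpleFunc.finMeasSupp_iff_support]
      refine lt_of_le_of_lt (measure_mono ?_) hgs
      intro x hx
      simp only [Function.mem_support, SimpleFunc.coe_map, Function.comp_apply] at hx ⊢
      intro hfx; exact hx (by simp [hfx])
    simpa [SimpleFunc.coe_map, Function.comp_def] using this
  have hindi : Integrable (s.indicator fun _ => δ) μ := by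
    rw [integrable_indicator_iff hs_meas]
    exact integrableOn_const hf.ne
  have hRHSi : Integrable (fun x => C * ‖f x‖ + s.indicator (fun _ => δ) x) μ :=
    (hfi.const_mul C).add hindi
  have hptwise : ∀ x, ‖g x‖ ≤ C * ‖f x‖ + s.indicator (fun _ => δ) x := by
    intro x
    by_cases hfx : f x = 0
    · have : g x = 0 := by simp [hgx, hh', hfx]
      rw [this, hfx]
      simp only [norm_zero, mul_zero, zero_add]
      exact Set.indicator_nonneg (fun _ _ => hδpos.le) x
    · have hxs : x ∈ s := by simpa [hs, Function.mem_support] using hfx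
      rw [Set.indicator_of_mem hxs]
      have : g x = hh (f x) := by simp [hgx, hh', hfx]
      rw [this]
      exact hh3 (f x)
  have hint : ∫ x, ‖g x‖ ∂μ ≤ ∫ x, (C * ‖f x‖ + s.indicator (fun _ => δ) x) ∂μ :=
    integral_mono hgi hRHSi hptwise
  have hind_int : ∫ x, s.indicator (fun _ => δ) x ∂μ = t * δ := by
    rw [integral_indicator_const (δ : ℝ) hs_meas]
    simp [ht, smul_eq_mul, measureReal_def]
  have hsplit : ∫ x, (C * ‖f x‖ + s.indicator (fun _ => δ) x) ∂μ
      = C * ∫ x, ‖f x‖ ∂μ + t * δ := by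
    rw [integral_add (hfi.const_mul C) hindi, integral_const_mul, hind_int]
  have htδ : t * δ ≤ ε := by
    rw [hδ, mul_div_assoc', div_le_iff₀ (by linarith : (0:ℝ) < t + 1)]
    nlinarith
  refine ⟨g, hgs, fun x => h'0 (f x), fun x => ⟨h'1 (f x), h'2 (f x)⟩, ?_⟩
  calc ∫ x, ‖g x‖ ∂μ ≤ C * ∫ x, ‖f x‖ ∂μ + t * δ := by rw [← hsplit]; exact hint
  _ ≤ C * ∫ x, ‖f x‖ ∂μ + ε := by linarith
end

section
/- Let (X, 𝒜, μ) be a complete σ-finite measure space. Let D be a real Banach space equipped with a partial order making it an ordered vector space with closed generating positive cone D⁺, and let C > 0 be such that the norm is C-absolutely dominating: C·‖x‖ ≥ inf { ‖a‖ : a ∈ D⁺, −a ≤ x ≤ a } for all x ∈ D. Then for every Bochner integrable f : X → D and every ε > 0 there exists a Bochner integrable g : X → D⁺ with −g ≤ f ≤ g μ-almost everywhere and ∫ ‖g‖ dμ ≤ C · (∫ ‖f‖ dμ + ε). -/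
open MeasureTheory

set_option maxHeartbeats 2000000 in
/-- For a Bochner integrable function `f` with values in an ordered Banach space with
closed generating cone and a `C`-absolutely dominating norm, there is a Bochner
integrable positive function `g` with `-g ≤ f ≤ g` a.e. and `∫ ‖g‖ ≤ C (∫ ‖f‖ + ε)`. -/
theorem integrable_function_dominated_by_positive_integrable_function
    {X : Type*} [MeasurableSpace X] (μ : Measure X)
    [μ.IsComplete] [SigmaFinite μ]
    {D : Type*} [NormedAddCommGroup D] [NormedSpace ℝ D] [CompleteSpace D]
    [PartialOrder D] [CovariantClass D D (· + ·) (· ≤ ·)]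
    (hsmul : ∀ (c : ℝ) (x : D), 0 ≤ c → 0 ≤ x → 0 ≤ c • x)
    (hclosed : IsClosed {x : D | 0 ≤ x})
    (hgen : ∀ x : D, ∃ y z : D, 0 ≤ y ∧ 0 ≤ z ∧ x = y - z)
    (C : ℝ) (hC : 0 < C)
    (hdom : ∀ x : D,
      sInf {r : ℝ | ∃ a : D, 0 ≤ a ∧ -a ≤ x ∧ x ≤ a ∧ r = ‖a‖} ≤ C * ‖x‖)
    (f : X → D) (hf : Integrable f μ) (ε : ℝ) (hε : 0 < ε) :
    ∃ g : X → D, Integrable g μ ∧ (∀ x, 0 ≤ g x) ∧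
      (∀ᵐ x ∂μ, -g x ≤ f x ∧ f x ≤ g x) ∧
      ∫ x, ‖g x‖ ∂μ ≤ C * (∫ x, ‖f x‖ ∂μ + ε) := by
  classical
  haveI hswap : CovariantClass D D (Function.swap (· + ·)) (· ≤ ·) :=
    ⟨fun a b c h => by simpa [add_comm] using add_le_add_left h a⟩
  set I := ∫ x, ‖f x‖ ∂μ with hI
  have hI0 : 0 ≤ I := integral_nonneg fun x => norm_nonneg _
  set η : ℝ := ε / 10 with hη
  have hη0 : 0 < η := by positivity
  have hIε : 0 < I + ε := by linarith
  set δ : ℝ := C * ε / (2 * (I + ε)) with hδ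
  have hδ0 : 0 < δ := by positivity
  have hδeq : δ * (2 * (I + ε)) = C * ε := by
    rw [hδ]; field_simp
  clear_value δ
  have hfinal_const : (C + δ) * (I + 5 * η) ≤ C * (I + ε) := by
    have h5 : 5 * η = ε / 2 := by rw [hη]; ring
    rw [h5]
    nlinarith [hδeq, mul_nonneg hδ0.le hε.le, mul_nonneg hδ0.le hI0]
  -- choice of dominating elements
  have key : ∀ v : D, ∃ a : D, 0 ≤ a ∧ -a ≤ v ∧ v ≤ a ∧ ‖a‖ ≤ (C + δ) * ‖v‖ := by
    intro v
    rcases eq_or_ne v 0 with rfl | hv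
    · exact ⟨0, le_refl 0, by simp, by simp, by simp⟩
    · have hvpos : 0 < ‖v‖ := norm_pos_iff.2 hv
      have hne : {r : ℝ | ∃ a : D, 0 ≤ a ∧ -a ≤ v ∧ v ≤ a ∧ r = ‖a‖}.Nonempty := by
        obtain ⟨y, z, hy, hz, hyz⟩ := hgen v
        have hy' : -y ≤ y := (neg_nonpos.2 hy).trans hy
        have hz' : -z ≤ z := (neg_nonpos.2 hz).trans hz
        refine ⟨‖y + z‖, y + z, add_nonneg hy hz, ?_, ?_, rfl⟩
        · rw [hyz]
          have : -(y + z) = -y - z := by abel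
          rw [this]
          exact sub_le_sub_right hy' z
        · rw [hyz]
          have : y - z = y + (-z) := by abel
          rw [this]
          exact add_le_add_right hz' y
      have hlt : sInf {r : ℝ | ∃ a : D, 0 ≤ a ∧ -a ≤ v ∧ v ≤ a ∧ r = ‖a‖}
          < (C + δ) * ‖v‖ := lt_of_le_of_lt (hdom v) (by nlinarith)
      obtain ⟨r, hr_mem, hr⟩ := exists_lt_of_csInf_lt hne hlt
      obtain ⟨a, ha0, ha1, ha2, rfl⟩ := hr_mem
      exact ⟨a, ha0, ha1, ha2, hr.le⟩
  choose A hA0 hA1 hA2 hA3 using key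
  -- simple approximations in L¹
  have approx : ∀ n : ℕ, ∃ s : SimpleFunc X D, Integrable (⇑s) μ ∧
      ∫ x, ‖f x - s x‖ ∂μ ≤ η * (1 / 2) ^ n := by
    intro n
    have hc : 0 < η * (1 / 2 : ℝ) ^ n := by positivity
    obtain ⟨s, hs, hmem⟩ := (memLp_one_iff_integrable.2 hf).exists_simpleFunc_eLpNorm_sub_lt
      ENNReal.one_ne_top (ε := ENNReal.ofReal (η * (1 / 2) ^ n)) (ENNReal.ofReal_pos.2 hc).ne'
    have hsint : Integrable (⇑s) μ := memLp_one_iff_integrable.1 hmem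
    refine ⟨s, hsint, ?_⟩
    have hint : Integrable (fun x => f x - s x) μ := hf.sub hsint
    rw [integral_norm_eq_lintegral_enorm hint.aestronglyMeasurable]
    refine ENNReal.toReal_le_of_le_ofReal hc.le ?_
    have := hs.le
    rw [eLpNorm_one_eq_lintegral_enorm] at this
    simpa [Pi.sub_apply] using this
  choose S hSint hSapprox using approx
  have hsub : ∀ n, Integrable (fun x => f x - S n x) μ := fun n => hf.sub (hSint n)
  -- telescoping simple functions
  set h : ℕ → SimpleFunc X D :=
    fun n => Nat.rec (S 0) (fun k _ => S (k + 1) - S k) n with hh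
  have h_zero : h 0 = S 0 := rfl
  have h_succ : ∀ n, h (n + 1) = S (n + 1) - S n := fun n => rfl
  have hhint : ∀ n, Integrable (⇑(h n)) μ := by
    intro n
    cases n with
    | zero => exact hSint 0
    | succ k =>
      rw [h_succ]
      have : ⇑(S (k + 1) - S k) = fun x => S (k + 1) x - S k x := by
        ext x; simp
      rw [this]
      exact (hSint (k + 1)).sub (hSint k)
  -- bounds on ∫ ‖h n‖
  set U : ℕ → ℝ := fun n => ∫ x, ‖h n x‖ ∂μ with hU
  have hUnonneg : ∀ n, 0 ≤ U n := fun n => integral_nonneg fun x => norm_nonneg _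
  have hU0le : U 0 ≤ I + η := by
    have step : U 0 ≤ ∫ x, (‖f x‖ + ‖f x - S 0 x‖) ∂μ := by
      refine integral_mono (hhint 0).norm (hf.norm.add (hsub 0).norm) fun x => ?_
      have : h 0 x = f x - (f x - S 0 x) := by rw [h_zero]; abel
      rw [this]
      exact norm_sub_le _ _
    rw [integral_add hf.norm (hsub 0).norm] at step
    have := hSapprox 0
    simp only [pow_zero, mul_one] at this
    linarith
  have hUsucc : ∀ n, U (n + 1) ≤ 2 * η * (1 / 2) ^ n := by
    intro n
    have step : U (n + 1) ≤ ∫ x, (‖f x - S (n + 1) x‖ + ‖f x - S n x‖) ∂μ := by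
      refine integral_mono (hhint (n + 1)).norm
        ((hsub (n + 1)).norm.add (hsub n).norm) fun x => ?_
      have e : h (n + 1) x = (f x - S n x) - (f x - S (n + 1) x) := by
        rw [h_succ]
        simp only [SimpleFunc.coe_sub, Pi.sub_apply]
        abel
      rw [e]
      calc ‖(f x - S n x) - (f x - S (n + 1) x)‖
          ≤ ‖f x - S n x‖ + ‖f x - S (n + 1) x‖ := norm_sub_le _ _
        _ = ‖f x - S (n + 1) x‖ + ‖f x - S n x‖ := by ring
    rw [integral_add (hsub (n + 1)).norm (hsub n).norm] at step
    have h1 := hSapprox (n + 1)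
    have h2 := hSapprox n
    have hp : (1 / 2 : ℝ) ^ (n + 1) ≤ (1 / 2) ^ n := by
      rw [pow_succ]
      nlinarith [pow_pos (by norm_num : (0 : ℝ) < 1 / 2) n]
    nlinarith [hp, hη0.le, pow_pos (by norm_num : (0 : ℝ) < 1 / 2) n]
  have hUpartial : ∀ N, ∑ n ∈ Finset.range N, U n ≤ I + 5 * η := by
    intro N
    cases N with
    | zero => simp; nlinarith
    | succ M =>
      rw [Finset.sum_range_succ']
      have h1 : ∑ i ∈ Finset.range M, U (i + 1) ≤ ∑ i ∈ Finset.range M, 2 * η * (1 / 2) ^ i :=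
        Finset.sum_le_sum fun i _ => hUsucc i
      have h2 : ∑ i ∈ Finset.range M, 2 * η * (1 / 2 : ℝ) ^ i
          = 2 * η * ∑ i ∈ Finset.range M, (1 / 2 : ℝ) ^ i := by rw [Finset.mul_sum]
      have h3 := sum_geometric_two_le M
      nlinarith
  have hUsum : Summable U := summable_of_sum_range_le hUnonneg hUpartial
  have hUtsum : ∑' n, U n ≤ I + 5 * η := hUsum.tsum_le_of_sum_range_le hUpartial
  -- dominating simple functions
  set g : ℕ → SimpleFunc X D := fun n => (h n).map A with hgdef
  have hgapp : ∀ n x, g n x = A (h n x) := fun n x => rfl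
  have hgnn : ∀ n x, 0 ≤ g n x := fun n x => hA0 _
  have hgle : ∀ n x, ‖g n x‖ ≤ (C + δ) * ‖h n x‖ := fun n x => hA3 _
  have hgint : ∀ n, Integrable (⇑(g n)) μ := fun n =>
    Integrable.mono' ((hhint n).norm.const_mul (C + δ))
      (g n).aestronglyMeasurable (Filter.Eventually.of_forall fun x => hgle n x)
  set T : ℕ → ℝ := fun n => ∫ x, ‖g n x‖ ∂μ with hT
  have hTnonneg : ∀ n, 0 ≤ T n := fun n => integral_nonneg fun _ => norm_nonneg _
  have hTle : ∀ n, T n ≤ (C + δ) * U n := by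
    intro n
    have step : T n ≤ ∫ x, (C + δ) * ‖h n x‖ ∂μ :=
      integral_mono (hgint n).norm ((hhint n).norm.const_mul _) (hgle n)
    rwa [integral_const_mul] at step
  have hTsum : Summable T :=
    Summable.of_nonneg_of_le hTnonneg hTle (hUsum.mul_left (C + δ))
  have hTtsum : ∑' n, T n ≤ (C + δ) * (I + 5 * η) := by
    calc ∑' n, T n ≤ ∑' n, (C + δ) * U n :=
          Summable.tsum_le_tsum hTle hTsum (hUsum.mul_left _)
      _ = (C + δ) * ∑' n, U n := tsum_mul_left
      _ ≤ (C + δ) * (I + 5 * η) := by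
          apply mul_le_mul_of_nonneg_left hUtsum; linarith
  -- finiteness of the lintegral sum
  have hTlint : ∀ n, ∫⁻ x, ‖g n x‖₊ ∂μ = ENNReal.ofReal (T n) := fun n =>
    (ofReal_integral_norm_eq_lintegral_enorm (hgint n)).symm
  have hGlintsum : ∑' n, ∫⁻ x, ‖g n x‖₊ ∂μ ≠ ⊤ := by
    simp_rw [hTlint]
    rw [← ENNReal.ofReal_tsum_of_nonneg hTnonneg hTsum]
    exact ENNReal.ofReal_ne_top
  have hGmeas : ∀ n : ℕ, AEMeasurable (fun x => (‖g n x‖₊ : ENNReal)) μ := fun n =>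
    (g n).aestronglyMeasurable.enorm
  -- a.e. summability of the norms
  have hae_normsum : ∀ᵐ x ∂μ, Summable fun n => ‖g n x‖ := by
    have hlt : ∫⁻ x, ∑' n, (‖g n x‖₊ : ENNReal) ∂μ ≠ ⊤ := by
      rw [lintegral_tsum hGmeas]; exact hGlintsum
    filter_upwards [ae_lt_top' (AEMeasurable.ennreal_tsum hGmeas) hlt] with x hx
    have hsumm : Summable fun n => (‖g n x‖₊ : NNReal) :=
      ENNReal.tsum_coe_ne_top_iff_summable.1 hx.ne
    simpa [coe_nnnorm] using NNReal.summable_coe.2 hsumm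
  have hae_sum : ∀ᵐ x ∂μ, Summable fun n => g n x := by
    filter_upwards [hae_normsum] with x hx
    exact Summable.of_norm hx
  -- a.e. convergence of S to f
  have hSconv : ∀ᵐ x ∂μ, Filter.Tendsto (fun n => S n x) Filter.atTop (nhds (f x)) := by
    have hmeas : ∀ n : ℕ, AEMeasurable (fun x => (‖f x - S n x‖₊ : ENNReal)) μ := fun n =>
      (hsub n).aestronglyMeasurable.enorm
    have hlint : ∀ n, ∫⁻ x, ‖f x - S n x‖₊ ∂μ ≤ ENNReal.ofReal (η * (1 / 2) ^ n) := by
      intro n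
      refine (ofReal_integral_norm_eq_lintegral_enorm (hsub n)).symm.trans_le ?_
      exact ENNReal.ofReal_le_ofReal (hSapprox n)
    have hsumgeo : Summable fun n : ℕ => η * (1 / 2 : ℝ) ^ n :=
      (summable_geometric_two).mul_left η
    have hfin : ∫⁻ x, ∑' n, (‖f x - S n x‖₊ : ENNReal) ∂μ ≠ ⊤ := by
      rw [lintegral_tsum hmeas]
      have hcalc : ∑' n, ∫⁻ x, ‖f x - S n x‖₊ ∂μ
          ≤ ENNReal.ofReal (∑' n, η * (1 / 2 : ℝ) ^ n) := by
        calc ∑' n, ∫⁻ x, ‖f x - S n x‖₊ ∂μ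
            ≤ ∑' n, ENNReal.ofReal (η * (1 / 2) ^ n) := ENNReal.tsum_le_tsum hlint
          _ = ENNReal.ofReal (∑' n, η * (1 / 2 : ℝ) ^ n) :=
              (ENNReal.ofReal_tsum_of_nonneg
                (fun n => mul_nonneg hη0.le (pow_nonneg (by norm_num) n)) hsumgeo).symm
      exact ne_top_of_le_ne_top ENNReal.ofReal_ne_top hcalc
    filter_upwards [ae_lt_top' (AEMeasurable.ennreal_tsum hmeas) hfin] with x hx
    have hsumm : Summable fun n => (‖f x - S n x‖₊ : NNReal) :=
      ENNReal.tsum_coe_ne_top_iff_summable.1 hx.ne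
    have hsumm' : Summable fun n => ‖f x - S n x‖ := by
      simpa [coe_nnnorm] using NNReal.summable_coe.2 hsumm
    have htend : Filter.Tendsto (fun n => ‖f x - S n x‖) Filter.atTop (nhds 0) :=
      hsumm'.tendsto_atTop_zero
    have hrev : (fun n => ‖S n x - f x‖) = fun n => ‖f x - S n x‖ :=
      funext fun n => norm_sub_rev _ _
    rw [tendsto_iff_norm_sub_tendsto_zero, hrev]
    exact htend
  -- the dominating function
  set G : X → D := fun x => ∑' n, g n x with hGdef
  have tsum_nonneg' : ∀ u : ℕ → D, (∀ n, 0 ≤ u n) → 0 ≤ ∑' n, u n := by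
    intro u hu
    by_cases hs : Summable u
    · refine hclosed.mem_of_tendsto hs.hasSum (Filter.Eventually.of_forall fun s => ?_)
      exact Finset.sum_induction u (fun y => 0 ≤ y) (fun a b ha hb => add_nonneg ha hb)
        le_rfl (fun i _ => hu i)
    · rw [tsum_eq_zero_of_not_summable hs]
  have hGnn : ∀ x, 0 ≤ G x := fun x => tsum_nonneg' _ fun n => hgnn n x
  have hGmeas' : AEStronglyMeasurable G μ := by
    refine aestronglyMeasurable_of_tendsto_ae (f := fun N x => ∑ n ∈ Finset.range N, g n x)
      Filter.atTop (fun N => (Finset.range N).aestronglyMeasurable_fun_sum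
        fun n _ => (g n).aestronglyMeasurable) ?_
    filter_upwards [hae_sum] with x hx
    exact hx.hasSum.tendsto_sum_nat
  have hGbound : ∀ᵐ x ∂μ, (‖G x‖₊ : ENNReal) ≤ ∑' n, (‖g n x‖₊ : ENNReal) := by
    filter_upwards [hae_normsum] with x hx
    have h1 : ‖G x‖ ≤ ∑' n, ‖g n x‖ := norm_tsum_le_tsum_norm hx
    calc (‖G x‖₊ : ENNReal) = ENNReal.ofReal ‖G x‖ := (ofReal_norm _).symm
      _ ≤ ENNReal.ofReal (∑' n, ‖g n x‖) := ENNReal.ofReal_le_ofReal h1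
      _ = ∑' n, ENNReal.ofReal ‖g n x‖ :=
          ENNReal.ofReal_tsum_of_nonneg (fun n => norm_nonneg _) hx
      _ = ∑' n, (‖g n x‖₊ : ENNReal) := by
          exact tsum_congr fun n => ofReal_norm _
  have hGlint : ∫⁻ x, ‖G x‖₊ ∂μ ≤ ENNReal.ofReal (∑' n, T n) := by
    calc ∫⁻ x, ‖G x‖₊ ∂μ ≤ ∫⁻ x, ∑' n, (‖g n x‖₊ : ENNReal) ∂μ := lintegral_mono_ae hGbound
      _ = ∑' n, ∫⁻ x, ‖g n x‖₊ ∂μ := lintegral_tsum hGmeas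
      _ = ENNReal.ofReal (∑' n, T n) := by
          simp_rw [hTlint]
          exact (ENNReal.ofReal_tsum_of_nonneg hTnonneg hTsum).symm
  have hGint : Integrable G μ := by
    refine ⟨hGmeas', ?_⟩
    show ∫⁻ x, ‖G x‖₊ ∂μ < ⊤
    exact lt_of_le_of_lt hGlint ENNReal.ofReal_lt_top
  -- a.e. domination of f by G
  have hneg : ∀ {a b : D}, a ≤ b → -b ≤ -a := by
    intro a b hab
    have h0 := add_le_add_right hab (-a - b)
    have h1 : (-a - b) + a = -b := by abel
    have h2 : (-a - b) + b = -a := by abel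
    rwa [h1, h2] at h0
  have hdomae : ∀ᵐ x ∂μ, -G x ≤ f x ∧ f x ≤ G x := by
    filter_upwards [hae_sum, hSconv] with x hx hconv
    have hpart : ∀ n, -(∑ i ∈ Finset.range (n + 1), g i x) ≤ S n x ∧
        S n x ≤ ∑ i ∈ Finset.range (n + 1), g i x := by
      intro n
      induction n with
      | zero =>
        have e : S 0 x = h 0 x := by rw [h_zero]
        rw [Finset.sum_range_one, e]
        exact ⟨by simpa [hgapp] using hA1 (h 0 x), by simpa [hgapp] using hA2 (h 0 x)⟩
      | succ k ih =>
        have e : S (k + 1) x = S k x + h (k + 1) x := by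
          rw [h_succ]; simp
        constructor
        · rw [Finset.sum_range_succ, e, neg_add]
          exact add_le_add ih.1 (by simpa [hgapp] using hA1 (h (k + 1) x))
        · rw [Finset.sum_range_succ, e]
          exact add_le_add ih.2 (by simpa [hgapp] using hA2 (h (k + 1) x))
    have hle : ∀ n, ∑ i ∈ Finset.range n, g i x ≤ G x := by
      intro n
      have htail : 0 ≤ ∑' i, g (i + n) x := tsum_nonneg' _ fun i => hgnn _ x
      have heq := Summable.sum_add_tsum_nat_add (f := fun i => g i x) n hx
      calc ∑ i ∈ Finset.range n, g i x
          ≤ (∑ i ∈ Finset.range n, g i x) + ∑' i, g (i + n) x :=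
            le_add_of_nonneg_right htail
        _ = G x := heq
    have hclosed_le : IsClosed {y : D | y ≤ G x} := by
      have e : {y : D | y ≤ G x} = (fun y => G x - y) ⁻¹' {z : D | 0 ≤ z} := by
        ext y; simp [sub_nonneg]
      rw [e]; exact hclosed.preimage (continuous_const.sub continuous_id)
    have hclosed_ge : IsClosed {y : D | -G x ≤ y} := by
      have e : {y : D | -G x ≤ y} = (fun y => y + G x) ⁻¹' {z : D | 0 ≤ z} := by
        ext y; constructor
        · intro hy
          have := add_le_add_left (α := D) hy (G x)
          simpa using this
        · intro hy
          have := add_le_add_right (α := D) hy (-G x)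
          simpa using this
      rw [e]; exact hclosed.preimage (continuous_id.add continuous_const)
    constructor
    · refine hclosed_ge.mem_of_tendsto hconv (Filter.Eventually.of_forall fun n => ?_)
      exact le_trans (hneg (hle (n + 1))) (hpart n).1
    · refine hclosed_le.mem_of_tendsto hconv (Filter.Eventually.of_forall fun n => ?_)
      exact le_trans (hpart n).2 (hle (n + 1))
  -- final estimate
  have hnormint : ∫ x, ‖G x‖ ∂μ ≤ ∑' n, T n := by
    rw [integral_norm_eq_lintegral_enorm hGmeas']
    exact ENNReal.toReal_le_of_le_ofReal (tsum_nonneg hTnonneg) hGlint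
  refine ⟨G, hGint, hGnn, hdomae, ?_⟩
  calc ∫ x, ‖G x‖ ∂μ ≤ ∑' n, T n := hnormint
    _ ≤ (C + δ) * (I + 5 * η) := hTtsum
    _ ≤ C * (I + ε) := hfinal_const
end

section
/- Let D be a real Banach space equipped with a partial order making it an ordered vector space. Suppose that for every sequence x : ℕ → D with ∑ₙ ‖xₙ‖ < ∞ there exists a sequence a : ℕ → D⁺ with −aₙ ≤ xₙ ≤ aₙ for all n and ∑ₙ ‖aₙ‖ < ∞ (i.e., the Bochner integrable functions ℕ → D with respect to counting measure form a directed ordered vector space). Then D⁺ is generating (D = D⁺ − D⁺) and the norm of D is absolutely dominating: there exists C > 0 with C·‖x‖ ≥ inf { ‖a‖ : a ∈ D⁺, −a ≤ x ≤ a } for all x ∈ D. -/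
/-- If the Bochner integrable functions `ℕ → D` (w.r.t. counting measure) form a directed
ordered vector space, then the cone of `D` is generating and the norm of `D` is
absolutely dominating. -/
theorem directed_summable_functions_implies_absolutely_dominating
    {D : Type*} [NormedAddCommGroup D] [NormedSpace ℝ D] [CompleteSpace D]
    [PartialOrder D] [CovariantClass D D (· + ·) (· ≤ ·)]
    (hsmul : ∀ (c : ℝ) (x : D), 0 ≤ c → 0 ≤ x → 0 ≤ c • x)
    (hdir : ∀ x : ℕ → D, (Summable fun n => ‖x n‖) →
      ∃ a : ℕ → D, (∀ n, 0 ≤ a n ∧ -a n ≤ x n ∧ x n ≤ a n) ∧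
        Summable fun n => ‖a n‖) :
    (∀ x : D, ∃ y z : D, 0 ≤ y ∧ 0 ≤ z ∧ x = y - z) ∧
    ∃ C : ℝ, 0 < C ∧ ∀ x : D,
      sInf {r : ℝ | ∃ a : D, 0 ≤ a ∧ -a ≤ x ∧ x ≤ a ∧ r = ‖a‖} ≤ C * ‖x‖ := by
  have hbdd : ∀ x : D, BddBelow {r : ℝ | ∃ a : D, 0 ≤ a ∧ -a ≤ x ∧ x ≤ a ∧ r = ‖a‖} := by
    intro x
    refine ⟨0, fun r hr => ?_⟩
    obtain ⟨a, _, _, _, rfl⟩ := hr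
    exact norm_nonneg a
  constructor
  · intro x
    obtain ⟨a, ha, -⟩ := hdir (fun n => if n = 0 then x else 0) (by
      apply summable_of_ne_finset_zero (s := ({0} : Finset ℕ))
      intro n hn
      simp only [Finset.mem_singleton] at hn
      simp [hn])
    obtain ⟨h0, h1, h2⟩ := ha 0
    simp only [if_pos rfl] at h1 h2
    refine ⟨a 0, a 0 - x, h0, ?_, by abel⟩
    have := add_le_add_left h2 (a 0 - x - x)
    simpa [sub_add_cancel] using sub_nonneg.mpr h2
  · by_contra h
    push_neg at h
    choose x hx using fun n : ℕ => h ((4:ℝ)^n) (by positivity)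
    have hxne : ∀ n, x n ≠ 0 := by
      intro n hn
      have h0 : sInf {r : ℝ | ∃ a : D, 0 ≤ a ∧ -a ≤ x n ∧ x n ≤ a ∧ r = ‖a‖} ≤ 0 := by
        apply csInf_le (hbdd _)
        exact ⟨0, le_refl _, by simp [hn], by simp [hn], by simp⟩
      have h1 := hx n
      have h2 : (4:ℝ)^n * ‖x n‖ = 0 := by rw [hn]; simp
      linarith
    set c : ℕ → ℝ := fun n => (2:ℝ)^n * ‖x n‖ with hc
    have hcpos : ∀ n, 0 < c n := fun n => by
      have := norm_pos_iff.mpr (hxne n); positivity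
    set y : ℕ → D := fun n => (c n)⁻¹ • x n with hy
    have hynorm : ∀ n, ‖y n‖ = ((2:ℝ)⁻¹)^n := by
      intro n
      have hxpos : (0:ℝ) < ‖x n‖ := norm_pos_iff.mpr (hxne n)
      have h1 : ‖y n‖ = (c n)⁻¹ * ‖x n‖ := by
        rw [hy]
        simp only [norm_smul, Real.norm_eq_abs, abs_of_pos (inv_pos.mpr (hcpos n))]
      rw [h1, hc]
      simp only []
      rw [mul_inv, mul_assoc, inv_mul_cancel₀ hxpos.ne', mul_one, ← inv_pow]
    obtain ⟨a, ha, hasum⟩ := hdir y (by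
      simp only [hynorm]
      exact summable_geometric_of_lt_one (by norm_num) (by norm_num))
    set M : ℝ := ∑' n, ‖a n‖ with hM
    have hMle : ∀ n, ‖a n‖ ≤ M := fun n =>
      hasum.le_tsum n (fun j _ => norm_nonneg _)
    have key : ∀ n, sInf {r : ℝ | ∃ b : D, 0 ≤ b ∧ -b ≤ x n ∧ x n ≤ b ∧ r = ‖b‖}
        ≤ c n * M := by
      intro n
      obtain ⟨ha0, ha1, ha2⟩ := ha n
      have hcyx : c n • y n = x n := by
        rw [hy]; exact smul_inv_smul₀ (hcpos n).ne' _
      have hb0 : (0:D) ≤ c n • a n := hsmul _ _ (hcpos n).le ha0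
      have hb1 : -(c n • a n) ≤ x n := by
        have h1 : (0:D) ≤ a n + y n := by
          have := add_le_add_left ha1 (a n)
          rw [add_comm]; simpa using this
        have h2 : (0:D) ≤ c n • (a n + y n) := hsmul _ _ (hcpos n).le h1
        rw [smul_add, hcyx] at h2
        have := add_le_add_left h2 (-(c n • a n))
        simpa [neg_add_cancel_left] using this
      have hb2 : x n ≤ c n • a n := by
        have h1 : (0:D) ≤ a n - y n := by
          have := add_le_add_left ha2 (a n - y n - y n)
          simpa using sub_nonneg.mpr ha2
        have h2 : (0:D) ≤ c n • (a n - y n) := hsmul _ _ (hcpos n).le h1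
        rw [smul_sub, hcyx] at h2
        have := add_le_add_left h2 (x n)
        simpa using this
      have hmem : ‖c n • a n‖ ∈ {r : ℝ | ∃ b : D, 0 ≤ b ∧ -b ≤ x n ∧ x n ≤ b ∧ r = ‖b‖} :=
        ⟨c n • a n, hb0, hb1, hb2, rfl⟩
      calc sInf {r : ℝ | ∃ b : D, 0 ≤ b ∧ -b ≤ x n ∧ x n ≤ b ∧ r = ‖b‖}
          ≤ ‖c n • a n‖ := csInf_le (hbdd _) hmem
        _ = c n * ‖a n‖ := by
            rw [norm_smul, Real.norm_eq_abs, abs_of_pos (hcpos n)]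
        _ ≤ c n * M := by
            exact mul_le_mul_of_nonneg_left (hMle n) (hcpos n).le
    have hlt : ∀ n, (2:ℝ)^n < M := by
      intro n
      have h1 := lt_of_lt_of_le (hx n) (key n)
      rw [hc] at h1
      have hxpos : (0:ℝ) < ‖x n‖ := norm_pos_iff.mpr (hxne n)
      have h4 : (4:ℝ)^n = (2:ℝ)^n * (2:ℝ)^n := by
        rw [← mul_pow]; norm_num
      rw [h4] at h1
      have h1' : (2:ℝ)^n * (2:ℝ)^n * ‖x n‖ < (2:ℝ)^n * ‖x n‖ * M := by simpa using h1
      have h2pos : (0:ℝ) < (2:ℝ)^n := by positivity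
      nlinarith [mul_pos h2pos hxpos]
    obtain ⟨n, hn⟩ := pow_unbounded_of_one_lt M (by norm_num : (1:ℝ) < 2)
    exact absurd (hlt n) (not_lt.mpr hn.le)
end

section
/- Let D be a real vector space equipped with a partial order making it a directed ordered vector space (D = D⁺ − D⁺). Suppose ‖·‖₁ and ‖·‖₂ are two norms on D, each making D a Banach space in which the positive cone D⁺ = {x : 0 ≤ x} is closed. Then ‖·‖₁ and ‖·‖₂ are equivalent norms. -/
open Filter

/-- `N` is a norm on the real vector space `D` making `D` a Banach space
(completeness phrased via convergence of absolutely summable series) in which the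
positive cone is (sequentially, equivalently topologically) closed. -/
structure IsCompleteNormWithClosedCone (D : Type*) [AddCommGroup D] [Module ℝ D]
    [PartialOrder D] (N : D → ℝ) : Prop where
  nonneg : ∀ x, 0 ≤ N x
  eq_zero_iff : ∀ x, N x = 0 ↔ x = 0
  smul_eq : ∀ (c : ℝ) (x : D), N (c • x) = |c| * N x
  triangle : ∀ x y, N (x + y) ≤ N x + N y
  complete : ∀ u : ℕ → D, (Summable fun n => N (u n)) →
    ∃ s : D, Tendsto (fun n => N (s - ∑ i ∈ Finset.range n, u i)) atTop (nhds 0)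
  coneClosed : ∀ (x : ℕ → D) (l : D), (∀ n, 0 ≤ x n) →
    Tendsto (fun n => N (x n - l)) atTop (nhds 0) → 0 ≤ l

namespace CNCCaux

open Finset

variable {D : Type*} [AddCommGroup D] [Module ℝ D] [PartialOrder D]
variable {N N₁ N₂ : D → ℝ}

theorem normN_zero (h : IsCompleteNormWithClosedCone D N) : N 0 = 0 :=
  (h.eq_zero_iff 0).mpr rfl

theorem normN_neg (h : IsCompleteNormWithClosedCone D N) (x : D) : N (-x) = N x := by
  have := h.smul_eq (-1) x
  simpa [neg_one_smul] using this

theorem normN_sub_rev (h : IsCompleteNormWithClosedCone D N) (x y : D) :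
    N (x - y) = N (y - x) := by
  rw [← normN_neg h (x - y), neg_sub]

theorem normN_sub_le (h : IsCompleteNormWithClosedCone D N) (x y : D) :
    N (x - y) ≤ N x + N y := by
  have := h.triangle x (-y)
  simpa [sub_eq_add_neg, normN_neg h] using this

theorem myAdd_nonneg [CovariantClass D D (· + ·) (· ≤ ·)] {a b : D}
    (ha : 0 ≤ a) (hb : 0 ≤ b) : 0 ≤ a + b :=
  ha.trans (by simpa using add_le_add_left hb a)

theorem mySum_nonneg [CovariantClass D D (· + ·) (· ≤ ·)] {s : Finset ℕ} {f : ℕ → D}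
    (hf : ∀ i, 0 ≤ f i) : 0 ≤ ∑ i ∈ s, f i := by
  classical
  induction s using Finset.induction with
  | empty => simp
  | insert _ _ hx ih =>
    rw [Finset.sum_insert hx]
    exact myAdd_nonneg (hf _) ih

theorem normN_sum_le (h : IsCompleteNormWithClosedCone D N) (f : ℕ → D) (s : Finset ℕ) :
    N (∑ i ∈ s, f i) ≤ ∑ i ∈ s, N (f i) := by
  classical
  induction s using Finset.induction with
  | empty => simp [normN_zero h]
  | insert _ _ hx ih =>
    rw [Finset.sum_insert hx, Finset.sum_insert hx]
    exact (h.triangle _ _).trans (add_le_add_right ih _)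

/-- The set of values `N u + N v` over decompositions `x = u - v` with `u, v ≥ 0`. -/
def regSet (N : D → ℝ) (x : D) : Set ℝ :=
  {r | ∃ u v : D, 0 ≤ u ∧ 0 ≤ v ∧ x = u - v ∧ r = N u + N v}

/-- The regular norm associated to `N`. -/
noncomputable def regNorm (N : D → ℝ) (x : D) : ℝ := sInf (regSet N x)

theorem le_of_mem_regSet (h : IsCompleteNormWithClosedCone D N) {x : D} {r : ℝ}
    (hr : r ∈ regSet N x) : N x ≤ r := by
  obtain ⟨u, v, -, -, rfl, rfl⟩ := hr
  exact normN_sub_le h u v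

theorem regSet_nonempty (hgen : ∀ x : D, ∃ y z : D, 0 ≤ y ∧ 0 ≤ z ∧ x = y - z) (x : D) :
    (regSet N x).Nonempty := by
  obtain ⟨u, v, hu, hv, hx⟩ := hgen x
  exact ⟨N u + N v, u, v, hu, hv, hx, rfl⟩

theorem regSet_bddBelow (h : IsCompleteNormWithClosedCone D N) (x : D) :
    BddBelow (regSet N x) :=
  ⟨N x, fun _ hr => le_of_mem_regSet h hr⟩

theorem normN_le_regNorm (h : IsCompleteNormWithClosedCone D N)
    (hgen : ∀ x : D, ∃ y z : D, 0 ≤ y ∧ 0 ≤ z ∧ x = y - z) (x : D) :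
    N x ≤ regNorm N x :=
  le_csInf (regSet_nonempty hgen x) (fun _ hr => le_of_mem_regSet h hr)

theorem regNorm_le (h : IsCompleteNormWithClosedCone D N) {x : D} {r : ℝ}
    (hr : r ∈ regSet N x) : regNorm N x ≤ r :=
  csInf_le (regSet_bddBelow h x) hr

theorem exists_decomp (h : IsCompleteNormWithClosedCone D N)
    (hgen : ∀ x : D, ∃ y z : D, 0 ≤ y ∧ 0 ≤ z ∧ x = y - z) (x : D) {ε : ℝ} (hε : 0 < ε) :
    ∃ u v : D, 0 ≤ u ∧ 0 ≤ v ∧ x = u - v ∧ N u + N v < regNorm N x + ε := by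
  obtain ⟨r, hr, hrlt⟩ :=
    exists_lt_of_csInf_lt (regSet_nonempty hgen x) (lt_add_of_pos_right (regNorm N x) hε)
  obtain ⟨u, v, hu, hv, hx, rfl⟩ := hr
  exact ⟨u, v, hu, hv, hx, hrlt⟩

theorem regNorm_zero (h : IsCompleteNormWithClosedCone D N) : regNorm N 0 = 0 := by
  have h1 : regNorm N 0 ≤ 0 := by
    have : (0 : ℝ) ∈ regSet N 0 :=
      ⟨0, 0, le_refl 0, le_refl 0, by simp, by simp [normN_zero h]⟩
    simpa using regNorm_le h this
  have h2 : 0 ≤ regNorm N 0 := by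
    refine le_csInf ⟨0, 0, 0, le_refl 0, le_refl 0, by simp, by simp [normN_zero h]⟩
      fun r hr => (h.nonneg 0).trans (le_of_mem_regSet h hr)
  exact le_antisymm h1 h2

theorem regNorm_add_le [CovariantClass D D (· + ·) (· ≤ ·)]
    (h : IsCompleteNormWithClosedCone D N)
    (hgen : ∀ x : D, ∃ y z : D, 0 ≤ y ∧ 0 ≤ z ∧ x = y - z) (x y : D) :
    regNorm N (x + y) ≤ regNorm N x + regNorm N y := by
  refine le_of_forall_pos_le_add fun ε hε => ?_
  obtain ⟨u, v, hu, hv, hx, hxe⟩ := exists_decomp h hgen x (half_pos hε)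
  obtain ⟨u', v', hu', hv', hy, hye⟩ := exists_decomp h hgen y (half_pos hε)
  have hmem : N (u + u') + N (v + v') ∈ regSet N (x + y) := by
    refine ⟨u + u', v + v', myAdd_nonneg hu hu', myAdd_nonneg hv hv', ?_, rfl⟩
    rw [hx, hy]; abel
  have := regNorm_le h hmem
  have h1 := h.triangle u u'
  have h2 := h.triangle v v'
  linarith

theorem regNorm_smul_le (h : IsCompleteNormWithClosedCone D N)
    (hsmul : ∀ (c : ℝ) (x : D), 0 ≤ c → 0 ≤ x → 0 ≤ c • x)
    (hgen : ∀ x : D, ∃ y z : D, 0 ≤ y ∧ 0 ≤ z ∧ x = y - z) (c : ℝ) (x : D) :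
    regNorm N (c • x) ≤ |c| * regNorm N x := by
  rcases eq_or_ne c 0 with rfl | hc
  · simp [regNorm_zero h]
  have habs : 0 < |c| := abs_pos.mpr hc
  have key : ∀ r ∈ regSet N x, regNorm N (c • x) ≤ |c| * r := by
    rintro r ⟨u, v, hu, hv, rfl, rfl⟩
    rcases le_or_gt 0 c with hc0 | hc0
    · have hmem : N (c • u) + N (c • v) ∈ regSet N (c • (u - v)) := by
        refine ⟨c • u, c • v, hsmul c u hc0 hu, hsmul c v hc0 hv, by rw [smul_sub], rfl⟩
      have := regNorm_le h hmem
      rw [h.smul_eq, h.smul_eq] at this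
      linarith [this]
    · have hc0' : 0 ≤ -c := by linarith
      have hmem : N ((-c) • v) + N ((-c) • u) ∈ regSet N (c • (u - v)) := by
        refine ⟨(-c) • v, (-c) • u, hsmul (-c) v hc0' hv, hsmul (-c) u hc0' hu, ?_, rfl⟩
        rw [smul_sub]
        module
      have := regNorm_le h hmem
      rw [h.smul_eq, h.smul_eq] at this
      have habs' : |(-c)| = |c| := abs_neg c
      rw [habs'] at this
      calc regNorm N (c • (u - v)) ≤ |c| * N v + |c| * N u := this
        _ = |c| * (N u + N v) := by ring
  have : regNorm N (c • x) / |c| ≤ regNorm N x := by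
    refine le_csInf (regSet_nonempty hgen x) fun r hr => ?_
    rw [div_le_iff₀ habs, mul_comm]
    exact key r hr
  calc regNorm N (c • x) = |c| * (regNorm N (c • x) / |c|) := by field_simp
    _ ≤ |c| * regNorm N x := by
        exact mul_le_mul_of_nonneg_left this habs.le

/-- Core lemma: if `z n → 0` in `N₁` and `z n → y` in `N₂`, and decompositions with
`N₁`-control exist (Andô's theorem), then `y ≤ 0`. -/
theorem limit_nonpos [CovariantClass D D (· + ·) (· ≤ ·)]
    (h₁ : IsCompleteNormWithClosedCone D N₁) (h₂ : IsCompleteNormWithClosedCone D N₂)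
    {α : ℝ} (hα : 0 < α)
    (hA : ∀ x : D, ∀ ε : ℝ, 0 < ε →
      ∃ u v : D, 0 ≤ u ∧ 0 ≤ v ∧ x = u - v ∧ N₁ u + N₁ v ≤ α * N₁ x + ε)
    (z : ℕ → D) (y : D)
    (hz1 : Tendsto (fun n => N₁ (z n)) atTop (nhds 0))
    (hz2 : Tendsto (fun n => N₂ (z n - y)) atTop (nhds 0)) :
    y ≤ 0 := by
  have hhalf : ∀ n : ℕ, (0:ℝ) < (1/2) ^ n := fun n => by positivity
  -- extract a rapidly converging subsequence
  obtain ⟨φ, hφmono, hφ⟩ : ∃ φ : ℕ → ℕ, StrictMono φ ∧ ∀ n, N₁ (z (φ n)) < (1/2) ^ n :=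
    Filter.extraction_forall_of_eventually fun n => hz1.eventually_lt_const (hhalf n)
  -- controlled decompositions
  choose p q hp hq hpq hbound using fun n => hA (z (φ n)) ((1/2) ^ n) (hhalf n)
  have hB : ∀ n, N₁ (p n) + N₁ (q n) ≤ (α + 1) * (1/2) ^ n := fun n => by
    have h1 := hbound n
    have h2 := (hφ n).le
    nlinarith [h1, h2, (hhalf n).le]
  have hp1 : ∀ n, N₁ (p n) ≤ (α + 1) * (1/2) ^ n := fun n => by
    have := h₁.nonneg (q n); linarith [hB n]
  have hpsum : Summable fun n => N₁ (p n) :=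
    Summable.of_nonneg_of_le (fun n => h₁.nonneg _) hp1
      (summable_geometric_two.mul_left (α + 1))
  -- construct the dominating sequence w m
  have hw : ∀ m : ℕ, ∃ w : D, 0 ≤ w ∧ (∀ n : ℕ, 0 ≤ w - z (φ (n + m))) ∧
      N₁ w ≤ (α + 1) * (1/2) ^ m * 2 := by
    intro m
    have hsm : Summable fun k => N₁ (p (k + m)) := (summable_nat_add_iff m).mpr hpsum
    obtain ⟨w, hwt⟩ := h₁.complete (fun k => p (k + m)) hsm
    have hwt' : Tendsto (fun M => N₁ ((∑ i ∈ Finset.range M, p (i + m)) - w)) atTop (nhds 0) := by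
      have : (fun M => N₁ ((∑ i ∈ Finset.range M, p (i + m)) - w)) =
          fun M => N₁ (w - ∑ i ∈ Finset.range M, p (i + m)) :=
        funext fun M => normN_sub_rev h₁ _ _
      rw [this]; exact hwt
    refine ⟨w, ?_, ?_, ?_⟩
    · -- w ≥ 0
      exact h₁.coneClosed (fun M => ∑ i ∈ Finset.range M, p (i + m)) w
        (fun M => mySum_nonneg fun i => hp _) hwt'
    · -- w dominates the tail of the subsequence
      intro n
      set l := w - z (φ (n + m)) with hl
      have hzd : z (φ (n + m)) = p (n + m) - q (n + m) := hpq (n + m)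
      refine h₁.coneClosed (fun M =>
          (∑ i ∈ Finset.range (M + (n + 1)), p (i + m)) - p (n + m) + q (n + m)) l ?_ ?_
      · intro M
        show 0 ≤ (∑ i ∈ Finset.range (M + (n + 1)), p (i + m)) - p (n + m) + q (n + m)
        have hmem : n ∈ Finset.range (M + (n + 1)) := by
          simp only [Finset.mem_range]; omega
        have hsplit : (∑ i ∈ Finset.range (M + (n + 1)), p (i + m)) - p (n + m) =
            ∑ i ∈ (Finset.range (M + (n + 1))).erase n, p (i + m) := by
          rw [← Finset.sum_erase_add (Finset.range (M + (n + 1))) (fun i => p (i + m)) hmem]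
          abel
        rw [hsplit]
        exact myAdd_nonneg (mySum_nonneg fun i => hp _) (hq _)
      · have heq : ∀ M : ℕ,
            ((∑ i ∈ Finset.range (M + (n + 1)), p (i + m)) - p (n + m) + q (n + m)) - l =
            (∑ i ∈ Finset.range (M + (n + 1)), p (i + m)) - w := by
          intro M
          rw [hl, hzd]
          abel
        have : (fun M => N₁ ((((∑ i ∈ Finset.range (M + (n + 1)), p (i + m)) - p (n + m)
            + q (n + m))) - l)) =
            fun M => N₁ ((∑ i ∈ Finset.range (M + (n + 1)), p (i + m)) - w) :=
          funext fun M => by rw [heq M]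
        rw [this]
        exact hwt'.comp (tendsto_add_atTop_nat (n + 1))
    · -- norm bound on w
      have hub : ∀ M : ℕ, N₁ w ≤ N₁ (w - ∑ i ∈ Finset.range M, p (i + m)) +
          (α + 1) * (1/2) ^ m * 2 := by
        intro M
        have e1 : w = (w - ∑ i ∈ Finset.range M, p (i + m)) + ∑ i ∈ Finset.range M, p (i + m) := by
          abel
        have t1 : N₁ w ≤ N₁ (w - ∑ i ∈ Finset.range M, p (i + m)) +
            N₁ (∑ i ∈ Finset.range M, p (i + m)) := by
          conv_lhs => rw [e1]
          exact h₁.triangle _ _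
        have t2 : N₁ (∑ i ∈ Finset.range M, p (i + m)) ≤ (α + 1) * (1/2) ^ m * 2 := by
          calc N₁ (∑ i ∈ Finset.range M, p (i + m)) ≤ ∑ i ∈ Finset.range M, N₁ (p (i + m)) :=
                normN_sum_le h₁ _ _
            _ ≤ ∑ i ∈ Finset.range M, (α + 1) * (1/2) ^ (i + m) :=
                Finset.sum_le_sum fun i _ => hp1 (i + m)
            _ = (α + 1) * (1/2) ^ m * ∑ i ∈ Finset.range M, (1/2) ^ i := by
                rw [Finset.mul_sum]
                refine Finset.sum_congr rfl fun i _ => ?_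
                rw [pow_add]; ring
            _ ≤ (α + 1) * (1/2) ^ m * 2 := by
                have := sum_geometric_two_le M
                have hpos : (0:ℝ) ≤ (α + 1) * (1/2) ^ m := by positivity
                nlinarith
        linarith
      have hlim : Tendsto (fun M => N₁ (w - ∑ i ∈ Finset.range M, p (i + m)) +
          (α + 1) * (1/2) ^ m * 2) atTop (nhds (0 + (α + 1) * (1/2) ^ m * 2)) :=
        hwt.add tendsto_const_nhds
      have := ge_of_tendsto' hlim hub
      linarith
  choose w hw0 hwz hwb using hw
  -- each w m - y is nonnegative (using the N₂-closed cone)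
  have hwy : ∀ m, 0 ≤ w m - y := by
    intro m
    refine h₂.coneClosed (fun n => w m - z (φ (n + m))) (w m - y) (fun n => hwz m n) ?_
    have heq : ∀ n : ℕ, (w m - z (φ (n + m))) - (w m - y) = -(z (φ (n + m)) - y) := by
      intro n; abel
    have : (fun n => N₂ ((w m - z (φ (n + m))) - (w m - y))) =
        fun n => N₂ (z (φ (n + m)) - y) :=
      funext fun n => by rw [heq n, normN_neg h₂]
    rw [this]
    exact hz2.comp ((hφmono.tendsto_atTop).comp (tendsto_add_atTop_nat m))
  -- conclude via the N₁-closed cone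
  have hfin : Tendsto (fun m => N₁ ((w m - y) - (-y))) atTop (nhds 0) := by
    have heq : (fun m => N₁ ((w m - y) - (-y))) = fun m => N₁ (w m) :=
      funext fun m => by rw [show (w m - y) - (-y) = w m by abel]
    rw [heq]
    refine squeeze_zero (fun m => h₁.nonneg _) hwb ?_
    have : Tendsto (fun m : ℕ => (1/2 : ℝ) ^ m) atTop (nhds 0) :=
      tendsto_pow_atTop_nhds_zero_of_lt_one (by norm_num) (by norm_num)
    have := (this.const_mul (α + 1)).mul_const 2
    simpa using this
  have := h₁.coneClosed (fun m => w m - y) (-y) hwy hfin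
  exact neg_nonneg.mp this

theorem regNorm_neg (h : IsCompleteNormWithClosedCone D N)
    (hsmul : ∀ (c : ℝ) (x : D), 0 ≤ c → 0 ≤ x → 0 ≤ c • x)
    (hgen : ∀ x : D, ∃ y z : D, 0 ≤ y ∧ 0 ≤ z ∧ x = y - z) (x : D) :
    regNorm N (-x) = regNorm N x := by
  have h1 := regNorm_smul_le h hsmul hgen (-1) x
  have h2 := regNorm_smul_le h hsmul hgen (-1) (-x)
  simp only [neg_one_smul, abs_neg, abs_one, one_mul, neg_neg] at h1 h2
  exact le_antisymm h1 h2

theorem regNorm_sub_rev (h : IsCompleteNormWithClosedCone D N)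
    (hsmul : ∀ (c : ℝ) (x : D), 0 ≤ c → 0 ≤ x → 0 ≤ c • x)
    (hgen : ∀ x : D, ∃ y z : D, 0 ≤ y ∧ 0 ≤ z ∧ x = y - z) (x y : D) :
    regNorm N (x - y) = regNorm N (y - x) := by
  rw [← regNorm_neg h hsmul hgen (x - y), neg_sub]

/-- Completeness of the regular norm, phrased like the `complete` field. -/
theorem reg_complete [CovariantClass D D (· + ·) (· ≤ ·)]
    (h₁ : IsCompleteNormWithClosedCone D N₁)
    (hgen : ∀ x : D, ∃ y z : D, 0 ≤ y ∧ 0 ≤ z ∧ x = y - z)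
    (u : ℕ → D) (hu : Summable fun n => regNorm N₁ (u n)) :
    ∃ s : D, Tendsto (fun n => regNorm N₁ (s - ∑ i ∈ Finset.range n, u i)) atTop (nhds 0) := by
  have hhalf : ∀ n : ℕ, (0:ℝ) < (1/2) ^ n := fun n => by positivity
  choose p q hp hq hpq hb using fun n => exists_decomp h₁ hgen (u n) (hhalf n)
  have hple : ∀ n, N₁ (p n) ≤ regNorm N₁ (u n) + (1/2) ^ n := fun n => by
    have := h₁.nonneg (q n); linarith [hb n]
  have hqle : ∀ n, N₁ (q n) ≤ regNorm N₁ (u n) + (1/2) ^ n := fun n => by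
    have := h₁.nonneg (p n); linarith [hb n]
  have hpsum : Summable fun n => N₁ (p n) :=
    Summable.of_nonneg_of_le (fun n => h₁.nonneg _) hple (hu.add summable_geometric_two)
  have hqsum : Summable fun n => N₁ (q n) :=
    Summable.of_nonneg_of_le (fun n => h₁.nonneg _) hqle (hu.add summable_geometric_two)
  obtain ⟨P, hP⟩ := h₁.complete p hpsum
  obtain ⟨Q, hQ⟩ := h₁.complete q hqsum
  refine ⟨P - Q, ?_⟩
  -- key tail estimates
  have main : ∀ (v : ℕ → D) (hv : ∀ n, 0 ≤ v n) (hvsum : Summable fun n => N₁ (v n))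
      (V : D) (hV : Tendsto (fun n => N₁ (V - ∑ i ∈ Finset.range n, v i)) atTop (nhds 0))
      (n : ℕ), 0 ≤ V - ∑ i ∈ Finset.range n, v i ∧
        N₁ (V - ∑ i ∈ Finset.range n, v i) ≤ ∑' k, N₁ (v (k + n)) := by
    intro v hv hvsum V hV n
    set Vn := V - ∑ i ∈ Finset.range n, v i with hVn
    have hxeq : ∀ M : ℕ, (∑ i ∈ Finset.Ico n (M + n), v i) - Vn =
        (∑ i ∈ Finset.range (M + n), v i) - V := by
      intro M
      rw [hVn, Finset.sum_Ico_eq_sub _ (Nat.le_add_left n M)]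
      abel
    have htend : Tendsto (fun M => N₁ ((∑ i ∈ Finset.Ico n (M + n), v i) - Vn))
        atTop (nhds 0) := by
      have : (fun M => N₁ ((∑ i ∈ Finset.Ico n (M + n), v i) - Vn)) =
          fun M => N₁ (V - ∑ i ∈ Finset.range (M + n), v i) :=
        funext fun M => by rw [hxeq M, normN_sub_rev h₁]
      rw [this]
      exact hV.comp (tendsto_add_atTop_nat n)
    constructor
    · exact h₁.coneClosed (fun M => ∑ i ∈ Finset.Ico n (M + n), v i) Vn
        (fun M => mySum_nonneg fun i => hv _) htend
    · have hsum' : Summable fun k => N₁ (v (k + n)) := (summable_nat_add_iff n).mpr hvsum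
      have hub : ∀ M : ℕ, N₁ Vn ≤ N₁ (Vn - ∑ i ∈ Finset.Ico n (M + n), v i) +
          ∑' k, N₁ (v (k + n)) := by
        intro M
        have t1 : N₁ Vn ≤ N₁ (Vn - ∑ i ∈ Finset.Ico n (M + n), v i) +
            N₁ (∑ i ∈ Finset.Ico n (M + n), v i) := by
          have e1 : Vn = (Vn - ∑ i ∈ Finset.Ico n (M + n), v i) +
              ∑ i ∈ Finset.Ico n (M + n), v i := by abel
          conv_lhs => rw [e1]
          exact h₁.triangle _ _
        have t2 : N₁ (∑ i ∈ Finset.Ico n (M + n), v i) ≤ ∑' k, N₁ (v (k + n)) := by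
          calc N₁ (∑ i ∈ Finset.Ico n (M + n), v i)
              ≤ ∑ i ∈ Finset.Ico n (M + n), N₁ (v i) := normN_sum_le h₁ _ _
            _ = ∑ k ∈ Finset.range M, N₁ (v (k + n)) := by
                rw [Finset.sum_Ico_eq_sum_range]
                simp only [Nat.add_sub_cancel]
                exact Finset.sum_congr rfl fun k _ => by rw [add_comm]
            _ ≤ ∑' k, N₁ (v (k + n)) :=
                hsum'.sum_le_tsum (Finset.range M) (fun i _ => h₁.nonneg _)
        linarith
      have hlim : Tendsto (fun M => N₁ (Vn - ∑ i ∈ Finset.Ico n (M + n), v i) +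
          ∑' k, N₁ (v (k + n))) atTop (nhds (0 + ∑' k, N₁ (v (k + n)))) := by
        refine Tendsto.add ?_ tendsto_const_nhds
        have : (fun M => N₁ (Vn - ∑ i ∈ Finset.Ico n (M + n), v i)) =
            fun M => N₁ ((∑ i ∈ Finset.Ico n (M + n), v i) - Vn) :=
          funext fun M => normN_sub_rev h₁ _ _
        rw [this]
        exact htend
      have := ge_of_tendsto' hlim hub
      linarith
  have hPn := fun n => main p hp hpsum P hP n
  have hQn := fun n => main q hq hqsum Q hQ n
  have hbound : ∀ n : ℕ, regNorm N₁ ((P - Q) - ∑ i ∈ Finset.range n, u i) ≤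
      (∑' k, N₁ (p (k + n))) + ∑' k, N₁ (q (k + n)) := by
    intro n
    have hdecomp : (P - Q) - ∑ i ∈ Finset.range n, u i =
        (P - ∑ i ∈ Finset.range n, p i) - (Q - ∑ i ∈ Finset.range n, q i) := by
      have : ∑ i ∈ Finset.range n, u i =
          (∑ i ∈ Finset.range n, p i) - ∑ i ∈ Finset.range n, q i := by
        rw [← Finset.sum_sub_distrib]
        exact Finset.sum_congr rfl fun i _ => hpq i
      rw [this]; abel
    have hmem : N₁ (P - ∑ i ∈ Finset.range n, p i) + N₁ (Q - ∑ i ∈ Finset.range n, q i) ∈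
        regSet N₁ ((P - Q) - ∑ i ∈ Finset.range n, u i) :=
      ⟨P - ∑ i ∈ Finset.range n, p i, Q - ∑ i ∈ Finset.range n, q i,
        (hPn n).1, (hQn n).1, hdecomp, rfl⟩
    calc regNorm N₁ ((P - Q) - ∑ i ∈ Finset.range n, u i)
        ≤ N₁ (P - ∑ i ∈ Finset.range n, p i) + N₁ (Q - ∑ i ∈ Finset.range n, q i) :=
          regNorm_le h₁ hmem
      _ ≤ (∑' k, N₁ (p (k + n))) + ∑' k, N₁ (q (k + n)) := add_le_add (hPn n).2 (hQn n).2
  refine squeeze_zero (fun n => (h₁.nonneg _).trans (normN_le_regNorm h₁ hgen _)) hbound ?_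
  have h1 := tendsto_sum_nat_add fun k => N₁ (p k)
  have h2 := tendsto_sum_nat_add fun k => N₁ (q k)
  simpa using h1.add h2

/-- Type synonym carrying the norm `N`. -/
def Cn (D : Type*) (_N : D → ℝ) : Type _ := D

/-- Forget the norm annotation. -/
def unCn {D : Type*} {N : D → ℝ} (x : Cn D N) : D := x

theorem key {D : Type*} [AddCommGroup D] [Module ℝ D] [PartialOrder D]
    [CovariantClass D D (· + ·) (· ≤ ·)]
    (hsmul : ∀ (c : ℝ) (x : D), 0 ≤ c → 0 ≤ x → 0 ≤ c • x)
    (hgen : ∀ x : D, ∃ y z : D, 0 ≤ y ∧ 0 ≤ z ∧ x = y - z)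
    (N₁ N₂ : D → ℝ)
    (h₁ : IsCompleteNormWithClosedCone D N₁)
    (h₂ : IsCompleteNormWithClosedCone D N₂) :
    ∃ c : ℝ, 0 < c ∧ ∀ x : D, N₂ x ≤ c * N₁ x := by
  classical
  letI iG1 : AddCommGroup (Cn D N₁) := inferInstanceAs (AddCommGroup D)
  letI iG2 : AddCommGroup (Cn D N₂) := inferInstanceAs (AddCommGroup D)
  letI iGr : AddCommGroup (Cn D (regNorm N₁)) := inferInstanceAs (AddCommGroup D)
  letI iM1 : Module ℝ (Cn D N₁) := inferInstanceAs (Module ℝ D)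
  letI iM2 : Module ℝ (Cn D N₂) := inferInstanceAs (Module ℝ D)
  letI iMr : Module ℝ (Cn D (regNorm N₁)) := inferInstanceAs (Module ℝ D)
  letI iP1 : PartialOrder (Cn D N₁) := inferInstanceAs (PartialOrder D)
  letI iP2 : PartialOrder (Cn D N₂) := inferInstanceAs (PartialOrder D)
  letI iPr : PartialOrder (Cn D (regNorm N₁)) := inferInstanceAs (PartialOrder D)
  letI iN1 : NormedAddCommGroup (Cn D N₁) :=
    AddGroupNorm.toNormedAddCommGroup
      { toFun := N₁
        map_zero' := normN_zero h₁
        add_le' := fun x y => h₁.triangle x y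
        neg' := fun x => normN_neg h₁ x
        eq_zero_of_map_eq_zero' := fun x hx => (h₁.eq_zero_iff x).mp hx }
  letI iN2 : NormedAddCommGroup (Cn D N₂) :=
    AddGroupNorm.toNormedAddCommGroup
      { toFun := N₂
        map_zero' := normN_zero h₂
        add_le' := fun x y => h₂.triangle x y
        neg' := fun x => normN_neg h₂ x
        eq_zero_of_map_eq_zero' := fun x hx => (h₂.eq_zero_iff x).mp hx }
  letI iNr : NormedAddCommGroup (Cn D (regNorm N₁)) :=
    AddGroupNorm.toNormedAddCommGroup
      { toFun := regNorm N₁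
        map_zero' := regNorm_zero h₁
        add_le' := fun x y => regNorm_add_le h₁ hgen x y
        neg' := fun x => regNorm_neg h₁ hsmul hgen x
        eq_zero_of_map_eq_zero' := fun x hx => by
          refine (h₁.eq_zero_iff x).mp (le_antisymm ?_ (h₁.nonneg x))
          calc N₁ x ≤ regNorm N₁ x := normN_le_regNorm h₁ hgen x
            _ = 0 := hx }
  have hnorm1 : ∀ x : Cn D N₁, ‖x‖ = N₁ x := fun _ => rfl
  have hnorm2 : ∀ x : Cn D N₂, ‖x‖ = N₂ x := fun _ => rfl
  have hnormr : ∀ x : Cn D (regNorm N₁), ‖x‖ = regNorm N₁ x := fun _ => rfl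
  letI iS1 : NormedSpace ℝ (Cn D N₁) :=
    ⟨fun c x => le_of_eq (by rw [hnorm1, hnorm1, Real.norm_eq_abs]; exact h₁.smul_eq c x)⟩
  letI iS2 : NormedSpace ℝ (Cn D N₂) :=
    ⟨fun c x => le_of_eq (by rw [hnorm2, hnorm2, Real.norm_eq_abs]; exact h₂.smul_eq c x)⟩
  letI iSr : NormedSpace ℝ (Cn D (regNorm N₁)) :=
    ⟨fun c x => by
      rw [hnormr, hnormr, Real.norm_eq_abs]
      exact regNorm_smul_le h₁ hsmul hgen c x⟩
  haveI iC1 : CompleteSpace (Cn D N₁) := by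
    refine NormedAddCommGroup.completeSpace_of_summable_imp_tendsto fun u hu => ?_
    obtain ⟨s, hs⟩ := h₁.complete (fun n => u n) hu
    refine ⟨show Cn D N₁ from s, ?_⟩
    rw [tendsto_iff_norm_sub_tendsto_zero]
    refine hs.congr fun n => ?_
    rw [hnorm1]
    exact normN_sub_rev h₁ _ _
  haveI iC2 : CompleteSpace (Cn D N₂) := by
    refine NormedAddCommGroup.completeSpace_of_summable_imp_tendsto fun u hu => ?_
    obtain ⟨s, hs⟩ := h₂.complete (fun n => u n) hu
    refine ⟨show Cn D N₂ from s, ?_⟩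
    rw [tendsto_iff_norm_sub_tendsto_zero]
    refine hs.congr fun n => ?_
    rw [hnorm2]
    exact normN_sub_rev h₂ _ _
  haveI iCr : CompleteSpace (Cn D (regNorm N₁)) := by
    refine NormedAddCommGroup.completeSpace_of_summable_imp_tendsto fun u hu => ?_
    obtain ⟨s, hs⟩ := reg_complete h₁ hgen (fun n => unCn (u n)) hu
    refine ⟨show Cn D (regNorm N₁) from s, ?_⟩
    rw [tendsto_iff_norm_sub_tendsto_zero]
    refine hs.congr fun n => ?_
    rw [hnormr]
    exact regNorm_sub_rev h₁ hsmul hgen _ _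
  -- Banach isomorphism: regNorm N₁ is equivalent to N₁ (Andô's theorem)
  let e : Cn D (regNorm N₁) ≃ₗ[ℝ] Cn D N₁ :=
    { toFun := fun x => x
      map_add' := fun _ _ => rfl
      map_smul' := fun _ _ => rfl
      invFun := fun x => x
      left_inv := fun _ => rfl
      right_inv := fun _ => rfl }
  have hecont : Continuous e := by
    refine AddMonoidHomClass.continuous_of_bound e.toLinearMap 1 fun x => ?_
    rw [hnorm1, hnormr, one_mul]
    exact normN_le_regNorm h₁ hgen x
  let ee := e.toContinuousLinearEquivOfContinuous hecont
  let f : Cn D N₁ →L[ℝ] Cn D (regNorm N₁) := (ee.symm : Cn D N₁ →L[ℝ] Cn D (regNorm N₁))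
  have hAndo : ∀ x : D, regNorm N₁ x ≤ (‖f‖ + 1) * N₁ x := by
    intro x
    have h1 := f.le_opNorm (show Cn D N₁ from x)
    rw [hnorm1] at h1
    have h3 : ‖f (show Cn D N₁ from x)‖ = regNorm N₁ x := by
      rw [hnormr]
      have h2 : (f (show Cn D N₁ from x) : D) = x := rfl
      exact congrArg (regNorm N₁) h2
    rw [h3] at h1
    nlinarith [h₁.nonneg x, norm_nonneg f]
  have hαpos : (0:ℝ) < ‖f‖ + 1 := by positivity
  have hA : ∀ x : D, ∀ ε : ℝ, 0 < ε →
      ∃ u v : D, 0 ≤ u ∧ 0 ≤ v ∧ x = u - v ∧ N₁ u + N₁ v ≤ (‖f‖ + 1) * N₁ x + ε := by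
    intro x ε hε
    obtain ⟨u, v, hu, hv, hx, hlt⟩ := exists_decomp h₁ hgen x hε
    exact ⟨u, v, hu, hv, hx, hlt.le.trans (by linarith [hAndo x])⟩
  -- closed graph: the identity from (D, N₁) to (D, N₂) is continuous
  let g : Cn D N₁ →ₗ[ℝ] Cn D N₂ :=
    { toFun := fun x => x
      map_add' := fun _ _ => rfl
      map_smul' := fun _ _ => rfl }
  have hgcont : Continuous g := by
    refine g.continuous_of_seq_closed_graph fun u x y hux huy => ?_
    have hux' : Tendsto (fun n => N₁ (unCn (u n) - unCn x)) atTop (nhds 0) := by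
      refine (tendsto_iff_norm_sub_tendsto_zero.mp hux).congr fun n => ?_
      exact hnorm1 _
    have huy' : Tendsto (fun n => N₂ (unCn (u n) - unCn y)) atTop (nhds 0) := by
      refine (tendsto_iff_norm_sub_tendsto_zero.mp huy).congr fun n => ?_
      exact hnorm2 _
    have h2' : Tendsto (fun n => N₂ ((unCn (u n) - unCn x) - (unCn y - unCn x)))
        atTop (nhds 0) := by
      refine huy'.congr fun n => ?_
      exact congrArg N₂ (by abel)
    have hle1 : (unCn y - unCn x) ≤ 0 :=
      limit_nonpos h₁ h₂ hαpos hA (fun n => unCn (u n) - unCn x) (unCn y - unCn x) hux' h2'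
    have hle2 : (-(unCn y - unCn x)) ≤ 0 := by
      refine limit_nonpos h₁ h₂ hαpos hA (fun n => -(unCn (u n) - unCn x))
        (-(unCn y - unCn x)) ?_ ?_
      · refine hux'.congr fun n => ?_
        exact (normN_neg h₁ _).symm
      · refine h2'.congr fun n => ?_
        rw [show (-(unCn (u n) - unCn x) - -(unCn y - unCn x)) =
          -((unCn (u n) - unCn x) - (unCn y - unCn x)) by abel, normN_neg h₂]
    have hsub : unCn y - unCn x = 0 := le_antisymm hle1 (neg_nonpos.mp hle2)
    show y = g x
    exact sub_eq_zero.mp hsub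
  let g' : Cn D N₁ →L[ℝ] Cn D N₂ := ⟨g, hgcont⟩
  refine ⟨‖g'‖ + 1, by positivity, fun x => ?_⟩
  have h1 := g'.le_opNorm (show Cn D N₁ from x)
  have h2 : ‖g' (show Cn D N₁ from x)‖ = N₂ x := hnorm2 _
  rw [h2, hnorm1] at h1
  nlinarith [h₁.nonneg x, norm_nonneg g']

end CNCCaux

/-- Any two complete norms with closed positive cone on a directed ordered vector space
are equivalent. -/
theorem complete_norms_with_closed_cone_equivalent
    {D : Type*} [AddCommGroup D] [Module ℝ D] [PartialOrder D]
    [CovariantClass D D (· + ·) (· ≤ ·)]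
    (hsmul : ∀ (c : ℝ) (x : D), 0 ≤ c → 0 ≤ x → 0 ≤ c • x)
    (hgen : ∀ x : D, ∃ y z : D, 0 ≤ y ∧ 0 ≤ z ∧ x = y - z)
    (N₁ N₂ : D → ℝ)
    (h₁ : IsCompleteNormWithClosedCone D N₁)
    (h₂ : IsCompleteNormWithClosedCone D N₂) :
    ∃ c₁ c₂ : ℝ, 0 < c₁ ∧ 0 < c₂ ∧
      ∀ x : D, N₁ x ≤ c₁ * N₂ x ∧ N₂ x ≤ c₂ * N₁ x := by
  obtain ⟨c₂, hc₂, hb₂⟩ := CNCCaux.key hsmul hgen N₁ N₂ h₁ h₂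
  obtain ⟨c₁, hc₁, hb₁⟩ := CNCCaux.key hsmul hgen N₂ N₁ h₂ h₁
  exact ⟨c₁, c₂, hc₁, hc₂, fun x => ⟨hb₁ x, hb₂ x⟩⟩
end

section
/- Let D be a real Banach space equipped with a partial order making it an ordered vector space with closed generating positive cone D⁺, and suppose the norm ‖·‖ is C-absolutely dominating for some C > 0, i.e., C·‖x‖ ≥ inf { ‖a‖ : a ∈ D⁺, −a ≤ x ≤ a } for all x. Then for every ε > 0 there exists a norm ρ on D equivalent to ‖·‖ such that (1+ε)²·ρ(x) ≥ inf { ρ(a) : a ∈ D⁺, −a ≤ x ≤ a } for every x ∈ D. -/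
/-- `ν` is a norm on the real vector space `D`. -/
structure IsNorm {D : Type*} [AddCommGroup D] [Module ℝ D] (ν : D → ℝ) : Prop where
  nonneg : ∀ x, 0 ≤ ν x
  eq_zero_iff : ∀ x, ν x = 0 ↔ x = 0
  smul_eq : ∀ (c : ℝ) (x : D), ν (c • x) = |c| * ν x
  triangle : ∀ x y, ν (x + y) ≤ ν x + ν y

/-- If the norm of an ordered Banach space with closed generating cone is `C`-absolutely
dominating for some `C > 0`, then for every `ε > 0` there is an equivalent norm `ρ` that
is `(1+ε)²`-absolutely dominating. -/
theorem exists_equivalent_almost_one_absolutely_dominating_norm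
    {D : Type*} [NormedAddCommGroup D] [NormedSpace ℝ D] [CompleteSpace D]
    [PartialOrder D] [CovariantClass D D (· + ·) (· ≤ ·)]
    (hsmul : ∀ (c : ℝ) (x : D), 0 ≤ c → 0 ≤ x → 0 ≤ c • x)
    (hclosed : IsClosed {x : D | 0 ≤ x})
    (hgen : ∀ x : D, ∃ y z : D, 0 ≤ y ∧ 0 ≤ z ∧ x = y - z)
    (C : ℝ) (hC : 0 < C)
    (hdom : ∀ x : D,
      sInf {r : ℝ | ∃ a : D, 0 ≤ a ∧ -a ≤ x ∧ x ≤ a ∧ r = ‖a‖} ≤ C * ‖x‖)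
    (ε : ℝ) (hε : 0 < ε) :
    ∃ ρ : D → ℝ, IsNorm ρ ∧
      (∃ c₁ c₂ : ℝ, 0 < c₁ ∧ 0 < c₂ ∧ ∀ x : D, ρ x ≤ c₁ * ‖x‖ ∧ ‖x‖ ≤ c₂ * ρ x) ∧
      ∀ x : D,
        sInf {r : ℝ | ∃ a : D, 0 ≤ a ∧ -a ≤ x ∧ x ≤ a ∧ r = ρ a} ≤ (1 + ε) ^ 2 * ρ x := by
  haveI : IsOrderedAddMonoid D :=
    { add_le_add_left := fun a b h c => by gcongr }
  set S : D → Set ℝ := fun x => {r : ℝ | ∃ a : D, 0 ≤ a ∧ -a ≤ x ∧ x ≤ a ∧ r = ‖a‖} with hSdef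
  set ν : D → ℝ := fun x => sInf (S x) with hνdef
  -- nonemptiness of the admissible set
  have hSne : ∀ x : D, (S x).Nonempty := by
    intro x
    obtain ⟨y, z, hy, hz, hx⟩ := hgen x
    refine ⟨‖y + z‖, y + z, add_nonneg hy hz, ?_, ?_, rfl⟩
    · have h1 : x - (-(y + z)) = (y + y) + (z - z) + (x - (y - z)) := by abel
      refine sub_nonneg.mp ?_
      rw [h1, hx]
      simpa using add_nonneg hy hy
    · have h1 : (y + z) - x = (z + z) + ((y - z) - x) := by abel
      refine sub_nonneg.mp ?_
      rw [h1, hx]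
      simpa using add_nonneg hz hz
  have hSbdd : ∀ x : D, BddBelow (S x) := by
    intro x
    exact ⟨0, by rintro r ⟨a, -, -, -, rfl⟩; exact norm_nonneg a⟩
  have hν_nonneg : ∀ x : D, 0 ≤ ν x := by
    intro x
    exact Real.sInf_nonneg (by rintro r ⟨a, -, -, -, rfl⟩; exact norm_nonneg a)
  have hν_le : ∀ x : D, ν x ≤ C * ‖x‖ := fun x => hdom x
  have hν_self : ∀ a : D, 0 ≤ a → ν a ≤ ‖a‖ := by
    intro a ha
    exact csInf_le (hSbdd a) ⟨a, ha, neg_le_self ha, le_refl a, rfl⟩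
  -- triangle inequality for ν
  have hν_tri : ∀ x y : D, ν (x + y) ≤ ν x + ν y := by
    intro x y
    refine le_of_forall_pos_le_add ?_
    intro δ hδ
    obtain ⟨r, ⟨a, ha, hax1, hax2, rfl⟩, hr⟩ := Real.lt_sInf_add_pos (hSne x) (half_pos hδ)
    obtain ⟨s, ⟨b, hb, hbx1, hbx2, rfl⟩, hs⟩ := Real.lt_sInf_add_pos (hSne y) (half_pos hδ)
    have hmem : ‖a + b‖ ∈ S (x + y) := by
      refine ⟨a + b, add_nonneg ha hb, ?_, add_le_add hax2 hbx2, rfl⟩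
      rw [neg_add]
      exact add_le_add hax1 hbx1
    have h1 : ν (x + y) ≤ ‖a + b‖ := csInf_le (hSbdd _) hmem
    have h2 : ‖a + b‖ ≤ ‖a‖ + ‖b‖ := norm_add_le a b
    simp only [hνdef] at hr hs ⊢
    linarith
  -- transfer of admissibility under scalar multiplication
  have hadm : ∀ (c : ℝ) (x a : D), 0 ≤ a → -a ≤ x → x ≤ a →
      0 ≤ |c| • a ∧ -(|c| • a) ≤ c • x ∧ c • x ≤ |c| • a := by
    intro c x a ha h1 h2
    have hxa1 : (0 : D) ≤ x + a := by
      refine sub_nonneg.mp ?_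
      have : (x + a) - 0 = x - (-a) := by abel
      rw [this]
      exact sub_nonneg.mpr h1
    have hxa2 : (0 : D) ≤ a - x := sub_nonneg.mpr h2
    rcases le_or_gt 0 c with hc | hc
    · rw [abs_of_nonneg hc]
      refine ⟨hsmul c a hc ha, ?_, ?_⟩
      · refine sub_nonneg.mp ?_
        have e : c • x - -(c • a) = c • (x + a) := by module
        rw [e]; exact hsmul c _ hc hxa1
      · refine sub_nonneg.mp ?_
        have e : c • a - c • x = c • (a - x) := by module
        rw [e]; exact hsmul c _ hc hxa2
    · rw [abs_of_neg hc]
      have hc' : (0 : ℝ) ≤ -c := by linarith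
      refine ⟨hsmul (-c) a hc' ha, ?_, ?_⟩
      · refine sub_nonneg.mp ?_
        have e : c • x - -((-c) • a) = (-c) • (a - x) := by module
        rw [e]; exact hsmul (-c) _ hc' hxa2
      · refine sub_nonneg.mp ?_
        have e : (-c) • a - c • x = (-c) • (x + a) := by module
        rw [e]; exact hsmul (-c) _ hc' hxa1
  -- one-sided homogeneity
  have hν_smul_le : ∀ (c : ℝ), c ≠ 0 → ∀ x : D, ν (c • x) ≤ |c| * ν x := by
    intro c hc x
    have hcpos : (0 : ℝ) < |c| := abs_pos.mpr hc
    have key : ∀ r ∈ S x, |c|⁻¹ * ν (c • x) ≤ r := by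
      rintro r ⟨a, ha, h1, h2, rfl⟩
      obtain ⟨ha', h1', h2'⟩ := hadm c x a ha h1 h2
      have hmem : ‖|c| • a‖ ∈ S (c • x) := ⟨|c| • a, ha', h1', h2', rfl⟩
      have hle : ν (c • x) ≤ ‖|c| • a‖ := csInf_le (hSbdd _) hmem
      have hnorm : ‖|c| • a‖ = |c| * ‖a‖ := by
        rw [norm_smul, Real.norm_eq_abs, abs_abs]
      rw [inv_mul_le_iff₀ hcpos]
      rw [hnorm] at hle
      exact hle
    have h := le_csInf (hSne x) key
    calc ν (c • x) = |c| * (|c|⁻¹ * ν (c • x)) := by field_simp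
      _ ≤ |c| * ν x := by
        exact mul_le_mul_of_nonneg_left h (le_of_lt hcpos)
  have hν_zero : ν 0 = 0 := by
    refine le_antisymm ?_ (hν_nonneg 0)
    have hmem : (0 : ℝ) ∈ S 0 := ⟨0, le_refl 0, by simp, le_refl 0, by simp⟩
    exact csInf_le (hSbdd 0) hmem
  have hν_smul : ∀ (c : ℝ) (x : D), ν (c • x) = |c| * ν x := by
    intro c x
    rcases eq_or_ne c 0 with rfl | hc
    · simp [hν_zero]
    · refine le_antisymm (hν_smul_le c hc x) ?_
      have h2 := hν_smul_le c⁻¹ (inv_ne_zero hc) (c • x)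
      rw [inv_smul_smul₀ hc, abs_inv] at h2
      have hcpos : (0 : ℝ) < |c| := abs_pos.mpr hc
      calc |c| * ν x ≤ |c| * (|c|⁻¹ * ν (c • x)) :=
            mul_le_mul_of_nonneg_left h2 (le_of_lt hcpos)
        _ = ν (c • x) := by field_simp
  -- the new norm
  have hE : (0 : ℝ) < (1 + ε) ^ 2 - 1 := by nlinarith
  set t : ℝ := (1 + C) / ((1 + ε) ^ 2 - 1) with htdef
  have ht : 0 < t := div_pos (by linarith) hE
  have htkey : t * ((1 + ε) ^ 2 - 1) = 1 + C := by
    rw [htdef]; field_simp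
  set ρ : D → ℝ := fun x => ‖x‖ + t * ν x with hρdef
  have hρ_nonneg : ∀ x : D, 0 ≤ ρ x := fun x =>
    add_nonneg (norm_nonneg x) (mul_nonneg ht.le (hν_nonneg x))
  refine ⟨ρ, ?_, ?_, ?_⟩
  · constructor
    · exact hρ_nonneg
    · intro x
      constructor
      · intro h
        have h1 : ‖x‖ = 0 := by
          have := mul_nonneg ht.le (hν_nonneg x)
          have := norm_nonneg x
          simp only [hρdef] at h
          linarith
        exact norm_eq_zero.mp h1
      · rintro rfl
        simp [hρdef, hν_zero]
    · intro c x
      simp only [hρdef]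
      rw [norm_smul, hν_smul, Real.norm_eq_abs]
      ring
    · intro x y
      simp only [hρdef]
      have h1 := norm_add_le x y
      have h2 := hν_tri x y
      nlinarith [ht.le]
  · refine ⟨1 + t * C, 1, by positivity, one_pos, ?_⟩
    intro x
    constructor
    · simp only [hρdef]
      have := hν_le x
      nlinarith [ht.le, norm_nonneg x]
    · simp only [hρdef]
      have := mul_nonneg ht.le (hν_nonneg x)
      linarith
  · intro x
    set T : Set ℝ := {r : ℝ | ∃ a : D, 0 ≤ a ∧ -a ≤ x ∧ x ≤ a ∧ r = ρ a} with hTdef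
    have hTbdd : BddBelow T := ⟨0, by rintro r ⟨a, -, -, -, rfl⟩; exact hρ_nonneg a⟩
    have h1t : (0 : ℝ) < 1 + t := by linarith
    -- Step 1 : sInf T ≤ (1+t) * ν x
    have step1 : sInf T ≤ (1 + t) * ν x := by
      have key : ∀ r ∈ S x, (1 + t)⁻¹ * sInf T ≤ r := by
        rintro r ⟨a, ha, hax1, hax2, rfl⟩
        have hmem : ρ a ∈ T := ⟨a, ha, hax1, hax2, rfl⟩
        have h1 : sInf T ≤ ρ a := csInf_le hTbdd hmem
        have h2 : ρ a ≤ (1 + t) * ‖a‖ := by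
          simp only [hρdef]
          have := hν_self a ha
          nlinarith [ht.le]
        rw [inv_mul_le_iff₀ h1t]
        linarith
      have h := le_csInf (hSne x) key
      calc sInf T = (1 + t) * ((1 + t)⁻¹ * sInf T) := by field_simp
        _ ≤ (1 + t) * ν x := mul_le_mul_of_nonneg_left h h1t.le
    -- Step 2 : (1+t) * ν x ≤ (1+ε)^2 * ρ x
    have step2 : (1 + t) * ν x ≤ (1 + ε) ^ 2 * ρ x := by
      simp only [hρdef]
      have h1 := hν_le x
      have h2 := hν_nonneg x
      have h3 : (0 : ℝ) < (1 + ε) ^ 2 := by positivity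
      nlinarith [mul_le_mul_of_nonneg_left h1 h3.le, mul_nonneg h2 hC.le,
        mul_nonneg (mul_nonneg h2 hC.le) hC.le]
    exact step1.trans step2
end

section
/- Let D be a real Banach space equipped with a partial order making it an ordered vector space with closed generating positive cone D⁺, whose norm ‖·‖ is absolutely dominating (there exists C > 0 with C·‖x‖ ≥ 𝒩(x) for all x, where 𝒩(x) = inf { ‖a‖ : a ∈ D⁺, −a ≤ x ≤ a }). Then the following are equivalent: (a) there exists a norm ‖·‖₁ on D equivalent to ‖·‖ with ‖x‖₁ = inf { ‖a‖₁ : a ∈ D⁺, −a ≤ x ≤ a } for all x ∈ D; (b) there exists c > 0 such that 𝒩(x) ≥ c·‖x‖ for all x ∈ D; (c) there exists a monotone norm equivalent to ‖·‖ (a norm ν with ν(x) ≤ ν(y) whenever 0 ≤ x ≤ y); (d) the cone D⁺ is normal, i.e., there exists c > 0 such that 0 ≤ x ≤ y implies ‖x‖ ≤ c·‖y‖. -/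
set_option linter.unusedSectionVars false

section Aux

variable {D : Type*} [NormedAddCommGroup D] [NormedSpace ℝ D]
  [PartialOrder D] [CovariantClass D D (· + ·) (· ≤ ·)]

private lemma myneg {a b : D} (h : a ≤ b) : -b ≤ -a := by
  have h2 := add_le_add_right h (-a - b)
  have e1 : -a - b + a = -b := by abel
  have e2 : -a - b + b = -a := by abel
  rwa [e1, e2] at h2

private lemma myadd {a b c d : D} (h : a ≤ b) (h' : c ≤ d) : a + c ≤ b + d := by
  calc a + c ≤ a + d := add_le_add_right h' a
    _ = d + a := add_comm _ _
    _ ≤ d + b := add_le_add_right h d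
    _ = b + d := add_comm _ _

private lemma mysmul (hsmul : ∀ (c : ℝ) (x : D), 0 ≤ c → 0 ≤ x → 0 ≤ c • x)
    {c : ℝ} (hc : 0 ≤ c) {x y : D} (h : x ≤ y) : c • x ≤ c • y := by
  have h1 : (0:D) ≤ y - x := by
    have h2 := add_le_add_right h (-x)
    have e1 : -x + x = 0 := by abel
    have e2 : -x + y = y - x := by abel
    rwa [e1, e2] at h2
  have h2 := hsmul c (y - x) hc h1
  rw [smul_sub] at h2
  have h3 := add_le_add_left h2 (c • x)
  simpa using h3

/-- The admissible set for the regularization functional. -/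
def Sset (x : D) : Set ℝ := {r : ℝ | ∃ a : D, 0 ≤ a ∧ -a ≤ x ∧ x ≤ a ∧ r = ‖a‖}

/-- The regularization functional `𝒩`. -/
noncomputable def Nf (x : D) : ℝ := sInf (Sset x)

lemma Sset_bdd (x : D) : BddBelow (Sset x) := by
  refine ⟨0, fun r hr => ?_⟩
  obtain ⟨a, _, _, _, rfl⟩ := hr
  exact norm_nonneg a

lemma Sset_nonempty (hgen : ∀ x : D, ∃ y z : D, 0 ≤ y ∧ 0 ≤ z ∧ x = y - z) (x : D) :
    (Sset x).Nonempty := by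
  obtain ⟨y, z, hy, hz, rfl⟩ := hgen x
  refine ⟨‖y + z‖, y + z, ?_, ?_, ?_, rfl⟩
  · simpa using myadd hy hz
  · have h1 : -y ≤ y := le_trans (by simpa using myneg hy) hy
    have := myadd h1 (le_refl (-z))
    simpa [neg_add, sub_eq_add_neg] using this
  · have h1 : -z ≤ z := le_trans (by simpa using myneg hz) hz
    have := myadd (le_refl y) h1
    simpa [sub_eq_add_neg] using this

lemma Nf_le {x a : D} (ha : 0 ≤ a) (h1 : -a ≤ x) (h2 : x ≤ a) : Nf x ≤ ‖a‖ :=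
  csInf_le (Sset_bdd x) ⟨a, ha, h1, h2, rfl⟩

lemma le_Nf (hgen : ∀ x : D, ∃ y z : D, 0 ≤ y ∧ 0 ≤ z ∧ x = y - z) {x : D} {m : ℝ}
    (h : ∀ a : D, 0 ≤ a → -a ≤ x → x ≤ a → m ≤ ‖a‖) : m ≤ Nf x := by
  refine le_csInf (Sset_nonempty hgen x) ?_
  rintro r ⟨a, ha, h1, h2, rfl⟩
  exact h a ha h1 h2

lemma Nf_nonneg (hgen : ∀ x : D, ∃ y z : D, 0 ≤ y ∧ 0 ≤ z ∧ x = y - z) (x : D) :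
    0 ≤ Nf x :=
  le_Nf hgen (fun a _ _ _ => norm_nonneg a)

lemma Nf_zero : Nf (0 : D) = 0 := by
  have h1 : Nf (0 : D) ≤ ‖(0:D)‖ := Nf_le (le_refl 0) (by simp) (le_refl 0)
  have h2 : (0:ℝ) ≤ Nf (0:D) := by
    refine le_csInf ⟨‖(0:D)‖, 0, le_refl 0, by simp, le_refl 0, rfl⟩ ?_
    rintro r ⟨a, _, _, _, rfl⟩; exact norm_nonneg a
  simp at h1
  linarith

lemma Nf_mono {x y : D} (hx : 0 ≤ x) (hxy : x ≤ y) : Nf x ≤ Nf y := by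
  have hy : 0 ≤ y := le_trans hx hxy
  have hny : -y ≤ y := le_trans (by simpa using myneg hy) hy
  refine le_csInf ⟨‖y‖, y, hy, hny, le_refl y, rfl⟩ ?_
  rintro r ⟨a, ha, h1, h2, rfl⟩
  have hna : -a ≤ x := le_trans (by simpa using myneg ha) hx
  exact Nf_le ha hna (le_trans hxy h2)

lemma Nf_neg (x : D) : Nf (-x) = Nf x := by
  have key : ∀ z : D, Sset (-z) = Sset z := by
    intro z
    ext r
    constructor
    · rintro ⟨a, ha, h1, h2, rfl⟩
      exact ⟨a, ha, by simpa using myneg h2, by simpa using myneg h1, rfl⟩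
    · rintro ⟨a, ha, h1, h2, rfl⟩
      exact ⟨a, ha, by simpa using myneg h2, by simpa using myneg h1, rfl⟩
  unfold Nf; rw [key]

lemma Nf_smul (hsmul : ∀ (c : ℝ) (x : D), 0 ≤ c → 0 ≤ x → 0 ≤ c • x)
    (hgen : ∀ x : D, ∃ y z : D, 0 ≤ y ∧ 0 ≤ z ∧ x = y - z)
    (c : ℝ) (x : D) : Nf (c • x) = |c| * Nf x := by
  -- first handle c = 0
  rcases eq_or_ne c 0 with rfl | hc
  · simp [Nf_zero]
  -- key: for t > 0, Nf (t • y) ≤ t * Nf y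
  have key : ∀ (t : ℝ), 0 < t → ∀ y : D, Nf (t • y) ≤ t * Nf y := by
    intro t ht y
    have h1 : t⁻¹ * Nf (t • y) ≤ Nf y := by
      refine le_Nf hgen ?_
      intro a ha hn hp
      have hta : 0 ≤ t • a := hsmul t a ht.le ha
      have h2 : -(t • a) ≤ t • y := by
        have := mysmul hsmul ht.le hn
        simpa [smul_neg] using this
      have h3 : t • y ≤ t • a := mysmul hsmul ht.le hp
      have h4 : Nf (t • y) ≤ ‖t • a‖ := Nf_le hta h2 h3
      rw [norm_smul, Real.norm_eq_abs, abs_of_pos ht] at h4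
      rw [inv_mul_le_iff₀ ht]
      linarith [h4]
    have := mul_le_mul_of_nonneg_left h1 ht.le
    rwa [← mul_assoc, mul_inv_cancel₀ ht.ne', one_mul] at this
  -- reduce to positive scalar via Nf_neg
  have habs : Nf (c • x) = Nf (|c| • x) := by
    rcases lt_or_gt_of_ne hc with h | h
    · rw [abs_of_neg h]
      have : (-c) • x = -(c • x) := by rw [neg_smul]
      rw [this, Nf_neg]
    · rw [abs_of_pos h]
  have hcpos : 0 < |c| := abs_pos.mpr hc
  have le1 : Nf (|c| • x) ≤ |c| * Nf x := key |c| hcpos x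
  have le2 : Nf x ≤ |c|⁻¹ * Nf (|c| • x) := by
    have := key |c|⁻¹ (inv_pos.mpr hcpos) (|c| • x)
    rwa [← smul_assoc, smul_eq_mul, inv_mul_cancel₀ hcpos.ne', one_smul] at this
  rw [habs]
  have := mul_le_mul_of_nonneg_left le2 hcpos.le
  rw [← mul_assoc, mul_inv_cancel₀ hcpos.ne', one_mul] at this
  linarith

lemma Nf_triangle (hgen : ∀ x : D, ∃ y z : D, 0 ≤ y ∧ 0 ≤ z ∧ x = y - z)
    (x y : D) : Nf (x + y) ≤ Nf x + Nf y := by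
  have step : ∀ a : D, 0 ≤ a → -a ≤ x → x ≤ a → Nf (x + y) - ‖a‖ ≤ Nf y := by
    intro a ha h1 h2
    refine le_Nf hgen ?_
    intro b hb h1' h2'
    have hab : 0 ≤ a + b := le_trans ha (by simpa using add_le_add_left hb a)
    have hn : -(a + b) ≤ x + y := by
      have h := myadd h1 h1'
      have e : -a + -b = -(a + b) := by abel
      rwa [e] at h
    have hp : x + y ≤ a + b := myadd h2 h2'
    have := Nf_le hab hn hp
    have hnab : ‖a + b‖ ≤ ‖a‖ + ‖b‖ := norm_add_le a b
    linarith
  have h3 : Nf (x + y) - Nf y ≤ Nf x := by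
    refine le_Nf hgen ?_
    intro a ha h1 h2
    have := step a ha h1 h2
    linarith
  linarith

/-- Regularization property: `Nf` computes itself. -/
lemma Nf_reg (hgen : ∀ x : D, ∃ y z : D, 0 ≤ y ∧ 0 ≤ z ∧ x = y - z) (x : D) :
    Nf x = sInf {r : ℝ | ∃ a : D, 0 ≤ a ∧ -a ≤ x ∧ x ≤ a ∧ r = Nf a} := by
  obtain ⟨r0, a0, ha0, h10, h20, hr0⟩ := Sset_nonempty hgen x
  have hne : {r : ℝ | ∃ a : D, 0 ≤ a ∧ -a ≤ x ∧ x ≤ a ∧ r = Nf a}.Nonempty :=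
    ⟨Nf a0, a0, ha0, h10, h20, rfl⟩
  apply le_antisymm
  · -- Nf x is a lower bound of the Nf-set
    refine le_csInf hne ?_
    rintro r ⟨a, ha, h1, h2, rfl⟩
    -- Nf x ≤ Nf a since any b admissible for a is admissible for x
    refine le_csInf (Sset_nonempty hgen a) ?_
    rintro s ⟨b, hb, h1', h2', rfl⟩
    exact Nf_le hb (le_trans (myneg h2') h1) (le_trans h2 h2')
  · -- conversely, the inf of the Nf-set is a lower bound of Sset x
    refine le_csInf (Sset_nonempty hgen x) ?_
    rintro r ⟨a, ha, h1, h2, rfl⟩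
    have hna : Nf a ≤ ‖a‖ :=
      Nf_le ha (le_trans (myneg ha) (by simpa using ha)) (le_refl a)
    have hb : BddBelow {r : ℝ | ∃ a : D, 0 ≤ a ∧ -a ≤ x ∧ x ≤ a ∧ r = Nf a} := by
      refine ⟨0, ?_⟩
      rintro s ⟨b, hb', _, _, rfl⟩
      exact Nf_nonneg hgen b
    exact le_trans (csInf_le hb ⟨a, ha, h1, h2, rfl⟩) hna

end Aux

/-- For an ordered Banach space `D` with closed generating cone and absolutely
dominating norm, the following are equivalent:
(a) there is an equivalent norm `ν` with `ν x = inf {ν a : a ∈ D⁺, -a ≤ x ≤ a}`;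
(b) `𝒩(x) = inf {‖a‖ : a ∈ D⁺, -a ≤ x ≤ a}` dominates a multiple of the norm;
(c) there is an equivalent monotone norm;
(d) the cone is normal. -/
theorem normality_equivalences
    {D : Type*} [NormedAddCommGroup D] [NormedSpace ℝ D] [CompleteSpace D]
    [PartialOrder D] [CovariantClass D D (· + ·) (· ≤ ·)]
    (hsmul : ∀ (c : ℝ) (x : D), 0 ≤ c → 0 ≤ x → 0 ≤ c • x)
    (hclosed : IsClosed {x : D | 0 ≤ x})
    (hgen : ∀ x : D, ∃ y z : D, 0 ≤ y ∧ 0 ≤ z ∧ x = y - z)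
    (hdom : ∃ C : ℝ, 0 < C ∧ ∀ x : D,
      sInf {r : ℝ | ∃ a : D, 0 ≤ a ∧ -a ≤ x ∧ x ≤ a ∧ r = ‖a‖} ≤ C * ‖x‖) :
    ((∃ ν : D → ℝ, IsNorm ν ∧
        (∃ c₁ c₂ : ℝ, 0 < c₁ ∧ 0 < c₂ ∧ ∀ x : D, ν x ≤ c₁ * ‖x‖ ∧ ‖x‖ ≤ c₂ * ν x) ∧
        ∀ x : D, ν x = sInf {r : ℝ | ∃ a : D, 0 ≤ a ∧ -a ≤ x ∧ x ≤ a ∧ r = ν a}) ↔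
      (∃ c : ℝ, 0 < c ∧ ∀ x : D,
        c * ‖x‖ ≤ sInf {r : ℝ | ∃ a : D, 0 ≤ a ∧ -a ≤ x ∧ x ≤ a ∧ r = ‖a‖})) ∧
    ((∃ c : ℝ, 0 < c ∧ ∀ x : D,
        c * ‖x‖ ≤ sInf {r : ℝ | ∃ a : D, 0 ≤ a ∧ -a ≤ x ∧ x ≤ a ∧ r = ‖a‖}) ↔
      (∃ ν : D → ℝ, IsNorm ν ∧
        (∃ c₁ c₂ : ℝ, 0 < c₁ ∧ 0 < c₂ ∧ ∀ x : D, ν x ≤ c₁ * ‖x‖ ∧ ‖x‖ ≤ c₂ * ν x) ∧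
        ∀ x y : D, 0 ≤ x → x ≤ y → ν x ≤ ν y)) ∧
    ((∃ ν : D → ℝ, IsNorm ν ∧
        (∃ c₁ c₂ : ℝ, 0 < c₁ ∧ 0 < c₂ ∧ ∀ x : D, ν x ≤ c₁ * ‖x‖ ∧ ‖x‖ ≤ c₂ * ν x) ∧
        ∀ x y : D, 0 ≤ x → x ≤ y → ν x ≤ ν y) ↔
      (∃ c : ℝ, 0 < c ∧ ∀ x y : D, 0 ≤ x → x ≤ y → ‖x‖ ≤ c * ‖y‖)) := by
  obtain ⟨C, hC, hdomC⟩ := hdom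
  have hSinf : ∀ x : D, Nf x = sInf {r : ℝ | ∃ a : D, 0 ≤ a ∧ -a ≤ x ∧ x ≤ a ∧ r = ‖a‖} :=
    fun x => rfl
  -- (b) → (a)-style norm package via Nf
  have b_to_pack : (∃ c : ℝ, 0 < c ∧ ∀ x : D,
        c * ‖x‖ ≤ sInf {r : ℝ | ∃ a : D, 0 ≤ a ∧ -a ≤ x ∧ x ≤ a ∧ r = ‖a‖}) →
      IsNorm (Nf (D := D)) ∧
        (∃ c₁ c₂ : ℝ, 0 < c₁ ∧ 0 < c₂ ∧ ∀ x : D, Nf x ≤ c₁ * ‖x‖ ∧ ‖x‖ ≤ c₂ * Nf x) := by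
    rintro ⟨c, hc, hcle⟩
    have hnorm : IsNorm (Nf (D := D)) := by
      refine ⟨Nf_nonneg hgen, ?_, Nf_smul hsmul hgen, Nf_triangle hgen⟩
      intro x
      constructor
      · intro h
        have h1 := hcle x
        rw [← hSinf x, h] at h1
        have : ‖x‖ ≤ 0 := by
          by_contra hcon
          push_neg at hcon
          nlinarith
        have := le_antisymm this (norm_nonneg x)
        exact norm_eq_zero.mp this
      · rintro rfl; exact Nf_zero
    refine ⟨hnorm, C, c⁻¹, hC, inv_pos.mpr hc, fun x => ?_⟩
    constructor
    · rw [hSinf x]; exact hdomC x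
    · calc ‖x‖ = c⁻¹ * (c * ‖x‖) := by field_simp
        _ ≤ c⁻¹ * Nf x := by
            have := hcle x; rw [← hSinf x] at this
            exact mul_le_mul_of_nonneg_left this (inv_pos.mpr hc).le
  refine ⟨⟨?_, ?_⟩, ⟨?_, ?_⟩, ⟨?_, ?_⟩⟩
  · -- (a) → (b)
    rintro ⟨ν, hν, ⟨c₁, c₂, hc₁, hc₂, hcc⟩, hreg⟩
    refine ⟨(c₁ * c₂)⁻¹, by positivity, fun x => ?_⟩
    rw [← hSinf x]
    refine le_Nf hgen ?_
    intro a ha h1 h2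
    -- ν x ≤ ν a ≤ c₁ ‖a‖ and ‖x‖ ≤ c₂ ν x
    have hbdd : BddBelow {r : ℝ | ∃ a : D, 0 ≤ a ∧ -a ≤ x ∧ x ≤ a ∧ r = ν a} := by
      refine ⟨0, ?_⟩; rintro s ⟨b, _, _, _, rfl⟩; exact hν.nonneg b
    have h3 : ν x ≤ ν a := by
      rw [hreg x]
      exact csInf_le hbdd ⟨a, ha, h1, h2, rfl⟩
    have h4 : ν a ≤ c₁ * ‖a‖ := (hcc a).1
    have h5 : ‖x‖ ≤ c₂ * ν x := (hcc x).2
    rw [inv_mul_le_iff₀ (by positivity)]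
    calc ‖x‖ ≤ c₂ * ν x := h5
      _ ≤ c₂ * ν a := mul_le_mul_of_nonneg_left h3 hc₂.le
      _ ≤ c₂ * (c₁ * ‖a‖) := mul_le_mul_of_nonneg_left h4 hc₂.le
      _ = c₁ * c₂ * ‖a‖ := by ring
  · -- (b) → (a)
    intro hb
    obtain ⟨hnorm, hequiv⟩ := b_to_pack hb
    exact ⟨Nf, hnorm, hequiv, fun x => Nf_reg hgen x⟩
  · -- (b) → (c)
    intro hb
    obtain ⟨hnorm, hequiv⟩ := b_to_pack hb
    exact ⟨Nf, hnorm, hequiv, fun x y hx hxy => Nf_mono hx hxy⟩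
  · -- (c) → (b)
    rintro ⟨ν, hν, ⟨c₁, c₂, hc₁, hc₂, hcc⟩, hmono⟩
    refine ⟨(2 * c₁ * c₂ + 1)⁻¹, by positivity, fun x => ?_⟩
    -- first (c) → (d): normality with constant c₁*c₂... then (d) → (b)
    rw [← hSinf x]
    refine le_Nf hgen ?_
    intro a ha h1 h2
    -- 0 ≤ x + a ≤ 2a hence ‖x+a‖ ≤ c₂ ν(x+a) ≤ c₂ ν(2a) ≤ 2 c₁ c₂ ‖a‖
    have hxa0 : 0 ≤ x + a := by
      have h := add_le_add_right h1 a
      have e1 : a + -a = 0 := by abel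
      have e2 : a + x = x + a := add_comm _ _
      rwa [e1, e2] at h
    have hxa2 : x + a ≤ (2:ℝ) • a := by
      have := add_le_add_right h2 a
      have e : a + a = (2:ℝ) • a := by
        rw [two_smul]
      calc x + a = a + x := add_comm _ _
        _ ≤ a + a := this
        _ = (2:ℝ) • a := e
    have step1 : ‖x + a‖ ≤ 2 * c₁ * c₂ * ‖a‖ := by
      have m1 : ν (x + a) ≤ ν ((2:ℝ) • a) := hmono _ _ hxa0 hxa2
      have m2 : ν ((2:ℝ) • a) = 2 * ν a := by
        rw [hν.smul_eq]; norm_num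
      calc ‖x + a‖ ≤ c₂ * ν (x + a) := (hcc _).2
        _ ≤ c₂ * ν ((2:ℝ) • a) := mul_le_mul_of_nonneg_left m1 hc₂.le
        _ = c₂ * (2 * ν a) := by rw [m2]
        _ ≤ c₂ * (2 * (c₁ * ‖a‖)) := by
            have := (hcc a).1
            nlinarith [hc₂.le]
        _ = 2 * c₁ * c₂ * ‖a‖ := by ring
    have step2 : ‖x‖ ≤ (2 * c₁ * c₂ + 1) * ‖a‖ := by
      have : ‖x‖ ≤ ‖x + a‖ + ‖a‖ := by
        have := norm_add_le (x + a) (-a)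
        simpa using this
      linarith
    rw [inv_mul_le_iff₀ (by positivity)]
    linarith [step2]
  · -- (c) → (d)
    rintro ⟨ν, hν, ⟨c₁, c₂, hc₁, hc₂, hcc⟩, hmono⟩
    refine ⟨c₁ * c₂, by positivity, fun x y hx hxy => ?_⟩
    calc ‖x‖ ≤ c₂ * ν x := (hcc x).2
      _ ≤ c₂ * ν y := mul_le_mul_of_nonneg_left (hmono x y hx hxy) hc₂.le
      _ ≤ c₂ * (c₁ * ‖y‖) := mul_le_mul_of_nonneg_left (hcc y).1 hc₂.le
      _ = c₁ * c₂ * ‖y‖ := by ring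
  · -- (d) → (c): via (d) → (b) → (c)
    rintro ⟨c, hc, hnormal⟩
    -- (d) → (b): c' = 1/(2c+1)
    have hb : ∃ c' : ℝ, 0 < c' ∧ ∀ x : D,
        c' * ‖x‖ ≤ sInf {r : ℝ | ∃ a : D, 0 ≤ a ∧ -a ≤ x ∧ x ≤ a ∧ r = ‖a‖} := by
      refine ⟨(2 * c + 1)⁻¹, by positivity, fun x => ?_⟩
      rw [← hSinf x]
      refine le_Nf hgen ?_
      intro a ha h1 h2
      have hxa0 : 0 ≤ x + a := by
        have h := add_le_add_right h1 a
        have e1 : a + -a = 0 := by abel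
        have e2 : a + x = x + a := add_comm _ _
        rwa [e1, e2] at h
      have hxa2 : x + a ≤ a + a := by
        have := add_le_add_right h2 a
        calc x + a = a + x := add_comm _ _
          _ ≤ a + a := this
      have hn1 : ‖x + a‖ ≤ c * ‖a + a‖ := hnormal _ _ hxa0 hxa2
      have hn2 : ‖a + a‖ ≤ 2 * ‖a‖ := by
        have := norm_add_le a a; linarith
      have hn3 : ‖x‖ ≤ ‖x + a‖ + ‖a‖ := by
        have := norm_add_le (x + a) (-a)
        simpa using this
      have halt : ‖x‖ ≤ (2 * c + 1) * ‖a‖ := by nlinarith [norm_nonneg a, hc.le]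
      rw [inv_mul_le_iff₀ (by positivity)]
      linarith
    obtain ⟨hnorm, hequiv⟩ := b_to_pack hb
    exact ⟨Nf, hnorm, hequiv, fun x y hx hxy => Nf_mono hx hxy⟩
end
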